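/- arXiv:0806.0037 — 5 statements merged into one kernel-verified Lean document; each statement's English description precedes it below -/
import Mathlib

section
/- For all positive integers p, n, h, k, the number m_{n,h,k}^{(p)} of p-watermelons of length 2n with height < h and depth > -k equals the p×p determinant det_{0≤i,j<p}( Σ_{ℓ∈ℤ} [ C(2n, n+ℓ(h+k)+i−j) − C(2n, n+ℓ(h+k)+h−i−j) ] ), where C(a,b) denotes the binomial coefficient (taken to be 0 when b < 0 or b > a), and the sum over ℓ ∈ ℤ has only finitely many nonzero terms. -/
open scoped BigOperators
open Filter

/-- Binomial coefficient with integer lower argument, `0` outside range. -/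
def ichoose (a : ℕ) (b : ℤ) : ℕ := if 0 ≤ b then a.choose b.toNat else 0

/-- A `p`-watermelon of length `2n` (no wall): the `i`-th branch starts at `(0,2i)`,
ends at `(2n,2i)`, takes steps `(1,1)` or `(1,-1)`, and no two branches share a point.
`y i t` is the ordinate of the `i`-th branch at abscissa `t`. -/
def IsMelon (p n : ℕ) (y : Fin p → Fin (2*n+1) → ℤ) : Prop :=
  (∀ i, y i 0 = 2 * (i : ℤ)) ∧
  (∀ i, y i (Fin.last (2*n)) = 2 * (i : ℤ)) ∧
  (∀ i (t : Fin (2*n)), y i t.succ - y i t.castSucc = 1 ∨ y i t.succ - y i t.castSucc = -1) ∧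
  (∀ i j, i ≠ j → ∀ t, y i t ≠ y j t)

/-- The height of a watermelon: the maximal ordinate reached (by its top-most branch). -/
noncomputable def melonHeight {p n : ℕ} (y : Fin p → Fin (2*n+1) → ℤ) : ℤ :=
  sSup {v | ∃ i t, y i t = v}

/-- The depth of a watermelon: the minimal ordinate reached (by its bottom-most branch). -/
noncomputable def melonDepth {p n : ℕ} (y : Fin p → Fin (2*n+1) → ℤ) : ℤ :=
  sInf {v | ∃ i t, y i t = v}

/-- The range of a watermelon: height minus depth. -/
noncomputable def melonRange {p n : ℕ} (y : Fin p → Fin (2*n+1) → ℤ) : ℤ :=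
  melonHeight y - melonDepth y

lemma ichoose_succ (m : ℕ) (q : ℤ) :
    (ichoose (m+1) q : ℤ) = ichoose m q + ichoose m (q-1) := by
  unfold ichoose
  rcases lt_trichotomy q 0 with hq | hq | hq
  · rw [if_neg (by omega), if_neg (by omega), if_neg (by omega)]; simp
  · subst hq
    rw [if_pos le_rfl, if_pos le_rfl, if_neg (by omega)]; simp
  · obtain ⟨r, rfl⟩ : ∃ r : ℕ, q = (r : ℤ) + 1 := ⟨(q-1).toNat, by omega⟩
    rw [if_pos (by omega), if_pos (by omega), if_pos (by omega)]
    have h1 : ((r:ℤ) + 1).toNat = r + 1 := by omega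
    have h2 : ((r:ℤ) + 1 - 1).toNat = r := by omega
    rw [h1, h2, Nat.choose_succ_succ']
    push_cast; ring

lemma ichoose_symm (m : ℕ) (q : ℤ) : ichoose m q = ichoose m ((m : ℤ) - q) := by
  unfold ichoose
  rcases lt_trichotomy q 0 with hq | hq | hq
  · rw [if_neg (by omega), if_pos (by omega)]
    rw [Nat.choose_eq_zero_of_lt (by omega)]
  · subst hq; simp
  · rcases le_or_gt q m with hqm | hqm
    · rw [if_pos (by omega), if_pos (by omega)]
      have : ((m:ℤ) - q).toNat = m - q.toNat := by omega
      rw [this, Nat.choose_symm (by omega)]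
    · rw [if_pos (by omega), if_neg (by omega)]
      rw [Nat.choose_eq_zero_of_lt (by omega)]

noncomputable def Wsum (P : ℤ) (m : ℕ) (q : ℤ) : ℤ := ∑ᶠ ℓ : ℤ, (ichoose m (q + ℓ*P) : ℤ)

lemma Wsum_support {P : ℤ} (hP : 0 < P) (m : ℕ) (q : ℤ) :
    (Function.support fun ℓ : ℤ => (ichoose m (q + ℓ*P) : ℤ)) ⊆
      ↑(Finset.Icc (-(|q| + m)) (|q| + m)) := by
  intro ℓ hl
  simp only [Function.mem_support] at hl
  have h1 : 0 ≤ q + ℓ*P ∧ q + ℓ*P ≤ m := by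
    by_contra hc
    apply hl
    unfold ichoose
    push_neg at hc
    rcases le_or_gt 0 (q + ℓ*P) with h | h
    · rw [if_pos h, Nat.choose_eq_zero_of_lt (by omega)]; simp
    · rw [if_neg (by omega)]; simp
  have hl1 : |ℓ| ≤ |ℓ * P| := by
    rw [abs_mul]
    nlinarith [abs_nonneg ℓ, abs_nonneg P, abs_of_pos hP]
  have : |ℓ * P| ≤ |q| + m := by
    rw [abs_le]; constructor <;> [skip; skip] <;> cases abs_cases q <;> omega
  simp only [Finset.coe_Icc, Set.mem_Icc]
  cases abs_cases ℓ <;> omega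

lemma Wsum_support_finite {P : ℤ} (hP : 0 < P) (m : ℕ) (q : ℤ) :
    (Function.support fun ℓ : ℤ => (ichoose m (q + ℓ*P) : ℤ)).Finite :=
  Set.Finite.subset (Finset.Icc _ _).finite_toSet (Wsum_support hP m q)

lemma Wsum_succ {P : ℤ} (hP : 0 < P) (m : ℕ) (q : ℤ) :
    Wsum P (m+1) q = Wsum P m q + Wsum P m (q-1) := by
  unfold Wsum
  rw [← finsum_add_distrib (Wsum_support_finite hP m q) (Wsum_support_finite hP m (q-1))]
  apply finsum_congr
  intro ℓ
  rw [ichoose_succ]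
  congr 2 <;> ring

lemma Wsum_shift {P : ℤ} (m : ℕ) (q : ℤ) : Wsum P m (q + P) = Wsum P m q := by
  unfold Wsum
  conv_rhs => rw [← finsum_comp (fun ℓ : ℤ => ℓ + 1) (Equiv.addRight (1:ℤ)).bijective]
  apply finsum_congr
  intro ℓ
  congr 1
  ring

lemma Wsum_symm (P : ℤ) (m : ℕ) (q : ℤ) : Wsum P m q = Wsum P m ((m:ℤ) - q) := by
  unfold Wsum
  rw [← finsum_comp (fun ℓ : ℤ => -ℓ) (Equiv.neg ℤ).bijective]
  apply finsum_congr
  intro ℓ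
  rw [ichoose_symm]
  congr 1
  ring

lemma Wsum_zero {P : ℤ} (hP : 0 < P) (q : ℤ) :
    Wsum P 0 q = if P ∣ q then 1 else 0 := by
  unfold Wsum
  have key : ∀ x : ℤ, (ichoose 0 x : ℤ) = if x = 0 then 1 else 0 := by
    intro x
    unfold ichoose
    rcases lt_trichotomy x 0 with h|h|h
    · rw [if_neg (by omega), if_neg (by omega)]; simp
    · subst h; simp
    · rw [if_pos (by omega), if_neg (by omega)]
      have : x.toNat = (x.toNat - 1) + 1 := by omega
      rw [this, Nat.choose_zero_succ]; simp
  split_ifs with hd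
  · obtain ⟨c, rfl⟩ := hd
    rw [finsum_eq_single _ (-c)]
    · rw [key]; rw [if_pos (by ring)]
    · intro x hx
      rw [key, if_neg (by rcases hx.lt_or_gt with h|h <;> nlinarith)]
  · apply finsum_eq_zero_of_forall_eq_zero
    intro x
    rw [key, if_neg]
    intro hc
    exact hd ⟨-x, by linarith⟩

lemma not_dvd_of_between {P q : ℤ} (h1 : 0 < q) (h2 : q < P) : ¬ (P ∣ q) :=
  fun hd => absurd (Int.le_of_dvd h1 hd) (by omega)

def stripN (h k : ℕ) : ℕ := h + k - 1

def Amat (h k : ℕ) : Matrix (Fin (stripN h k)) (Fin (stripN h k)) ℤ :=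
  Matrix.of fun x y => if x.val + 1 = y.val ∨ y.val + 1 = x.val then 1 else 0

lemma rowsum {h k : ℕ} (f : Fin (stripN h k) → ℤ) (b : Fin (stripN h k)) :
    ∑ c, f c * Amat h k c b =
      (if hb : b.val + 1 < stripN h k then f ⟨b.val+1, hb⟩ else 0)
      + (if hb : 0 < b.val then f ⟨b.val-1, by omega⟩ else 0) := by
  have key : ∀ c : Fin (stripN h k), f c * Amat h k c b =
      (if c.val = b.val + 1 then f c else 0) + (if c.val + 1 = b.val then f c else 0) := by
    intro c
    show f c * (if _ ∨ _ then (1:ℤ) else 0) = _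
    split_ifs with h1 h2 h3 h4 h5 <;> first | omega | ring
  rw [Finset.sum_congr rfl (fun c _ => key c), Finset.sum_add_distrib]
  congr 1
  · by_cases hb : b.val + 1 < stripN h k
    · rw [dif_pos hb]
      rw [Finset.sum_eq_single_of_mem (⟨b.val+1, hb⟩ : Fin (stripN h k)) (Finset.mem_univ _)]
      · rw [if_pos rfl]
      · intro c _ hne
        rw [if_neg]
        intro hc
        exact hne (Fin.ext hc)
    · rw [dif_neg hb]
      apply Finset.sum_eq_zero
      intro c _
      rw [if_neg (by omega)]
  · by_cases hb : 0 < b.val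
    · rw [dif_pos hb]
      rw [Finset.sum_eq_single_of_mem (⟨b.val-1, by omega⟩ : Fin (stripN h k)) (Finset.mem_univ _)]
      · rw [if_pos (by simp; omega)]
      · intro c _ hne
        rw [if_neg]
        intro hc
        apply hne
        apply Fin.ext
        simp
        omega
    · rw [dif_neg hb]
      apply Finset.sum_eq_zero
      intro c _
      rw [if_neg (by omega)]

lemma entry_formula {h k : ℕ} (hh : 0 < h) (hk : 0 < k) (a : Fin (stripN h k)) :
    ∀ (m : ℕ) (b : Fin (stripN h k)) (u : ℤ),
      2*u = (m : ℤ) + ((b.val : ℤ) - (a.val : ℤ)) →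
      ((Amat h k ^ m) a b : ℤ)
        = Wsum ((h:ℤ)+(k:ℤ)) m u - Wsum ((h:ℤ)+(k:ℤ)) m (u + (a.val:ℤ) + 1) := by
  have hP : (0:ℤ) < (h:ℤ) + (k:ℤ) := by positivity
  have hN : (stripN h k) + 1 = h + k := by unfold stripN; omega
  intro m
  induction m with
  | zero =>
    intro b u hu
    simp only [Nat.cast_zero, zero_add] at hu
    rw [pow_zero]
    rw [Wsum_zero hP, Wsum_zero hP]
    by_cases hab : a = b
    · subst hab
      have hu0 : u = 0 := by omega
      subst hu0
      rw [Matrix.one_apply_eq]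
      rw [if_pos (dvd_zero _)]
      rw [if_neg (not_dvd_of_between (by omega) (by have := a.isLt; omega))]
      norm_num
    · rw [Matrix.one_apply_ne (fun hc => hab hc)]
      have hne : (a.val:ℤ) ≠ (b.val:ℤ) := by
        intro hc
        exact hab (Fin.ext (by omega))
      have hb := b.isLt; have ha := a.isLt
      rw [if_neg, if_neg]
      · norm_num
      · exact not_dvd_of_between (by omega) (by omega)
      · rcases lt_trichotomy u 0 with hu0 | hu0 | hu0
        · intro hd
          have hd' : ((h:ℤ)+(k:ℤ)) ∣ (-u) := (dvd_neg).2 hd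
          have := Int.le_of_dvd (by omega) hd'
          omega
        · omega
        · exact not_dvd_of_between hu0 (by omega)
  | succ m ih =>
    intro b u hu
    push_cast at hu
    rw [pow_succ, Matrix.mul_apply]
    rw [rowsum (fun c => (Amat h k ^ m) a c) b]
    rw [Wsum_succ hP, Wsum_succ hP]
    have key1 : (if hb : b.val + 1 < stripN h k then (Amat h k ^ m) a ⟨b.val+1, hb⟩ else 0)
        = Wsum ((h:ℤ)+(k:ℤ)) m u - Wsum ((h:ℤ)+(k:ℤ)) m (u + (a.val:ℤ) + 1) := by
      by_cases hb : b.val + 1 < stripN h k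
      · rw [dif_pos hb]
        exact ih ⟨b.val+1, hb⟩ u (by push_cast; omega)
      · rw [dif_neg hb]
        -- b.val = stripN - 1, vanish at top
        have hbv : (b.val : ℤ) = (stripN h k : ℤ) - 1 := by have := b.isLt; omega
        have h2 : u + (a.val:ℤ) + 1 = ((m:ℤ) - u) + ((h:ℤ)+(k:ℤ)) := by
          have : ((stripN h k : ℤ)) + 1 = (h:ℤ) + (k:ℤ) := by exact_mod_cast hN
          omega
        rw [h2, Wsum_shift, ← Wsum_symm]
        ring
    have key2 : (if hb : 0 < b.val then (Amat h k ^ m) a ⟨b.val-1, by omega⟩ else 0)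
        = Wsum ((h:ℤ)+(k:ℤ)) m (u-1) - Wsum ((h:ℤ)+(k:ℤ)) m (u + (a.val:ℤ) + 1 - 1) := by
      by_cases hb : 0 < b.val
      · rw [dif_pos hb]
        have := ih ⟨b.val-1, by omega⟩ (u-1) (by push_cast; omega)
        rw [this]
        ring_nf
      · rw [dif_neg hb]
        have hbv : b.val = 0 := by omega
        have h2 : u + (a.val:ℤ) + 1 - 1 = (m:ℤ) - (u-1) := by omega
        rw [h2, ← Wsum_symm]
        ring
    rw [key1, key2]
    ring

def FamCond (p h k m : ℕ) (z e : Fin p → Fin (stripN h k))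
    (f : Fin p → Fin (m+1) → Fin (stripN h k)) : Prop :=
  (∀ i, f i 0 = z i) ∧ (∀ i, f i (Fin.last m) = e i) ∧
  (∀ i (t : Fin m), (f i t.castSucc).val + 1 = (f i t.succ).val
      ∨ (f i t.succ).val + 1 = (f i t.castSucc).val) ∧
  (∀ t, Function.Injective fun i => f i t)

instance famDec (p h k m : ℕ) (z e : Fin p → Fin (stripN h k)) :
    DecidablePred (FamCond p h k m z e) := fun f => by
  unfold FamCond; infer_instance

def famSet (p h k m : ℕ) (z e : Fin p → Fin (stripN h k)) :=
  {f : Fin p → Fin (m+1) → Fin (stripN h k) // FamCond p h k m z e f}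

instance famFin (p h k m : ℕ) (z e : Fin p → Fin (stripN h k)) :
    Fintype (famSet p h k m z e) := by
  unfold famSet; infer_instance

noncomputable def Cnt (p h k m : ℕ) (z e : Fin p → Fin (stripN h k)) : ℕ :=
  Nat.card (famSet p h k m z e)

noncomputable def Dt (p h k m : ℕ) (z e : Fin p → Fin (stripN h k)) : ℤ :=
  Matrix.det (Matrix.of fun i j : Fin p => (Amat h k ^ m) (z i) (e j))

lemma cnt_zero (p h k : ℕ) (z e : Fin p → Fin (stripN h k)) (he : Function.Injective e) :
    Cnt p h k 0 z e = if z = e then 1 else 0 := by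
  unfold Cnt famSet
  split_ifs with hze
  · subst hze
    rw [Nat.card_eq_one_iff_unique]
    constructor
    · constructor
      rintro ⟨f, hf⟩ ⟨g, hg⟩
      apply Subtype.ext
      funext i t
      have ht : t = 0 := Fin.fin_one_eq_zero t
      subst ht
      show f i 0 = g i 0
      rw [hf.1 i, hg.1 i]
    · exact ⟨⟨fun i _ => z i, fun i => rfl, fun i => rfl, fun i t => t.elim0,
        fun t a b hab => he hab⟩⟩
  · have : IsEmpty {f : Fin p → Fin 1 → Fin (stripN h k) // FamCond p h k 0 z e f} := by
      constructor
      rintro ⟨f, hf⟩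
      apply hze
      funext i
      rw [← hf.1 i]
      have : (0 : Fin 1) = Fin.last 0 := rfl
      rw [this, hf.2.1 i]
    simp [Nat.card_of_isEmpty]

lemma cnt_succ (p h k m : ℕ) (z e : Fin p → Fin (stripN h k)) (hz : Function.Injective z) :
    Cnt p h k (m+1) z e = ∑ w : Fin p → Fin (stripN h k),
      (if (∀ i, (z i).val + 1 = (w i).val ∨ (w i).val + 1 = (z i).val) ∧ Function.Injective w
        then Cnt p h k m w e else 0) := by
  unfold Cnt
  rw [Nat.card_congr (Equiv.sigmaFiberEquiv
    (fun f : famSet p h k (m+1) z e => fun i => f.1 i 1)).symm]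
  rw [Nat.card_eq_fintype_card, Fintype.card_sigma]
  apply Finset.sum_congr rfl
  intro w _
  by_cases hw : (∀ i, (z i).val + 1 = (w i).val ∨ (w i).val + 1 = (z i).val)
      ∧ Function.Injective w
  · rw [if_pos hw, ← Nat.card_eq_fintype_card]
    apply Nat.card_congr
    refine ⟨?_, ?_, ?_, ?_⟩
    · rintro ⟨⟨f, hf⟩, h1⟩
      refine ⟨fun i t => f i t.succ, ?_, ?_, ?_, ?_⟩
      · intro i
        simp only [Fin.succ_zero_eq_one]
        exact congrFun h1 i
      · intro i
        simp only [Fin.succ_last]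
        exact hf.2.1 i
      · intro i t
        have h2 := hf.2.2.1 i t.succ
        rw [← Fin.succ_castSucc] at h2
        exact h2
      · intro t
        exact hf.2.2.2 t.succ
    · rintro ⟨g, hg⟩
      refine ⟨⟨fun i => Fin.cases (z i) (g i), ?_, ?_, ?_, ?_⟩, ?_⟩
      · intro i; rfl
      · intro i
        show Fin.cases (z i) (g i) ((Fin.last m).succ) = e i
        rw [Fin.cases_succ]
        exact hg.2.1 i
      · intro i t
        refine Fin.cases ?_ (fun s => ?_) t
        · simp only [Fin.castSucc_zero, Fin.cases_zero]
          rw [show ((0 : Fin (m+1)).succ) = ((0 : Fin (m+1)).succ) from rfl]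
          rw [show (Fin.succ (0 : Fin (m+1))) = (1 : Fin (m+2)) from Fin.succ_zero_eq_one] at *
          rw [show (1 : Fin (m+2)) = (0 : Fin (m+1)).succ from (Fin.succ_zero_eq_one).symm,
            Fin.cases_succ, hg.1 i]
          exact hw.1 i
        · simp only [← Fin.succ_castSucc, Fin.cases_succ]
          exact hg.2.2.1 i s
      · intro t
        refine Fin.cases ?_ (fun s => ?_) t
        · exact fun a b hab => hz hab
        · simp only [Fin.cases_succ]
          exact hg.2.2.2 s
      · funext i
        show Fin.cases (z i) (g i) (1 : Fin (m+2)) = w i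
        rw [← Fin.succ_zero_eq_one, Fin.cases_succ]
        exact hg.1 i
    · rintro ⟨⟨f, hf⟩, h1⟩
      apply Subtype.ext
      apply Subtype.ext
      funext i t
      refine Fin.cases ?_ (fun s => ?_) t
      · exact (hf.1 i).symm
      · simp [Fin.cases_succ]
    · rintro ⟨g, hg⟩
      apply Subtype.ext
      funext i t
      simp [Fin.cases_succ]
  · rw [if_neg hw]
    rw [Fintype.card_eq_zero_iff]
    constructor
    rintro ⟨⟨f, hf⟩, h1⟩
    apply hw
    subst h1
    constructor
    · intro i
      have := hf.2.2.1 i 0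
      rw [Fin.castSucc_zero, Fin.succ_zero_eq_one, hf.1 i] at this
      exact this
    · exact hf.2.2.2 1

lemma strictMono_perm_eq_id {p : ℕ} (σ : Equiv.Perm (Fin p)) (hσ : StrictMono σ) :
    ∀ i, σ i = i := by
  have hsum : ∑ i : Fin p, ((σ i : ℕ)) = ∑ i : Fin p, (i : ℕ) :=
    Equiv.sum_comp σ (fun i => (i : ℕ))
  haveI : WellFoundedLT (Fin p) := inferInstance
  have hle : ∀ i : Fin p, (i : ℕ) ≤ (σ i : ℕ) := fun i => hσ.le_apply
  have := (Finset.sum_eq_sum_iff_of_le (fun i _ => hle i)).1 hsum.symm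
  intro i
  exact Fin.ext ((this i (Finset.mem_univ i)).symm)

lemma Dt_zero (p h k : ℕ) (z e : Fin p → Fin (stripN h k)) (hz : StrictMono z)
    (he : StrictMono e) : Dt p h k 0 z e = if z = e then 1 else 0 := by
  unfold Dt
  rw [pow_zero]
  split_ifs with hze
  · subst hze
    have : (Matrix.of fun i j : Fin p => (1 : Matrix _ _ ℤ) (z i) (z j))
        = (1 : Matrix (Fin p) (Fin p) ℤ) := by
      funext i j
      show (1 : Matrix _ _ ℤ) (z i) (z j) = (1 : Matrix (Fin p) (Fin p) ℤ) i j
      by_cases hij : i = j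
      · subst hij; rw [Matrix.one_apply_eq, Matrix.one_apply_eq]
      · rw [Matrix.one_apply_ne (fun hc => hij (hz.injective hc)), Matrix.one_apply_ne hij]
    rw [this, Matrix.det_one]
  · rw [Matrix.det_apply]
    apply Finset.sum_eq_zero
    intro σ _
    have hprod : (∏ i, Matrix.of (fun i j : Fin p => (1 : Matrix _ _ ℤ) (z i) (e j)) (σ i) i) = 0 := by
      by_contra hne
      have hne' : (∏ i, Matrix.of (fun i j : Fin p => (1 : Matrix _ _ ℤ) (z i) (e j)) (σ i) i) ≠ 0 := hne
      rw [Finset.prod_ne_zero_iff] at hne'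
      have hzσ : ∀ i, z (σ i) = e i := by
        intro i
        have := hne' i (Finset.mem_univ i)
        simp only [Matrix.of_apply] at this
        by_contra hc
        rw [Matrix.one_apply_ne hc] at this
        exact this rfl
      have hσmono : StrictMono σ := by
        intro a b hab
        have : z (σ a) < z (σ b) := by rw [hzσ a, hzσ b]; exact he hab
        exact (hz.lt_iff_lt).1 this
      apply hze
      funext i
      have := strictMono_perm_eq_id σ hσmono i
      rw [← hzσ i, this]
    rw [hprod, smul_zero]

lemma Dt_succ (p h k m : ℕ) (z e : Fin p → Fin (stripN h k)) :
    Dt p h k (m+1) z e = ∑ w : Fin p → Fin (stripN h k),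
      (∏ i, Amat h k (z i) (w i)) * Dt p h k m w e := by
  have key := MultilinearMap.map_sum
    (f := (Matrix.detRowAlternating (R := ℤ) (n := Fin p)).toMultilinearMap)
    (g := fun (i : Fin p) (c : Fin (stripN h k)) =>
      (Amat h k (z i) c) • (fun j : Fin p => (Amat h k ^ m) c (e j)))
  unfold Dt
  have hM : (Matrix.of fun i j : Fin p => (Amat h k ^ (m+1)) (z i) (e j))
      = fun i => ∑ c : Fin (stripN h k),
          (Amat h k (z i) c) • (fun j => (Amat h k ^ m) c (e j)) := by
    funext i j
    rw [Matrix.of_apply, pow_succ', Matrix.mul_apply]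
    rw [Finset.sum_apply]
    simp [smul_eq_mul]
  rw [show (Matrix.of fun i j : Fin p => (Amat h k ^ (m+1)) (z i) (e j)).det
      = (Matrix.detRowAlternating (R := ℤ) (n := Fin p)).toMultilinearMap
        (Matrix.of fun i j : Fin p => (Amat h k ^ (m+1)) (z i) (e j)) from rfl, hM, key]
  apply Finset.sum_congr rfl
  intro w _
  rw [MultilinearMap.map_smul_univ, smul_eq_mul]
  rfl

lemma DC (p h k : ℕ) (e : Fin p → Fin (stripN h k)) (he : StrictMono e) :
    ∀ m (z : Fin p → Fin (stripN h k)), StrictMono z →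
      (∀ i j, (z i).val % 2 = (z j).val % 2) →
      Dt p h k m z e = (Cnt p h k m z e : ℤ) := by
  intro m
  induction m with
  | zero =>
    intro z hz hpar
    rw [Dt_zero p h k z e hz he, cnt_zero p h k z e he.injective]
    split_ifs <;> simp
  | succ m ih =>
    intro z hz hpar
    rw [Dt_succ, cnt_succ p h k m z e hz.injective]
    push_cast
    apply Finset.sum_congr rfl
    intro w _
    by_cases hadj : ∀ i, (z i).val + 1 = (w i).val ∨ (w i).val + 1 = (z i).val
    · have hprod : (∏ i, Amat h k (z i) (w i)) = 1 := by
        apply Finset.prod_eq_one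
        intro i _
        show (if _ ∨ _ then (1:ℤ) else 0) = 1
        rw [if_pos (hadj i)]
      rw [hprod, one_mul]
      by_cases hinj : Function.Injective w
      · have hwmono : StrictMono w := by
          intro a b hab
          have h2 : (z a).val + 2 ≤ (z b).val := by
            have h3 := hz hab
            have h4 := hpar a b
            rw [Fin.lt_def] at h3
            omega
          have h5 := hadj a
          have h6 := hadj b
          rw [Fin.lt_def]
          rcases Nat.lt_or_ge (w a).val (w b).val with h7 | h7
          · exact h7
          · exfalso
            have : (w a) = (w b) := Fin.ext (by omega)
            exact absurd (hinj this) (Fin.ne_of_lt hab)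
        have hwpar : ∀ i j, (w i).val % 2 = (w j).val % 2 := by
          intro i j
          have h5 := hadj i
          have h6 := hadj j
          have h7 := hpar i j
          omega
        rw [if_pos ⟨hadj, hinj⟩, ih w hwmono hwpar]
      · rw [if_neg (fun hc => hinj hc.2)]
        unfold Dt
        obtain ⟨a, b, hab, hne⟩ : ∃ a b, w a = w b ∧ a ≠ b := by
          unfold Function.Injective at hinj
          push_neg at hinj
          obtain ⟨a, b, h1, h2⟩ := hinj
          exact ⟨a, b, h1, h2⟩
        rw [Matrix.det_zero_of_row_eq hne (by funext j; simp [hab])]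
    · have hprod : (∏ i, Amat h k (z i) (w i)) = 0 := by
        push_neg at hadj
        obtain ⟨i, hi1, hi2⟩ := hadj
        apply Finset.prod_eq_zero (Finset.mem_univ i)
        show (if _ ∨ _ then (1:ℤ) else 0) = 0
        rw [if_neg (by tauto)]
      rw [hprod, zero_mul, if_neg (by tauto)]

-- bounds lemmas

lemma melon_set_finite {p n : ℕ} (y : Fin p → Fin (2*n+1) → ℤ) :
    {v | ∃ i t, y i t = v}.Finite := by
  have : {v | ∃ i t, y i t = v} = Set.range fun q : Fin p × Fin (2*n+1) => y q.1 q.2 := by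
    ext v
    simp [Prod.exists]
  rw [this]
  exact Set.finite_range _

lemma melon_set_nonempty {p n : ℕ} (hp : 0 < p) (y : Fin p → Fin (2*n+1) → ℤ) :
    {v | ∃ i t, y i t = v}.Nonempty :=
  ⟨y ⟨0, hp⟩ 0, ⟨⟨0, hp⟩, 0, rfl⟩⟩

lemma melonHeight_lt_iff {p n : ℕ} (hp : 0 < p) (y : Fin p → Fin (2*n+1) → ℤ) (c : ℤ) :
    melonHeight y < c ↔ ∀ i t, y i t < c := by
  have h1 : melonHeight y < c ↔ melonHeight y ≤ c - 1 := by omega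
  unfold melonHeight at *
  rw [h1, csSup_le_iff (melon_set_finite y).bddAbove (melon_set_nonempty hp y)]
  constructor
  · intro H i t
    have := H _ ⟨i, t, rfl⟩
    omega
  · rintro H v ⟨i, t, rfl⟩
    have := H i t
    omega

lemma lt_melonDepth_iff {p n : ℕ} (hp : 0 < p) (y : Fin p → Fin (2*n+1) → ℤ) (c : ℤ) :
    c < melonDepth y ↔ ∀ i t, c < y i t := by
  have h1 : c < melonDepth y ↔ c + 1 ≤ melonDepth y := by omega
  unfold melonDepth at *
  rw [h1, le_csInf_iff (melon_set_finite y).bddBelow (melon_set_nonempty hp y)]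
  constructor
  · intro H i t
    have := H _ ⟨i, t, rfl⟩
    omega
  · rintro H v ⟨i, t, rfl⟩
    have := H i t
    omega

def pos0 (p h k : ℕ) (hph : 2*p ≤ h+1) (hk : 0 < k) : Fin p → Fin (stripN h k) :=
  fun i => ⟨2*i.val + (k-1), by have := i.isLt; unfold stripN; omega⟩

lemma pos0_strictMono (p h k : ℕ) (hph : 2*p ≤ h+1) (hk : 0 < k) :
    StrictMono (pos0 p h k hph hk) := by
  intro a b hab
  rw [Fin.lt_def] at *
  show 2*a.val + (k-1) < 2*b.val + (k-1)
  omega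

lemma pos0_parity (p h k : ℕ) (hph : 2*p ≤ h+1) (hk : 0 < k) :
    ∀ i j, (pos0 p h k hph hk i).val % 2 = (pos0 p h k hph hk j).val % 2 := by
  intro i j
  show (2*i.val + (k-1)) % 2 = (2*j.val + (k-1)) % 2
  omega

def melonEquiv (p n h k : ℕ) (hp : 0 < p) (hph : 2*p ≤ h+1) (hk : 0 < k) :
    {y : Fin p → Fin (2*n+1) → ℤ //
        IsMelon p n y ∧ melonHeight y < (h : ℤ) ∧ -(k : ℤ) < melonDepth y}
      ≃ famSet p h k (2*n) (pos0 p h k hph hk) (pos0 p h k hph hk) where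
  toFun := fun ⟨y, hm, hb1, hb2⟩ =>
    have hub : ∀ i t, y i t < (h:ℤ) := (melonHeight_lt_iff hp y _).1 hb1
    have hlb : ∀ i t, -(k:ℤ) < y i t := (lt_melonDepth_iff hp y _).1 hb2
    ⟨fun i t => ⟨(y i t + (k-1 : ℕ)).toNat, by
        have h1 := hub i t; have h2 := hlb i t
        unfold stripN
        omega⟩, by
      refine ⟨?_, ?_, ?_, ?_⟩
      · intro i
        apply Fin.ext
        show (y i 0 + (k-1:ℕ)).toNat = 2*i.val + (k-1)
        have := hm.1 i
        omega
      · intro i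
        apply Fin.ext
        show (y i (Fin.last (2*n)) + (k-1:ℕ)).toNat = 2*i.val + (k-1)
        have := hm.2.1 i
        omega
      · intro i t
        have h3 := hm.2.2.1 i t
        have h2 := hlb i t.castSucc
        have h2' := hlb i t.succ
        show (y i t.castSucc + (k-1:ℕ)).toNat + 1 = (y i t.succ + (k-1:ℕ)).toNat ∨
          (y i t.succ + (k-1:ℕ)).toNat + 1 = (y i t.castSucc + (k-1:ℕ)).toNat
        omega
      · intro t a b hab
        by_contra hne
        apply hm.2.2.2 a b hne t
        have hv := congrArg Fin.val hab
        have h2 := hlb a t; have h2' := hlb b t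
        simp only at hv
        omega⟩
  invFun := fun ⟨f, hf⟩ =>
    ⟨fun i t => (f i t : ℤ) - (k-1 : ℕ), by
      refine ⟨⟨?_, ?_, ?_, ?_⟩, ?_, ?_⟩
      · intro i
        have := congrArg Fin.val (hf.1 i)
        show ((f i 0 : ℕ) : ℤ) - (k-1:ℕ) = 2 * (i : ℤ)
        have h2 : (f i 0).val = 2*i.val + (k-1) := this
        push_cast [h2]
        omega
      · intro i
        have h2 : (f i (Fin.last (2*n))).val = 2*i.val + (k-1) := congrArg Fin.val (hf.2.1 i)
        show ((f i (Fin.last (2*n)) : ℕ) : ℤ) - (k-1:ℕ) = 2 * (i : ℤ)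
        push_cast [h2]
        omega
      · intro i t
        have h3 := hf.2.2.1 i t
        show ((f i t.succ : ℕ) : ℤ) - (k-1:ℕ) - (((f i t.castSucc : ℕ) : ℤ) - (k-1:ℕ)) = 1 ∨
          ((f i t.succ : ℕ) : ℤ) - (k-1:ℕ) - (((f i t.castSucc : ℕ) : ℤ) - (k-1:ℕ)) = -1
        omega
      · intro i j hij t hc
        have hc' : ((f i t : ℕ) : ℤ) - (k-1:ℕ) = ((f j t : ℕ) : ℤ) - (k-1:ℕ) := hc
        have : f i t = f j t := by
          apply Fin.ext
          omega
        exact hij (hf.2.2.2 t this)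
      · rw [melonHeight_lt_iff hp]
        intro i t
        have := (f i t).isLt
        unfold stripN at this
        omega
      · rw [lt_melonDepth_iff hp]
        intro i t
        have := (f i t).isLt
        omega⟩
  left_inv := by
    rintro ⟨y, hm, hb1, hb2⟩
    apply Subtype.ext
    funext i t
    show ((y i t + (k-1:ℕ)).toNat : ℤ) - (k-1:ℕ) = y i t
    have := (lt_melonDepth_iff hp y _).1 hb2 i t
    omega
  right_inv := by
    rintro ⟨f, hf⟩
    apply Subtype.ext
    funext i t
    apply Fin.ext
    show ((f i t : ℤ) - (k-1:ℕ) + (k-1:ℕ)).toNat = (f i t).val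
    omega


lemma entry_final (p n h k : ℕ) (hh : 0 < h) (hk : 0 < k) (hph : 2*p ≤ h+1) (i j : Fin p) :
    (∑ᶠ ℓ : ℤ,
      ((ichoose (2*n) ((n : ℤ) + ℓ*((h : ℤ)+(k : ℤ)) + (i : ℤ) - (j : ℤ)) : ℤ)
        - (ichoose (2*n) ((n : ℤ) + ℓ*((h : ℤ)+(k : ℤ)) + (h : ℤ) - (i : ℤ) - (j : ℤ)) : ℤ)))
    = (Amat h k ^ (2*n)) (pos0 p h k hph hk i) (pos0 p h k hph hk j) := by
  have hP : (0:ℤ) < (h:ℤ) + (k:ℤ) := by positivity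
  rw [entry_formula hh hk (pos0 p h k hph hk i) (2*n) (pos0 p h k hph hk j)
      ((n:ℤ) + (j:ℤ) - (i:ℤ)) ?_]
  · have hvi : (((pos0 p h k hph hk i).val : ℕ) : ℤ) = 2*(i:ℤ) + (k:ℤ) - 1 := by
      have h1 : (pos0 p h k hph hk i).val = 2*i.val + (k-1) := rfl
      rw [h1]; push_cast; omega
    rw [hvi]
    have e1 : ∀ ℓ : ℤ, ((ichoose (2*n) ((n : ℤ) + ℓ*((h : ℤ)+(k : ℤ)) + (i : ℤ) - (j : ℤ)) : ℤ)
        - (ichoose (2*n) ((n : ℤ) + ℓ*((h : ℤ)+(k : ℤ)) + (h : ℤ) - (i : ℤ) - (j : ℤ)) : ℤ))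
        = ((ichoose (2*n) (((n : ℤ) + (i : ℤ) - (j : ℤ)) + ℓ*((h : ℤ)+(k : ℤ))) : ℤ)
        - (ichoose (2*n) (((n : ℤ) + (h : ℤ) - (i : ℤ) - (j : ℤ)) + ℓ*((h : ℤ)+(k : ℤ))) : ℤ)) := by
      intro ℓ
      have a1 : (n : ℤ) + ℓ*((h : ℤ)+(k : ℤ)) + (i : ℤ) - (j : ℤ)
          = ((n : ℤ) + (i : ℤ) - (j : ℤ)) + ℓ*((h : ℤ)+(k : ℤ)) := by ring
      have a2 : (n : ℤ) + ℓ*((h : ℤ)+(k : ℤ)) + (h : ℤ) - (i : ℤ) - (j : ℤ)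
          = ((n : ℤ) + (h : ℤ) - (i : ℤ) - (j : ℤ)) + ℓ*((h : ℤ)+(k : ℤ)) := by ring
      rw [a1, a2]
    rw [finsum_congr e1, finsum_sub_distrib (Wsum_support_finite hP _ _) (Wsum_support_finite hP _ _)]
    have w1 : (∑ᶠ ℓ : ℤ, (ichoose (2*n) (((n : ℤ) + (i : ℤ) - (j : ℤ)) + ℓ*((h : ℤ)+(k : ℤ))) : ℤ))
        = Wsum ((h:ℤ)+(k:ℤ)) (2*n) ((n:ℤ) + (j:ℤ) - (i:ℤ)) := by
      rw [Wsum_symm]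
      have : ((2*n : ℕ) : ℤ) - ((n:ℤ) + (j:ℤ) - (i:ℤ)) = (n : ℤ) + (i : ℤ) - (j : ℤ) := by
        push_cast; ring
      rw [this]
      rfl
    have w2 : (∑ᶠ ℓ : ℤ, (ichoose (2*n) (((n : ℤ) + (h:ℤ) - (i : ℤ) - (j : ℤ)) + ℓ*((h : ℤ)+(k : ℤ))) : ℤ))
        = Wsum ((h:ℤ)+(k:ℤ)) (2*n) ((n:ℤ) + (j:ℤ) - (i:ℤ) + (2*(i:ℤ) + (k:ℤ) - 1) + 1) := by
      have h3 : (n:ℤ) + (j:ℤ) - (i:ℤ) + (2*(i:ℤ) + (k:ℤ) - 1) + 1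
          = (((2*n:ℕ):ℤ) - ((n:ℤ) + (h:ℤ) - (i:ℤ) - (j:ℤ))) + ((h:ℤ)+(k:ℤ)) := by
        push_cast; ring
      rw [h3, Wsum_shift, ← Wsum_symm]
      rfl
    rw [w1, w2]
  · have h1 : (pos0 p h k hph hk i).val = 2*i.val + (k-1) := rfl
    have h2 : (pos0 p h k hph hk j).val = 2*j.val + (k-1) := rfl
    rw [h1, h2]
    push_cast
    omega

lemma entry_row_neg (p n h k : ℕ) (i0 i1 : Fin p) (hsum : (i0:ℤ) + (i1:ℤ) = (h:ℤ)) (j : Fin p) :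
    (∑ᶠ ℓ : ℤ,
      ((ichoose (2*n) ((n : ℤ) + ℓ*((h : ℤ)+(k : ℤ)) + (i1 : ℤ) - (j : ℤ)) : ℤ)
        - (ichoose (2*n) ((n : ℤ) + ℓ*((h : ℤ)+(k : ℤ)) + (h : ℤ) - (i1 : ℤ) - (j : ℤ)) : ℤ)))
    = -(∑ᶠ ℓ : ℤ,
      ((ichoose (2*n) ((n : ℤ) + ℓ*((h : ℤ)+(k : ℤ)) + (i0 : ℤ) - (j : ℤ)) : ℤ)
        - (ichoose (2*n) ((n : ℤ) + ℓ*((h : ℤ)+(k : ℤ)) + (h : ℤ) - (i0 : ℤ) - (j : ℤ)) : ℤ))) := by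
  have key : ∀ ℓ : ℤ, ((ichoose (2*n) ((n : ℤ) + ℓ*((h : ℤ)+(k : ℤ)) + (i1 : ℤ) - (j : ℤ)) : ℤ)
        - (ichoose (2*n) ((n : ℤ) + ℓ*((h : ℤ)+(k : ℤ)) + (h : ℤ) - (i1 : ℤ) - (j : ℤ)) : ℤ))
      = -(((ichoose (2*n) ((n : ℤ) + ℓ*((h : ℤ)+(k : ℤ)) + (i0 : ℤ) - (j : ℤ)) : ℤ)
        - (ichoose (2*n) ((n : ℤ) + ℓ*((h : ℤ)+(k : ℤ)) + (h : ℤ) - (i0 : ℤ) - (j : ℤ)) : ℤ))) := by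
    intro ℓ
    have a1 : (n : ℤ) + ℓ*((h : ℤ)+(k : ℤ)) + (i1 : ℤ) - (j : ℤ)
        = (n : ℤ) + ℓ*((h : ℤ)+(k : ℤ)) + (h : ℤ) - (i0 : ℤ) - (j : ℤ) := by linarith
    have a2 : (n : ℤ) + ℓ*((h : ℤ)+(k : ℤ)) + (h : ℤ) - (i1 : ℤ) - (j : ℤ)
        = (n : ℤ) + ℓ*((h : ℤ)+(k : ℤ)) + (i0 : ℤ) - (j : ℤ) := by linarith
    rw [a1, a2]
    ring
  rw [finsum_congr key]
  exact finsum_neg_distrib _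

/-- The number of `p`-watermelons of length `2n` with height `< h` and depth `> -k`
is given by a `p × p` determinant of sums of differences of binomial coefficients. -/
theorem stmt0 (p n h k : ℕ) (hp : 0 < p) (hn : 0 < n) (hh : 0 < h) (hk : 0 < k) :
    (Nat.card {y : Fin p → Fin (2*n+1) → ℤ //
        IsMelon p n y ∧ melonHeight y < (h : ℤ) ∧ -(k : ℤ) < melonDepth y} : ℤ) =
      Matrix.det (Matrix.of fun i j : Fin p =>
        ∑ᶠ ℓ : ℤ,
          ((ichoose (2*n) ((n : ℤ) + ℓ*((h : ℤ)+(k : ℤ)) + (i : ℤ) - (j : ℤ)) : ℤ)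
            - (ichoose (2*n) ((n : ℤ) + ℓ*((h : ℤ)+(k : ℤ)) + (h : ℤ) - (i : ℤ) - (j : ℤ)) : ℤ))) := by
  by_cases hph : 2*p ≤ h+1
  · rw [Nat.card_congr (melonEquiv p n h k hp hph hk)]
    show ((Cnt p h k (2*n) (pos0 p h k hph hk) (pos0 p h k hph hk) : ℕ) : ℤ) = _
    rw [← DC p h k (pos0 p h k hph hk) (pos0_strictMono p h k hph hk) (2*n)
        (pos0 p h k hph hk) (pos0_strictMono p h k hph hk) (pos0_parity p h k hph hk)]
    unfold Dt
    congr 1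
    apply congrArg
    funext i j
    exact (entry_final p n h k hh hk hph i j).symm
  · push_neg at hph
    have hempty : IsEmpty {y : Fin p → Fin (2*n+1) → ℤ //
        IsMelon p n y ∧ melonHeight y < (h : ℤ) ∧ -(k : ℤ) < melonDepth y} := by
      constructor
      rintro ⟨y, hm, hb1, hb2⟩
      have hlast := (melonHeight_lt_iff hp y _).1 hb1 ⟨p-1, by omega⟩ 0
      rw [hm.1 ⟨p-1, by omega⟩] at hlast
      have hcoe : ((⟨p-1, by omega⟩ : Fin p) : ℤ) = ((p-1 : ℕ) : ℤ) := rfl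
      rw [hcoe] at hlast
      omega
    rw [Nat.card_of_isEmpty]
    push_cast
    symm
    rcases Nat.even_or_odd h with he | ho
    · have hi0 : h/2 < p := by omega
      apply Matrix.det_eq_zero_of_row_eq_zero (⟨h/2, hi0⟩ : Fin p)
      intro j
      rw [Matrix.of_apply]
      have hsum : ((⟨h/2, hi0⟩ : Fin p) : ℤ) + ((⟨h/2, hi0⟩ : Fin p) : ℤ) = (h:ℤ) := by
        have : ((⟨h/2, hi0⟩ : Fin p) : ℤ) = ((h/2 : ℕ) : ℤ) := rfl
        rw [this]
        obtain ⟨c, hc⟩ := he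
        omega
      have := entry_row_neg p n h k ⟨h/2, hi0⟩ ⟨h/2, hi0⟩ hsum j
      linarith
    · obtain ⟨c0, hc0⟩ := ho
      have hi0 : h/2 < p := by omega
      have hi1 : h/2 + 1 < p := by omega
      set M := (Matrix.of fun i j : Fin p =>
        ∑ᶠ ℓ : ℤ,
          ((ichoose (2*n) ((n : ℤ) + ℓ*((h : ℤ)+(k : ℤ)) + (i : ℤ) - (j : ℤ)) : ℤ)
            - (ichoose (2*n) ((n : ℤ) + ℓ*((h : ℤ)+(k : ℤ)) + (h : ℤ) - (i : ℤ) - (j : ℤ)) : ℤ))) with hM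
      have hne : (⟨h/2, hi0⟩ : Fin p) ≠ (⟨h/2+1, hi1⟩ : Fin p) := by
        intro hc
        have := congrArg Fin.val hc
        simp at this
      have hsum : ((⟨h/2, hi0⟩ : Fin p) : ℤ) + ((⟨h/2+1, hi1⟩ : Fin p) : ℤ) = (h:ℤ) := by
        have e1 : ((⟨h/2, hi0⟩ : Fin p) : ℤ) = ((h/2 : ℕ) : ℤ) := rfl
        have e2 : ((⟨h/2+1, hi1⟩ : Fin p) : ℤ) = ((h/2+1 : ℕ) : ℤ) := rfl
        rw [e1, e2]
        omega
      have hval : M ⟨h/2+1, hi1⟩ = ((-1 : ℤ) • M ⟨h/2, hi0⟩) := by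
        funext j
        rw [Pi.smul_apply, smul_eq_mul, neg_one_mul]
        exact entry_row_neg p n h k ⟨h/2, hi0⟩ ⟨h/2+1, hi1⟩ hsum j
      have hrow : M = M.updateRow ⟨h/2+1, hi1⟩ ((-1 : ℤ) • M ⟨h/2, hi0⟩) := by
        conv_lhs => rw [← Matrix.updateRow_eq_self M (⟨h/2+1, hi1⟩ : Fin p)]
        rw [hval]
      rw [hrow, Matrix.det_updateRow_smul,
        Matrix.det_zero_of_row_eq hne (by rw [Matrix.updateRow_ne hne, Matrix.updateRow_self]),
        mul_zero]
end

section
/- For all positive integers p and n, the total number m_n^{(p)} of p-watermelons of length 2n equals the p×p determinant det_{0≤i,j<p}( C(2n, n+i−j) ), where C(a,b) denotes the binomial coefficient. -/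
open scoped BigOperators
open Filter

namespace MelonAux

/-- Walk of length `m` from `a` to `b` with `±1` steps. -/
def IsWalk (m : ℕ) (a b : ℤ) (y : Fin (m+1) → ℤ) : Prop :=
  y 0 = a ∧ y (Fin.last m) = b ∧
    ∀ t : Fin m, y t.succ - y t.castSucc = 1 ∨ y t.succ - y t.castSucc = -1

def count (m : ℕ) (s : Fin m → Bool) : ℕ :=
  (Finset.univ.filter (fun u => s u = true)).card

def ofSteps (m : ℕ) (a : ℤ) (s : Fin m → Bool) : Fin (m+1) → ℤ := fun t =>
  a + ∑ u : Fin m, if (u : ℕ) < (t : ℕ) then (if s u then (1:ℤ) else -1) else 0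

lemma ofSteps_zero (m : ℕ) (a : ℤ) (s : Fin m → Bool) : ofSteps m a s 0 = a := by
  simp [ofSteps]

lemma ofSteps_step (m : ℕ) (a : ℤ) (s : Fin m → Bool) (t : Fin m) :
    ofSteps m a s t.succ - ofSteps m a s t.castSucc = (if s t then (1:ℤ) else -1) := by
  unfold ofSteps
  rw [add_sub_add_left_eq_sub, ← Finset.sum_sub_distrib]
  have key : ∀ u : Fin m,
      ((if (u : ℕ) < (t.succ : ℕ) then (if s u then (1:ℤ) else -1) else 0)
        - (if (u : ℕ) < (t.castSucc : ℕ) then (if s u then (1:ℤ) else -1) else 0))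
      = (if u = t then (if s u then (1:ℤ) else -1) else 0) := by
    intro u
    set w : ℤ := if s u then (1:ℤ) else -1 with hw
    simp only [Fin.val_succ, Fin.coe_castSucc]
    have hv : u = t ↔ (u:ℕ) = (t:ℕ) := by rw [Fin.val_eq_val]
    split_ifs with h1 h2 h3 h4 h5 <;> simp only [hv] at * <;>
      first
      | ring1
      | (exfalso; omega)
  simp_rw [key]
  simp

lemma ofSteps_last (m : ℕ) (a : ℤ) (s : Fin m → Bool) :
    ofSteps m a s (Fin.last m) = a + 2 * (count m s : ℤ) - m := by
  unfold ofSteps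
  have h1 : ∀ u : Fin m, (if (u : ℕ) < ((Fin.last m : Fin (m+1)) : ℕ) then (if s u then (1:ℤ) else -1) else 0)
      = (if s u then (2:ℤ) else 0) - 1 := by
    intro u
    have : (u:ℕ) < m := u.isLt
    simp only [Fin.val_last, this, if_true]
    by_cases h : s u <;> simp [h]
  have h2 : (∑ u : Fin m, if s u then (2:ℤ) else 0) = 2 * (count m s : ℤ) := by
    rw [← Finset.sum_filter]
    simp [count, mul_comm]
  simp_rw [h1, Finset.sum_sub_distrib, h2, Finset.sum_const]
  simp
  ring

/-- The equivalence between walks and step sequences with given count. -/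
noncomputable def walkEquiv (m : ℕ) (a b : ℤ) :
    {y : Fin (m+1) → ℤ // IsWalk m a b y} ≃
      {s : Fin m → Bool // a + 2 * (count m s : ℤ) - m = b} where
  toFun := fun ⟨y, h0, hl, hs⟩ => ⟨fun u => decide (y u.succ - y u.castSucc = 1), by
    have key : ∀ t : Fin (m+1),
        y t = ofSteps m a (fun u => decide (y u.succ - y u.castSucc = 1)) t := by
      intro t
      induction t using Fin.induction with
      | zero => rw [ofSteps_zero]; exact h0
      | succ t ih =>
        have h2 := ofSteps_step m a (fun u => decide (y u.succ - y u.castSucc = 1)) t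
        simp only [decide_eq_true_eq] at h2
        rcases hs t with h | h
        · rw [if_pos h] at h2; omega
        · rw [if_neg (by omega)] at h2; omega
    have := key (Fin.last m)
    rw [hl, ofSteps_last] at this
    omega⟩
  invFun := fun ⟨s, hs⟩ => ⟨ofSteps m a s, ofSteps_zero m a s, by rw [ofSteps_last]; exact hs, by
    intro t
    have := ofSteps_step m a s t
    by_cases h : s t
    · left; rw [this, if_pos h]
    · right; rw [this, if_neg h]⟩
  left_inv := by
    rintro ⟨y, h0, hl, hs⟩
    apply Subtype.ext
    funext t
    show ofSteps m a (fun u => decide (y u.succ - y u.castSucc = 1)) t = y t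
    induction t using Fin.induction with
    | zero => rw [ofSteps_zero]; exact h0.symm
    | succ t ih =>
      have h2 := ofSteps_step m a (fun u => decide (y u.succ - y u.castSucc = 1)) t
      simp only [decide_eq_true_eq] at h2
      rcases hs t with h | h
      · rw [if_pos h] at h2; omega
      · rw [if_neg (by omega)] at h2; omega
  right_inv := by
    rintro ⟨s, hs⟩
    apply Subtype.ext
    funext u
    show decide (ofSteps m a s u.succ - ofSteps m a s u.castSucc = 1) = s u
    have h2 := ofSteps_step m a s u
    by_cases h : s u
    · rw [if_pos h] at h2; rw [h2]; simp [h]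
    · rw [if_neg h] at h2; rw [h2, Bool.eq_false_iff.mpr h]
      decide
instance walkFinite (m : ℕ) (a b : ℤ) : Finite {y : Fin (m+1) → ℤ // IsWalk m a b y} :=
  Finite.of_equiv _ (walkEquiv m a b).symm

lemma card_count (m k : ℕ) :
    Nat.card {s : Fin m → Bool // count m s = k} = m.choose k := by
  have e : {s : Fin m → Bool // count m s = k} ≃ {S : Finset (Fin m) // S.card = k} :=
    { toFun := fun s => ⟨Finset.univ.filter (fun u => s.1 u = true), s.2⟩
      invFun := fun S => ⟨fun u => decide (u ∈ S.1), by
        simp only [count, decide_eq_true_eq]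
        simpa [Finset.filter_mem_eq_inter] using S.2⟩
      left_inv := by rintro ⟨s, hs⟩; apply Subtype.ext; funext u; simp
      right_inv := by rintro ⟨S, hS⟩; apply Subtype.ext; ext u; simp }
  rw [Nat.card_congr e, Nat.card_eq_fintype_card]
  simpa using Fintype.card_finset_len (α := Fin m) k


lemma card_walk (m : ℕ) (a b : ℤ) (h2 : (2:ℤ) ∣ (b - a + m)) :
    Nat.card {y : Fin (m+1) → ℤ // IsWalk m a b y} =
      if 0 ≤ b - a + m then m.choose ((b - a + m)/2).toNat else 0 := by
  rw [Nat.card_congr (walkEquiv m a b)]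
  by_cases hpos : 0 ≤ b - a + m
  · rw [if_pos hpos]
    set k : ℕ := ((b - a + m)/2).toNat with hk
    have hd : (b - a + m) / 2 * 2 = b - a + m := Int.ediv_mul_cancel h2
    have hnn : 0 ≤ (b - a + m) / 2 := Int.ediv_nonneg hpos (by norm_num)
    have hk' : (k : ℤ) * 2 = b - a + m := by
      rw [hk, Int.toNat_of_nonneg hnn]; exact hd
    have heq : ∀ s : Fin m → Bool, (a + 2 * (count m s : ℤ) - m = b) ↔ count m s = k := by
      intro s
      constructor
      · intro h
        have : (count m s : ℤ) = (k : ℤ) := by omega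
        exact_mod_cast this
      · intro h; rw [h]; omega
    rw [Nat.card_congr (Equiv.subtypeEquivRight heq)]
    exact card_count m k
  · rw [if_neg hpos, Nat.card_eq_zero]
    left
    constructor
    rintro ⟨s, hs⟩
    have : (0:ℤ) ≤ (count m s : ℤ) := by positivity
    omega

lemma card_walk_ichoose (n : ℕ) (i j : ℤ) :
    Nat.card {y : Fin (2*n+1) → ℤ // IsWalk (2*n) (2*j) (2*i) y} =
      ichoose (2*n) ((n : ℤ) + i - j) := by
  have h2 : (2:ℤ) ∣ (2*i - 2*j + (2*n : ℕ)) := ⟨i - j + n, by push_cast; ring⟩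
  rw [card_walk (2*n) (2*j) (2*i) h2]
  have hdiv : (2*i - 2*j + ((2*n : ℕ) : ℤ)) / 2 = (n : ℤ) + i - j := by
    have : (2*i - 2*j + ((2*n : ℕ) : ℤ)) = ((n : ℤ) + i - j) * 2 := by push_cast; ring
    rw [this, Int.mul_ediv_cancel _ (by norm_num)]
  rw [hdiv, ichoose]
  by_cases h : 0 ≤ (n : ℤ) + i - j
  · rw [if_pos h, if_pos (by push_cast; omega)]
  · rw [if_neg (by push_cast; omega), if_neg h]

variable {p n : ℕ}

def FamP (p n : ℕ) (σ : Equiv.Perm (Fin p)) (y : Fin p → Fin (2*n+1) → ℤ) : Prop :=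
  ∀ i : Fin p, IsWalk (2*n) (2*(i:ℤ)) (2*((σ i : ℤ))) (y i)

abbrev Cfg (p n : ℕ) := Σ σ : Equiv.Perm (Fin p), {y : Fin p → Fin (2*n+1) → ℤ // FamP p n σ y}

def Crossing (y : Fin p → Fin (2*n+1) → ℤ) : Prop :=
  ∃ t, ∃ i j, i ≠ j ∧ y i t = y j t

def crossSet (y : Fin p → Fin (2*n+1) → ℤ) : Finset (Fin (2*n+1)) :=
  Finset.univ.filter (fun t => ∃ i j, i ≠ j ∧ y i t = y j t)

lemma crossSet_nonempty {y : Fin p → Fin (2*n+1) → ℤ} (hc : Crossing y) :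
    (crossSet y).Nonempty := by
  obtain ⟨t, h⟩ := hc
  exact ⟨t, by simpa [crossSet] using h⟩

noncomputable def t0 (y : Fin p → Fin (2*n+1) → ℤ) (hc : Crossing y) : Fin (2*n+1) :=
  (crossSet y).min' (crossSet_nonempty hc)

lemma t0_cross (y : Fin p → Fin (2*n+1) → ℤ) (hc : Crossing y) :
    ∃ i j, i ≠ j ∧ y i (t0 y hc) = y j (t0 y hc) := by
  have := (crossSet y).min'_mem (crossSet_nonempty hc)
  simp only [crossSet, Finset.mem_filter, Finset.mem_univ, true_and] at this
  exact this

lemma t0_min (y : Fin p → Fin (2*n+1) → ℤ) (hc : Crossing y) (t : Fin (2*n+1))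
    (h : ∃ i j, i ≠ j ∧ y i t = y j t) : t0 y hc ≤ t :=
  (crossSet y).min'_le t (by simpa [crossSet] using h)

noncomputable def iSet (y : Fin p → Fin (2*n+1) → ℤ) (hc : Crossing y) : Finset (Fin p) :=
  Finset.univ.filter (fun i => ∃ j, i ≠ j ∧ y i (t0 y hc) = y j (t0 y hc))

lemma iSet_nonempty (y : Fin p → Fin (2*n+1) → ℤ) (hc : Crossing y) :
    (iSet y hc).Nonempty := by
  obtain ⟨i, j, hij, h⟩ := t0_cross y hc
  exact ⟨i, by simp only [iSet, Finset.mem_filter, Finset.mem_univ, true_and]; exact ⟨j, hij, h⟩⟩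

noncomputable def i0 (y : Fin p → Fin (2*n+1) → ℤ) (hc : Crossing y) : Fin p :=
  (iSet y hc).min' (iSet_nonempty y hc)

noncomputable def jSet (y : Fin p → Fin (2*n+1) → ℤ) (hc : Crossing y) : Finset (Fin p) :=
  Finset.univ.filter (fun j => i0 y hc ≠ j ∧ y (i0 y hc) (t0 y hc) = y j (t0 y hc))

lemma jSet_nonempty (y : Fin p → Fin (2*n+1) → ℤ) (hc : Crossing y) :
    (jSet y hc).Nonempty := by
  have := (iSet y hc).min'_mem (iSet_nonempty y hc)
  simp only [iSet, Finset.mem_filter, Finset.mem_univ, true_and] at this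
  obtain ⟨j, hij, h⟩ := this
  exact ⟨j, by simp only [jSet, Finset.mem_filter, Finset.mem_univ, true_and]; exact ⟨hij, h⟩⟩

noncomputable def j0 (y : Fin p → Fin (2*n+1) → ℤ) (hc : Crossing y) : Fin p :=
  (jSet y hc).min' (jSet_nonempty y hc)

lemma j0_spec (y : Fin p → Fin (2*n+1) → ℤ) (hc : Crossing y) :
    i0 y hc ≠ j0 y hc ∧ y (i0 y hc) (t0 y hc) = y (j0 y hc) (t0 y hc) := by
  have := (jSet y hc).min'_mem (jSet_nonempty y hc)
  simp only [jSet, Finset.mem_filter, Finset.mem_univ, true_and] at this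
  exact this

lemma swap_t0 (y : Fin p → Fin (2*n+1) → ℤ) (hc : Crossing y) (k : Fin p) :
    y (Equiv.swap (i0 y hc) (j0 y hc) k) (t0 y hc) = y k (t0 y hc) := by
  rcases eq_or_ne k (i0 y hc) with rfl | h1
  · rw [Equiv.swap_apply_left]; exact (j0_spec y hc).2.symm
  rcases eq_or_ne k (j0 y hc) with rfl | h2
  · rw [Equiv.swap_apply_right]; exact (j0_spec y hc).2
  · rw [Equiv.swap_apply_of_ne_of_ne h1 h2]

lemma min'_congr {α : Type*} [LinearOrder α] {s t : Finset α} (h : s = t)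
    (hs : s.Nonempty) : s.min' hs = t.min' (h ▸ hs) := by subst h; rfl

/-- If `y'` agrees with `y` up to time `t0 y hc`, then all the choices coincide. -/
lemma choice_eq (y y' : Fin p → Fin (2*n+1) → ℤ) (hc : Crossing y) (hc' : Crossing y')
    (hA : ∀ k t, t ≤ t0 y hc → y' k t = y k t) :
    t0 y' hc' = t0 y hc ∧ i0 y' hc' = i0 y hc ∧ j0 y' hc' = j0 y hc := by
  obtain ⟨hij, hcr⟩ := j0_spec y hc
  have ht' : ∃ i j, i ≠ j ∧ y' i (t0 y hc) = y' j (t0 y hc) := by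
    refine ⟨i0 y hc, j0 y hc, hij, ?_⟩
    rw [hA _ _ le_rfl, hA _ _ le_rfl]; exact hcr
  have h1 : t0 y' hc' ≤ t0 y hc := t0_min y' hc' _ ht'
  have h2 : t0 y hc ≤ t0 y' hc' := by
    apply t0_min y hc
    obtain ⟨i, j, hij', h⟩ := t0_cross y' hc'
    refine ⟨i, j, hij', ?_⟩
    rw [← hA i _ (le_trans h1 le_rfl), ← hA j _ h1]
    exact h
  have hte : t0 y' hc' = t0 y hc := le_antisymm h1 h2
  have hv : ∀ k, y' k (t0 y hc) = y k (t0 y hc) := fun k => hA k _ le_rfl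
  have hiSet : iSet y' hc' = iSet y hc := by
    ext i
    simp only [iSet, Finset.mem_filter, Finset.mem_univ, true_and, hte, hv]
  have hi : i0 y' hc' = i0 y hc := min'_congr hiSet _
  have hjSet : jSet y' hc' = jSet y hc := by
    ext j
    simp only [jSet, Finset.mem_filter, Finset.mem_univ, true_and, hte, hv, hi]
  exact ⟨hte, hi, min'_congr hjSet _⟩

lemma two_mul_coe_inj {a b : Fin p} (h : 2*((a:ℤ)) = 2*((b:ℤ))) : a = b := by
  have h2 : (a : ℤ) = (b : ℤ) := by omega
  exact Fin.val_injective (by exact_mod_cast h2)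

lemma t0_ne_last (x : Cfg p n) (hc : Crossing x.2.1) : t0 x.2.1 hc ≠ Fin.last (2*n) := by
  intro h
  obtain ⟨i, j, hij, hcr⟩ := t0_cross x.2.1 hc
  rw [h] at hcr
  rw [(x.2.2 i).2.1, (x.2.2 j).2.1] at hcr
  exact hij (x.1.injective (two_mul_coe_inj hcr))

noncomputable def flip (x : Cfg p n) (hc : Crossing x.2.1) : Cfg p n :=
  ⟨x.1 * Equiv.swap (i0 x.2.1 hc) (j0 x.2.1 hc),
   ⟨fun k t => if t ≤ t0 x.2.1 hc then x.2.1 k t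
      else x.2.1 (Equiv.swap (i0 x.2.1 hc) (j0 x.2.1 hc) k) t, by
    intro k
    set y := x.2.1 with hy
    set T := t0 x.2.1 hc with hT
    set w := Equiv.swap (i0 x.2.1 hc) (j0 x.2.1 hc) with hw
    refine ⟨?_, ?_, ?_⟩
    · dsimp only
      rw [if_pos (Fin.zero_le T)]
      exact (x.2.2 k).1
    · have hne : ¬ (Fin.last (2*n) ≤ T) := by
        intro h
        exact t0_ne_last x hc (le_antisymm (Fin.le_last T) h)
      dsimp only
      rw [if_neg hne, (x.2.2 (w k)).2.1]
      rw [Equiv.Perm.mul_apply]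
    · intro t
      dsimp only
      by_cases h1 : t.succ ≤ T
      · have h2 : t.castSucc ≤ T := le_trans (Fin.castSucc_lt_succ (i := t)).le h1
        rw [if_pos h1, if_pos h2]
        exact (x.2.2 k).2.2 t
      · by_cases h2 : t.castSucc ≤ T
        · -- castSucc = T
          have hct : t.castSucc = T := by
            rw [Fin.le_def] at h1 h2
            rw [Fin.ext_iff]
            simp only [Fin.val_succ, Fin.coe_castSucc] at h1 h2 ⊢
            omega
          rw [if_neg h1, if_pos h2]
          have : x.2.1 k t.castSucc = x.2.1 (w k) t.castSucc := by
            rw [hct, hT, hw]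
            exact (swap_t0 x.2.1 hc k).symm
          rw [this]
          exact (x.2.2 (w k)).2.2 t
        · have h2' : ¬ t.succ ≤ T := h1
          rw [if_neg h1, if_neg h2]
          exact (x.2.2 (w k)).2.2 t⟩⟩

lemma flip_agree (x : Cfg p n) (hc : Crossing x.2.1) (k : Fin p) (t : Fin (2*n+1))
    (h : t ≤ t0 x.2.1 hc) : (flip x hc).2.1 k t = x.2.1 k t := if_pos h

lemma flip_crossing (x : Cfg p n) (hc : Crossing x.2.1) : Crossing (flip x hc).2.1 := by
  refine ⟨t0 x.2.1 hc, i0 x.2.1 hc, j0 x.2.1 hc, (j0_spec x.2.1 hc).1, ?_⟩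
  rw [flip_agree x hc _ _ le_rfl, flip_agree x hc _ _ le_rfl]
  exact (j0_spec x.2.1 hc).2

lemma cfg_ext {x y : Cfg p n} (h1 : x.1 = y.1) (h2 : x.2.1 = y.2.1) : x = y := by
  obtain ⟨a, s, hs⟩ := x
  obtain ⟨b, t, ht⟩ := y
  dsimp at h1 h2
  subst h1
  exact congrArg (Sigma.mk a) (Subtype.ext h2)

lemma flip_flip (x : Cfg p n) (hc : Crossing x.2.1) :
    flip (flip x hc) (flip_crossing x hc) = x := by
  obtain ⟨ht, hi, hj⟩ := choice_eq x.2.1 (flip x hc).2.1 hc (flip_crossing x hc)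
    (flip_agree x hc)
  apply cfg_ext
  · show ((flip x hc).1) * _ = x.1
    rw [hi, hj]
    show (x.1 * Equiv.swap _ _) * Equiv.swap _ _ = x.1
    rw [mul_assoc, Equiv.swap_mul_self, mul_one]
  · funext k t
    show (if t ≤ t0 (flip x hc).2.1 _ then (flip x hc).2.1 k t
      else (flip x hc).2.1 (Equiv.swap (i0 (flip x hc).2.1 _) (j0 (flip x hc).2.1 _) k) t) = x.2.1 k t
    rw [ht, hi, hj]
    by_cases h : t ≤ t0 x.2.1 hc
    · rw [if_pos h]
      exact flip_agree x hc k t h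
    · rw [if_neg h]
      show (if t ≤ t0 x.2.1 hc then _ else x.2.1 (Equiv.swap _ _ (Equiv.swap _ _ k)) t) = x.2.1 k t
      rw [if_neg h, Equiv.swap_apply_self]

lemma flip_sign (x : Cfg p n) (hc : Crossing x.2.1) :
    Equiv.Perm.sign (flip x hc).1 = - Equiv.Perm.sign x.1 := by
  show Equiv.Perm.sign (x.1 * Equiv.swap _ _) = _
  rw [Equiv.Perm.sign_mul, Equiv.Perm.sign_swap (j0_spec x.2.1 hc).1, mul_neg_one]

lemma flip_ne (x : Cfg p n) (hc : Crossing x.2.1) : flip x hc ≠ x := by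
  intro h
  have h2 := flip_sign x hc
  rw [h] at h2
  have h3 := congrArg (fun u : ℤˣ => (u : ℤ)) h2
  simp only [Units.val_neg] at h3
  rcases Int.units_eq_one_or (Equiv.Perm.sign x.1) with h4 | h4 <;> rw [h4] at h3 <;>
    simp at h3

lemma noncross_perm_eq_one (σ : Equiv.Perm (Fin p)) (y : Fin p → Fin (2*n+1) → ℤ)
    (hy : FamP p n σ y) (hnc : ¬ Crossing y) : σ = 1 := by
  have hne : ∀ (i j : Fin p), i ≠ j → ∀ t, y i t ≠ y j t := by
    intro i j hij t h
    exact hnc ⟨t, i, j, hij, h⟩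
  have key : ∀ i j : Fin p, i < j → ∀ t, 0 < y j t - y i t ∧ (y j t - y i t) % 2 = 0 := by
    intro i j hij t
    have hijne : i ≠ j := ne_of_lt hij
    induction t using Fin.induction with
    | zero =>
      rw [(hy i).1, (hy j).1]
      have : (i : ℤ) < (j : ℤ) := by exact_mod_cast hij
      omega
    | succ t ih =>
      have hsi := (hy i).2.2 t
      have hsj := (hy j).2.2 t
      have hne' : y j t.succ - y i t.succ ≠ 0 := by
        intro h
        exact hne i j hijne t.succ (by omega)
      omega
  have hmono : StrictMono (fun i => σ i) := by
    intro i j hij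
    have h := (key i j hij (Fin.last (2*n)))
    rw [(hy i).2.1, (hy j).2.1] at h
    have : ((σ i : Fin p) : ℤ) < ((σ j : Fin p) : ℤ) := by omega
    have h2 : ((σ i : Fin p) : ℕ) < ((σ j : Fin p) : ℕ) := by exact_mod_cast this
    exact h2
  have hrange : Set.range (fun i => σ i) = Set.range (id : Fin p → Fin p) := by
    rw [Set.range_id]
    exact Set.range_eq_univ.mpr σ.surjective
  have inst : WellFoundedLT (Fin p) := inferInstance
  have : (fun i => σ i) = (id : Fin p → Fin p) :=
    (@StrictMono.range_inj (Fin p) (Fin p) _ _ inst _ _ hmono strictMono_id).mp hrange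
  exact Equiv.ext (fun i => congrFun this i)

instance decCrossing (y : Fin p → Fin (2*n+1) → ℤ) : Decidable (Crossing y) := by
  unfold Crossing; infer_instance

def famEquiv (σ : Equiv.Perm (Fin p)) :
    {y : Fin p → Fin (2*n+1) → ℤ // FamP p n σ y} ≃
      ∀ i : Fin p, {z : Fin (2*n+1) → ℤ // IsWalk (2*n) (2*(i:ℤ)) (2*((σ i : ℤ))) z} :=
  Equiv.subtypePiEquivPi

instance famFinite (σ : Equiv.Perm (Fin p)) :
    Finite {y : Fin p → Fin (2*n+1) → ℤ // FamP p n σ y} :=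
  Finite.of_equiv _ (famEquiv σ).symm

noncomputable instance (σ : Equiv.Perm (Fin p)) :
    Fintype {y : Fin p → Fin (2*n+1) → ℤ // FamP p n σ y} := Fintype.ofFinite _

lemma card_fam (σ : Equiv.Perm (Fin p)) :
    (Nat.card {y : Fin p → Fin (2*n+1) → ℤ // FamP p n σ y} : ℤ) =
      ∏ i : Fin p, (ichoose (2*n) ((n : ℤ) + ((σ i : ℤ)) - (i : ℤ)) : ℤ) := by
  rw [Nat.card_congr (famEquiv σ), Nat.card_pi]
  push_cast
  congr 1
  funext i
  rw [card_walk_ichoose n ((σ i : ℤ)) ((i : ℤ))]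

lemma crossing_sum_zero :
    ∑ x ∈ Finset.univ.filter (fun x : Cfg p n => Crossing x.2.1),
      ((Equiv.Perm.sign x.1 : ℤ)) = 0 := by
  apply Finset.sum_involution
    (g := fun x hx => flip x (Finset.mem_filter.mp hx).2)
  · intro x hx
    rw [flip_sign x (Finset.mem_filter.mp hx).2, Units.val_neg]
    ring
  · intro x hx _
    exact flip_ne x _
  · intro x hx
    exact flip_flip x _
  · intro x hx
    exact Finset.mem_filter.mpr ⟨Finset.mem_univ _, flip_crossing x _⟩

noncomputable def noncrossEquiv :
    {x : Cfg p n // ¬ Crossing x.2.1} ≃ {y : Fin p → Fin (2*n+1) → ℤ // IsMelon p n y} where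
  toFun x := ⟨x.1.2.1, by
    have hσ : x.1.1 = 1 := noncross_perm_eq_one x.1.1 x.1.2.1 x.1.2.2 x.2
    have hy := x.1.2.2
    refine ⟨fun i => (hy i).1, fun i => ?_, fun i => (hy i).2.2, ?_⟩
    · have h2 := (hy i).2.1
      have h1 : x.1.1 i = i := by rw [hσ]; simp
      rw [h1] at h2
      exact h2
    · intro i j hij t h
      exact x.2 ⟨t, i, j, hij, h⟩⟩
  invFun y := ⟨⟨1, y.1, by
      intro i
      refine ⟨y.2.1 i, ?_, y.2.2.2.1 i⟩
      simpa using y.2.2.1 i⟩, by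
    rintro ⟨t, i, j, hij, h⟩
    exact y.2.2.2.2 i j hij t h⟩
  left_inv x := by
    apply Subtype.ext
    have hσ : x.1.1 = 1 := noncross_perm_eq_one x.1.1 x.1.2.1 x.1.2.2 x.2
    exact cfg_ext hσ.symm rfl
  right_inv y := rfl


lemma sum_fam (σ : Equiv.Perm (Fin p)) :
    (Equiv.Perm.sign σ : ℤ) * (Nat.card {y : Fin p → Fin (2*n+1) → ℤ // FamP p n σ y} : ℤ)
      = ∑ _y : {y : Fin p → Fin (2*n+1) → ℤ // FamP p n σ y}, (Equiv.Perm.sign σ : ℤ) := by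
  rw [Finset.sum_const, Nat.card_eq_fintype_card, nsmul_eq_mul, Finset.card_univ]
  ring

theorem main_identity (p n : ℕ) :
    (Nat.card {y : Fin p → Fin (2*n+1) → ℤ // IsMelon p n y} : ℤ) =
      Matrix.det (Matrix.of fun i j : Fin p =>
        (ichoose (2*n) ((n : ℤ) + (i : ℤ) - (j : ℤ)) : ℤ)) := by
  classical
  rw [Matrix.det_apply]
  have hterm : ∀ σ : Equiv.Perm (Fin p),
      Equiv.Perm.sign σ • (∏ i, (Matrix.of fun i j : Fin p =>
          (ichoose (2*n) ((n : ℤ) + (i : ℤ) - (j : ℤ)) : ℤ)) (σ i) i)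
      = ∑ _y : {y : Fin p → Fin (2*n+1) → ℤ // FamP p n σ y}, (Equiv.Perm.sign σ : ℤ) := by
    intro σ
    rw [Units.smul_def, ← sum_fam σ, card_fam σ]
    congr 1
  rw [Finset.sum_congr rfl (fun σ _ => hterm σ)]
  rw [← Finset.sum_sigma (Finset.univ) (fun _ => Finset.univ)
    (fun x : Cfg p n => (Equiv.Perm.sign x.1 : ℤ)), Finset.univ_sigma_univ]
  rw [← Finset.sum_filter_add_sum_filter_not Finset.univ
    (fun x : Cfg p n => Crossing x.2.1) (fun x => (Equiv.Perm.sign x.1 : ℤ))]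
  rw [crossing_sum_zero, zero_add]
  have hone : ∀ x ∈ Finset.univ.filter (fun x : Cfg p n => ¬ Crossing x.2.1),
      ((Equiv.Perm.sign x.1 : ℤ)) = 1 := by
    intro x hx
    have hnc := (Finset.mem_filter.mp hx).2
    rw [noncross_perm_eq_one x.1 x.2.1 x.2.2 hnc]
    simp
  rw [Finset.sum_congr rfl hone, Finset.sum_const, nsmul_eq_mul, mul_one]
  rw [← Fintype.card_subtype]
  rw [← Nat.card_eq_fintype_card, Nat.card_congr (noncrossEquiv (p := p) (n := n))]


end MelonAux

/-- The total number of `p`-watermelons of length `2n` equals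
`det_{0 ≤ i,j < p} ( C(2n, n+i-j) )`. -/
theorem stmt1 (p n : ℕ) (hp : 0 < p) (hn : 0 < n) :
    (Nat.card {y : Fin p → Fin (2*n+1) → ℤ // IsMelon p n y} : ℤ) =
      Matrix.det (Matrix.of fun i j : Fin p =>
        (ichoose (2*n) ((n : ℤ) + (i : ℤ) - (j : ℤ)) : ℤ)) :=
  MelonAux.main_identity p n
end

section
/- For all positive integers p, n and h, the number m_{n,h}^{(p)} of p-watermelons of length 2n with height < h (and no restriction on the depth) equals the p×p determinant det_{0≤i,j<p}( C(2n, n+i−j) − C(2n, n+h−i−j) ), where C(a,b) denotes the binomial coefficient (taken to be 0 when b < 0 or b > a). -/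
open scoped BigOperators
open Filter

open Finset

namespace Melon
noncomputable section
open scoped Classical

def stepv (b : Bool) : ℤ := if b then 1 else -1

lemma stepv_cases (b : Bool) : stepv b = 1 ∨ stepv b = -1 := by
  cases b <;> simp [stepv]

lemma stepv_not (b : Bool) : stepv (!b) = - stepv b := by cases b <;> simp [stepv]

def pval (m : ℕ) (a : ℤ) (s : Fin m → Bool) : ℕ → ℤ
  | 0 => a
  | t+1 => pval m a s t + (if ht : t < m then stepv (s ⟨t, ht⟩) else 0)

@[simp] lemma pval_zero (m : ℕ) (a : ℤ) (s : Fin m → Bool) : pval m a s 0 = a := rfl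

lemma pval_succ {m t : ℕ} (a : ℤ) (s : Fin m → Bool) (ht : t < m) :
    pval m a s (t+1) = pval m a s t + stepv (s ⟨t, ht⟩) := by
  simp [pval, ht]

lemma pval_succ_ge {m t : ℕ} (a : ℤ) (s : Fin m → Bool) (ht : ¬ t < m) :
    pval m a s (t+1) = pval m a s t := by
  simp [pval, ht]

lemma pval_eq_sum (m : ℕ) (a : ℤ) (s : Fin m → Bool) (t : ℕ) :
    pval m a s t = a + ∑ k : Fin m, if (k : ℕ) < t then stepv (s k) else 0 := by
  induction t with
  | zero => simp
  | succ t ih =>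
      by_cases ht : t < m
      · rw [pval_succ a s ht, ih]
        have : ∀ k : Fin m,
            (if (k : ℕ) < t + 1 then stepv (s k) else 0)
            = (if (k : ℕ) < t then stepv (s k) else 0)
              + (if k = ⟨t, ht⟩ then stepv (s k) else 0) := by
          intro k
          rcases lt_trichotomy (k : ℕ) t with hk | hk | hk
          · have h1 : (k:ℕ) < t + 1 := by omega
            have h2 : k ≠ ⟨t, ht⟩ := by
              simp only [ne_eq, Fin.ext_iff]; omega
            simp [h1, hk, h2]
          · have h1 : (k:ℕ) < t + 1 := by omega
            have h2 : k = ⟨t, ht⟩ := by rw [Fin.ext_iff]; simpa using hk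
            simp [h1, hk, h2]
          · have h1 : ¬ ((k:ℕ) < t + 1) := by omega
            have h2 : k ≠ ⟨t, ht⟩ := by
              simp only [ne_eq, Fin.ext_iff]; omega
            simp [h1, h2, show ¬ (k:ℕ) < t by omega]
        have hsum : (∑ k : Fin m, if (k:ℕ) < t+1 then stepv (s k) else 0)
            = (∑ k : Fin m, if (k:ℕ) < t then stepv (s k) else 0) + stepv (s ⟨t, ht⟩) := by
          rw [Finset.sum_congr rfl (fun k _ => this k), Finset.sum_add_distrib,
            Finset.sum_ite_eq' Finset.univ (⟨t, ht⟩ : Fin m) (fun k => stepv (s k))]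
          simp
        rw [hsum]; ring
      · rw [pval_succ_ge a s ht, ih]
        congr 1
        apply Finset.sum_congr rfl
        intro k _
        have hk := k.isLt
        have h1 : (k:ℕ) < t := by omega
        have h2 : (k:ℕ) < t + 1 := by omega
        simp [h1, h2]

lemma pval_last (m : ℕ) (a : ℤ) (s : Fin m → Bool) :
    pval m a s m = a + 2 * ((Finset.univ.filter (fun k => s k = true)).card : ℤ) - m := by
  rw [pval_eq_sum]
  have h1 : ∀ k : Fin m, (if (k : ℕ) < m then stepv (s k) else 0)
      = 2 * (if s k = true then (1:ℤ) else 0) - 1 := by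
    intro k; cases hk : s k <;> simp [k.isLt, stepv, hk]
  rw [Finset.sum_congr rfl (fun k _ => h1 k)]
  rw [Finset.sum_sub_distrib, ← Finset.mul_sum, Finset.sum_boole]
  simp
  ring

def endCount (m : ℕ) (a b : ℤ) : ℕ := Fintype.card {s : Fin m → Bool // pval m a s m = b}

lemma endCount_eq (m : ℕ) (a c : ℤ) : endCount m a (a + 2*c - m) = ichoose m c := by
  have key : ∀ s : Fin m → Bool, (pval m a s m = a + 2*c - m)
      ↔ ((Finset.univ.filter (fun k => s k = true)).card : ℤ) = c := by
    intro s; rw [pval_last]; constructor <;> intro hs <;> omega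
  by_cases hc : 0 ≤ c
  · set k := c.toNat with hk
    have hck : c = (k : ℤ) := by omega
    have : endCount m a (a + 2*c - m)
        = Fintype.card {s : Fin m → Bool // (Finset.univ.filter (fun i => s i = true)).card = k} := by
      apply Fintype.card_congr
      apply Equiv.subtypeEquivRight
      intro s; rw [key s, hck]; exact_mod_cast Iff.rfl
    rw [this]
    have e : {s : Fin m → Bool // (Finset.univ.filter (fun i => s i = true)).card = k}
        ≃ {A : Finset (Fin m) // A.card = k} := by
      refine ⟨fun s => ⟨Finset.univ.filter (fun i => s.1 i = true), s.2⟩,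
        fun A => ⟨fun i => decide (i ∈ A.1), ?_⟩, ?_, ?_⟩
      · simp [A.2]
      · rintro ⟨s, hs⟩; ext i; simp
      · rintro ⟨A, hA⟩; ext i; simp
    rw [Fintype.card_congr e, Fintype.card_subtype]
    rw [Finset.univ_filter_card_eq]
    rw [Finset.card_powersetCard]
    simp [ichoose, hc, ← hk]
  · have : IsEmpty {s : Fin m → Bool // pval m a s m = a + 2*c - m} := by
      constructor; rintro ⟨s, hs⟩
      rw [key s] at hs
      omega
    rw [endCount, Fintype.card_eq_zero]
    simp [ichoose, hc]


/-! ### Reflection -/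

variable {m h : ℕ}

def hits (m h : ℕ) (a : ℤ) (s : Fin m → Bool) : Prop := ∃ t, t ≤ m ∧ pval m a s t = (h:ℤ)

def below (m h : ℕ) (a : ℤ) (s : Fin m → Bool) : Prop := ∀ t, t ≤ m → pval m a s t < (h:ℤ)

lemma exists_hit_up {a : ℤ} {s : Fin m → Bool} (h0 : a < (h:ℤ))
    (hex : ∃ t, t ≤ m ∧ (h:ℤ) ≤ pval m a s t) : hits m h a s := by
  classical
  let T := Nat.find hex
  have hT : T ≤ m ∧ (h:ℤ) ≤ pval m a s T := Nat.find_spec hex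
  have hT0 : T ≠ 0 := by
    intro h0'
    have := hT.2
    rw [h0'] at this
    simp at this
    omega
  obtain ⟨T', hTe⟩ : ∃ T', T = T' + 1 := ⟨T - 1, by omega⟩
  rw [hTe] at hT
  have hT' : ¬ (T' ≤ m ∧ (h:ℤ) ≤ pval m a s T') := Nat.find_min hex (by omega)
  have hT'm : T' ≤ m := by omega
  have h1 : pval m a s T' < (h:ℤ) := by
    by_contra hc
    exact hT' ⟨hT'm, by omega⟩
  have h2 : pval m a s (T'+1) ≤ pval m a s T' + 1 := by
    by_cases htm : T' < m
    · rw [pval_succ a s htm]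
      rcases stepv_cases (s ⟨T', htm⟩) with hs | hs <;> omega
    · rw [pval_succ_ge a s htm]; omega
  exact ⟨T'+1, hT.1, by omega⟩

lemma exists_hit_down {a : ℤ} {s : Fin m → Bool} (h0 : (h:ℤ) < a)
    (hm : pval m a s m < (h:ℤ)) : hits m h a s := by
  classical
  have hex : ∃ t, t ≤ m ∧ pval m a s t ≤ (h:ℤ) := ⟨m, le_rfl, by omega⟩
  let T := Nat.find hex
  have hT : T ≤ m ∧ pval m a s T ≤ (h:ℤ) := Nat.find_spec hex
  have hT0 : T ≠ 0 := by
    intro h0'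
    have := hT.2
    rw [h0'] at this
    simp at this
    omega
  obtain ⟨T', hTe⟩ : ∃ T', T = T' + 1 := ⟨T - 1, by omega⟩
  rw [hTe] at hT
  have hT' : ¬ (T' ≤ m ∧ pval m a s T' ≤ (h:ℤ)) := Nat.find_min hex (by omega)
  have hT'm : T' ≤ m := by omega
  have h1 : (h:ℤ) < pval m a s T' := by
    by_contra hc
    exact hT' ⟨hT'm, by omega⟩
  have h2 : pval m a s T' - 1 ≤ pval m a s (T'+1) := by
    by_cases htm : T' < m
    · rw [pval_succ a s htm]
      rcases stepv_cases (s ⟨T', htm⟩) with hs | hs <;> omega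
    · rw [pval_succ_ge a s htm]; omega
  exact ⟨T'+1, hT.1, by omega⟩

def hitT (m h : ℕ) (a : ℤ) (s : Fin m → Bool) : ℕ := sInf {t | pval m a s t = (h:ℤ)}

lemma hitT_mem {a : ℤ} {s : Fin m → Bool} (hh : hits m h a s) :
    pval m a s (hitT m h a s) = (h:ℤ) := by
  obtain ⟨t, _, ht⟩ := hh
  exact Nat.sInf_mem (⟨t, ht⟩ : {t | pval m a s t = (h:ℤ)}.Nonempty)

lemma hitT_le {a : ℤ} {s : Fin m → Bool} (hh : hits m h a s) : hitT m h a s ≤ m := by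
  obtain ⟨t, htm, ht⟩ := hh
  exact le_trans (Nat.sInf_le ht) htm

lemma hitT_min {a : ℤ} {s : Fin m → Bool} {t : ℕ} (ht : t < hitT m h a s) :
    pval m a s t ≠ (h:ℤ) := Nat.notMem_of_lt_sInf ht

def reflS (m h : ℕ) (a : ℤ) (s : Fin m → Bool) : Fin m → Bool :=
  fun k => if (k:ℕ) < hitT m h a s then !(s k) else s k

lemma pval_reflS_le {a : ℤ} {s : Fin m → Bool} (hh : hits m h a s) :
    ∀ t, t ≤ hitT m h a s → pval m (2*h - a) (reflS m h a s) t = 2*h - pval m a s t := by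
  intro t ht
  induction t with
  | zero => simp
  | succ t ih =>
      have h1 : t < m := lt_of_lt_of_le (by omega) (hitT_le hh)
      have h2 : (⟨t, h1⟩ : Fin m).val < hitT m h a s := by simpa using (by omega : t < hitT m h a s)
      rw [pval_succ _ _ h1, pval_succ _ _ h1, ih (by omega)]
      show _ + stepv (if _ then _ else _) = _
      rw [if_pos h2, stepv_not]
      ring

lemma pval_reflS_ge {a : ℤ} {s : Fin m → Bool} (hh : hits m h a s) :
    ∀ t, hitT m h a s ≤ t → pval m (2*h - a) (reflS m h a s) t = pval m a s t := by
  intro t ht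
  induction t with
  | zero =>
      have h0 : hitT m h a s = 0 := by omega
      rw [pval_reflS_le hh 0 (by omega)]
      have := hitT_mem hh
      rw [h0] at this
      simp at this ⊢
      omega
  | succ t ih =>
      rcases Nat.lt_or_ge t (hitT m h a s) with hlt | hge
      · have heq : t + 1 = hitT m h a s := by omega
        rw [pval_reflS_le hh (t+1) (by omega), heq, hitT_mem hh]
        ring
      · by_cases h1 : t < m
        · have h2 : ¬ ((⟨t, h1⟩ : Fin m).val < hitT m h a s) := by simpa using (by omega : ¬ t < hitT m h a s)
          rw [pval_succ _ _ h1, pval_succ _ _ h1, ih hge]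
          show _ + stepv (if _ then _ else _) = _
          rw [if_neg h2]
        · rw [pval_succ_ge _ _ h1, pval_succ_ge _ _ h1, ih hge]

lemma hits_reflS {a : ℤ} {s : Fin m → Bool} (hh : hits m h a s) :
    hits m h (2*h - a) (reflS m h a s) :=
  ⟨hitT m h a s, hitT_le hh, by rw [pval_reflS_ge hh _ le_rfl, hitT_mem hh]⟩

lemma hitT_reflS {a : ℤ} {s : Fin m → Bool} (hh : hits m h a s) :
    hitT m h (2*h - a) (reflS m h a s) = hitT m h a s := by
  have hmem : pval m (2*h - a) (reflS m h a s) (hitT m h a s) = (h:ℤ) := by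
    rw [pval_reflS_ge hh _ le_rfl, hitT_mem hh]
  refine le_antisymm (Nat.sInf_le hmem) ?_
  by_contra hc
  push_neg at hc
  have hlt : hitT m h (2*h - a) (reflS m h a s) < hitT m h a s := hc
  have hmem2 : pval m (2*h - a) (reflS m h a s) (hitT m h (2*h-a) (reflS m h a s)) = (h:ℤ) :=
    hitT_mem (hits_reflS hh)
  rw [pval_reflS_le hh _ (le_of_lt hlt)] at hmem2
  exact hitT_min hlt (by omega)

lemma reflS_reflS {a : ℤ} {s : Fin m → Bool} (hh : hits m h a s) :
    reflS m h (2*h - a) (reflS m h a s) = s := by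
  funext k
  simp only [reflS, hitT_reflS hh]
  by_cases hk : (k:ℕ) < hitT m h a s <;> simp [hk]

lemma card_hits_eq (a b : ℤ) (ha : a < (h:ℤ)) (hb : b < (h:ℤ)) :
    Fintype.card {s : Fin m → Bool // pval m a s m = b ∧ hits m h a s}
      = endCount m (2*h - a) b := by
  have harefl : (2*(h:ℤ) - (2*h - a)) = a := by ring
  apply Fintype.card_congr
  refine ⟨fun x => ⟨reflS m h a x.1, ?_⟩, fun x => ⟨reflS m h (2*h - a) x.1, ?_, ?_⟩, ?_, ?_⟩
  · rw [pval_reflS_ge x.2.2 m (hitT_le x.2.2), x.2.1]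
  · -- endpoint for inverse
    have hhit : hits m h (2*h - a) x.1 := exists_hit_down (by omega) (by rw [x.2]; omega)
    have := pval_reflS_ge hhit m (hitT_le hhit)
    rw [harefl] at this
    rw [this, x.2]
  · have hhit : hits m h (2*h - a) x.1 := exists_hit_down (by omega) (by rw [x.2]; omega)
    have := pval_reflS_le hhit (hitT m h (2*h - a) x.1) le_rfl
    rw [harefl] at this
    refine ⟨hitT m h (2*h - a) x.1, hitT_le hhit, ?_⟩
    rw [this, hitT_mem hhit]
    ring
  · rintro ⟨s, hend, hhit⟩
    apply Subtype.ext
    exact reflS_reflS hhit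
  · rintro ⟨s, hend⟩
    apply Subtype.ext
    have hhit : hits m h (2*h - a) s := exists_hit_down (by omega) (by rw [hend]; omega)
    have := reflS_reflS hhit
    rw [harefl] at this
    exact this

def belowCount (m h : ℕ) (a b : ℤ) : ℕ :=
  Fintype.card {s : Fin m → Bool // pval m a s m = b ∧ below m h a s}

lemma below_iff_not_hits {a : ℤ} {s : Fin m → Bool} (ha : a < (h:ℤ)) :
    below m h a s ↔ ¬ hits m h a s := by
  constructor
  · intro hb ⟨t, htm, ht⟩
    have := hb t htm
    omega
  · intro hnh t htm
    by_contra hc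
    exact hnh (exists_hit_up ha ⟨t, htm, by omega⟩)

lemma endCount_split (a b : ℤ) (ha : a < (h:ℤ)) :
    endCount m a b = belowCount m h a b
      + Fintype.card {s : Fin m → Bool // pval m a s m = b ∧ hits m h a s} := by
  rw [endCount, belowCount]
  rw [Fintype.card_subtype, Fintype.card_subtype, Fintype.card_subtype]
  have h1 : ∀ s : Fin m → Bool, (pval m a s m = b ∧ below m h a s)
      ↔ (pval m a s m = b ∧ ¬ hits m h a s) := by
    intro s; rw [below_iff_not_hits ha]
  rw [Finset.filter_congr (fun s _ => h1 s)]
  have h2 : (Finset.univ.filter fun s : Fin m → Bool => pval m a s m = b ∧ ¬ hits m h a s)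
      = (Finset.univ.filter fun s : Fin m → Bool => pval m a s m = b).filter
          (fun s => ¬ hits m h a s) := by
    rw [Finset.filter_filter]
  have h3 : (Finset.univ.filter fun s : Fin m → Bool => pval m a s m = b ∧ hits m h a s)
      = (Finset.univ.filter fun s : Fin m → Bool => pval m a s m = b).filter
          (fun s => hits m h a s) := by
    rw [Finset.filter_filter]
  rw [h2, h3]
  rw [add_comm]
  exact (Finset.card_filter_add_card_filter_not _).symm

lemma belowCount_eq_sub (a b : ℤ) (ha : a < (h:ℤ)) (hb : b < (h:ℤ)) :
    (belowCount m h a b : ℤ) = (endCount m a b : ℤ) - endCount m (2*h - a) b := by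
  have := endCount_split (m := m) (h := h) a b ha
  rw [card_hits_eq a b ha hb] at this
  omega

lemma endCount_eq' (a b c : ℤ) (hbc : b = a + 2*c - m) : endCount m a b = ichoose m c := by
  rw [hbc]; exact endCount_eq m a c


/-! ### LGV -/

variable {p : ℕ}

abbrev Sys (p m : ℕ) := Fin p → Fin m → Bool

def okF (p m h : ℕ) (σ : Equiv.Perm (Fin p)) (F : Sys p m) : Prop :=
  ∀ i : Fin p, pval m (2*(i:ℤ)) (F i) m = 2*((σ i : ℤ)) ∧ below m h (2*(i:ℤ)) (F i)

def vals (m : ℕ) {p : ℕ} (F : Sys p m) (i : Fin p) (t : ℕ) : ℤ := pval m (2*(i:ℤ)) (F i) t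

def Meet (m : ℕ) {p : ℕ} (F : Sys p m) (t : ℕ) : Prop :=
  ∃ i j : Fin p, i ≠ j ∧ vals m F i t = vals m F j t

def cross (m : ℕ) {p : ℕ} (F : Sys p m) : Prop := ∃ t, t ≤ m ∧ Meet m F t

def t0 (m : ℕ) {p : ℕ} (F : Sys p m) : ℕ := sInf {t | Meet m F t}

lemma meet_t0 {F : Sys p m} (hc : cross m F) : Meet m F (t0 m F) := by
  obtain ⟨t, _, ht⟩ := hc
  exact Nat.sInf_mem (⟨t, ht⟩ : {t | Meet m F t}.Nonempty)

lemma t0_le {F : Sys p m} (hc : cross m F) : t0 m F ≤ m := by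
  obtain ⟨t, htm, ht⟩ := hc
  exact le_trans (Nat.sInf_le ht) htm

lemma t0_min {F : Sys p m} {t : ℕ} (ht : t < t0 m F) : ¬ Meet m F t :=
  Nat.notMem_of_lt_sInf ht

def S1 (m : ℕ) {p : ℕ} (F : Sys p m) : Finset (Fin p) :=
  Finset.univ.filter (fun i => ∃ j, j ≠ i ∧ vals m F i (t0 m F) = vals m F j (t0 m F))

lemma S1_nonempty {F : Sys p m} (hc : cross m F) : (S1 m F).Nonempty := by
  obtain ⟨i, j, hij, hv⟩ := meet_t0 hc
  exact ⟨i, by simp [S1]; exact ⟨j, fun hj => hij hj.symm, hv⟩⟩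

def i0 (m : ℕ) {p : ℕ} (F : Sys p m) (hc : cross m F) : Fin p := (S1 m F).min' (S1_nonempty hc)

lemma i0_spec {F : Sys p m} (hc : cross m F) :
    ∃ j, j ≠ i0 m F hc ∧ vals m F (i0 m F hc) (t0 m F) = vals m F j (t0 m F) := by
  have := (S1 m F).min'_mem (S1_nonempty hc)
  exact (Finset.mem_filter.mp this).2

def S2 (m : ℕ) {p : ℕ} (F : Sys p m) (i : Fin p) : Finset (Fin p) :=
  Finset.univ.filter (fun j => j ≠ i ∧ vals m F j (t0 m F) = vals m F i (t0 m F))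

lemma S2_nonempty {F : Sys p m} (hc : cross m F) : (S2 m F (i0 m F hc)).Nonempty := by
  obtain ⟨j, hj, hv⟩ := i0_spec hc
  exact ⟨j, by simp [S2]; exact ⟨hj, hv.symm⟩⟩

def j0 (m : ℕ) {p : ℕ} (F : Sys p m) (hc : cross m F) : Fin p :=
  (S2 m F (i0 m F hc)).min' (S2_nonempty hc)

lemma j0_spec {F : Sys p m} (hc : cross m F) :
    j0 m F hc ≠ i0 m F hc ∧ vals m F (j0 m F hc) (t0 m F) = vals m F (i0 m F hc) (t0 m F) := by
  have := (S2 m F (i0 m F hc)).min'_mem (S2_nonempty hc)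
  exact (Finset.mem_filter.mp this).2

/-! mixing two step sequences at time τ -/

def mix (m : ℕ) (s s' : Fin m → Bool) (τ : ℕ) : Fin m → Bool :=
  fun k => if (k:ℕ) < τ then s k else s' k

lemma pval_mix_le {τ : ℕ} (a : ℤ) (s s' : Fin m → Bool) :
    ∀ t, t ≤ τ → pval m a (mix m s s' τ) t = pval m a s t := by
  intro t ht
  induction t with
  | zero => simp
  | succ t ih =>
      by_cases h1 : t < m
      · rw [pval_succ _ _ h1, pval_succ _ _ h1, ih (by omega)]
        show _ + stepv (if _ then _ else _) = _
        rw [if_pos (by simpa using (by omega : t < τ))]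
      · rw [pval_succ_ge _ _ h1, pval_succ_ge _ _ h1, ih (by omega)]

lemma pval_mix_ge {τ : ℕ} (a a' : ℤ) (s s' : Fin m → Bool) :
    ∀ t, τ ≤ t → pval m a (mix m s s' τ) t
      = pval m a s τ - pval m a' s' τ + pval m a' s' t := by
  intro t ht
  induction t with
  | zero =>
      have h0 : τ = 0 := by omega
      subst h0
      simp
  | succ t ih =>
      rcases Nat.lt_or_ge t τ with hlt | hge
      · have heq : t + 1 = τ := by omega
        rw [heq]
        rw [pval_mix_le a s s' τ le_rfl]
        ring
      · by_cases h1 : t < m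
        · rw [pval_succ _ _ h1, pval_succ _ _ h1, ih hge]
          show _ + stepv (if _ then _ else _) = _
          rw [if_neg (by simpa using (by omega : ¬ t < τ))]
          ring
        · rw [pval_succ_ge _ _ h1, pval_succ_ge _ _ h1, ih hge]

lemma mix_mix {τ : ℕ} (s s' : Fin m → Bool) :
    mix m (mix m s s' τ) (mix m s' s τ) τ = s := by
  funext k
  by_cases hk : (k:ℕ) < τ <;> simp [mix, hk]

/-! the tail-swap -/

def swapT (m : ℕ) {p : ℕ} (F : Sys p m) (hc : cross m F) : Sys p m :=
  fun k => if k = i0 m F hc then mix m (F (i0 m F hc)) (F (j0 m F hc)) (t0 m F)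
    else if k = j0 m F hc then mix m (F (j0 m F hc)) (F (i0 m F hc)) (t0 m F)
    else F k

lemma vals_swapT_le {F : Sys p m} (hc : cross m F) :
    ∀ k t, t ≤ t0 m F → vals m (swapT m F hc) k t = vals m F k t := by
  intro k t ht
  unfold vals swapT
  by_cases h1 : k = i0 m F hc
  · subst h1; rw [if_pos rfl, pval_mix_le _ _ _ _ ht]
  · rw [if_neg h1]
    by_cases h2 : k = j0 m F hc
    · subst h2; rw [if_pos rfl, pval_mix_le _ _ _ _ ht]
    · rw [if_neg h2]

lemma vals_swapT_ge_i0 {F : Sys p m} (hc : cross m F) :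
    ∀ t, t0 m F ≤ t → vals m (swapT m F hc) (i0 m F hc) t = vals m F (j0 m F hc) t := by
  intro t ht
  unfold vals swapT
  rw [if_pos rfl, pval_mix_ge (a' := 2*((j0 m F hc : Fin p) : ℤ)) _ _ _ t ht]
  have := (j0_spec hc).2
  unfold vals at this
  rw [← this]
  ring

lemma vals_swapT_ge_j0 {F : Sys p m} (hc : cross m F) :
    ∀ t, t0 m F ≤ t → vals m (swapT m F hc) (j0 m F hc) t = vals m F (i0 m F hc) t := by
  intro t ht
  unfold vals swapT
  rw [if_neg (j0_spec hc).1, if_pos rfl,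
    pval_mix_ge (a' := 2*((i0 m F hc : Fin p) : ℤ)) _ _ _ t ht]
  have := (j0_spec hc).2
  unfold vals at this
  rw [this]
  ring

lemma cross_swapT {F : Sys p m} (hc : cross m F) : cross m (swapT m F hc) := by
  refine ⟨t0 m F, t0_le hc, i0 m F hc, j0 m F hc, fun he => (j0_spec hc).1 he.symm, ?_⟩
  rw [vals_swapT_le hc _ _ le_rfl, vals_swapT_le hc _ _ le_rfl]
  exact (j0_spec hc).2.symm

lemma t0_swapT {F : Sys p m} (hc : cross m F) : t0 m (swapT m F hc) = t0 m F := by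
  refine le_antisymm (Nat.sInf_le ?_) ?_
  · refine ⟨i0 m F hc, j0 m F hc, fun he => (j0_spec hc).1 he.symm, ?_⟩
    rw [vals_swapT_le hc _ _ le_rfl, vals_swapT_le hc _ _ le_rfl]
    exact (j0_spec hc).2.symm
  · by_contra hlt
    push_neg at hlt
    have hmem : Meet m (swapT m F hc) (t0 m (swapT m F hc)) := meet_t0 (cross_swapT hc)
    obtain ⟨i, j, hij, hv⟩ := hmem
    rw [vals_swapT_le hc _ _ (by omega), vals_swapT_le hc _ _ (by omega)] at hv
    exact t0_min hlt ⟨i, j, hij, hv⟩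

lemma i0_swapT {F : Sys p m} (hc : cross m F) :
    i0 m (swapT m F hc) (cross_swapT hc) = i0 m F hc := by
  have hS : S1 m (swapT m F hc) = S1 m F := by
    unfold S1
    apply Finset.filter_congr
    intro i _
    rw [t0_swapT hc]
    constructor <;> rintro ⟨j, hj, hv⟩ <;> refine ⟨j, hj, ?_⟩
    · rwa [vals_swapT_le hc _ _ le_rfl, vals_swapT_le hc _ _ le_rfl] at hv
    · rwa [vals_swapT_le hc _ _ le_rfl, vals_swapT_le hc _ _ le_rfl]
  unfold i0
  congr 1

lemma j0_swapT {F : Sys p m} (hc : cross m F) :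
    j0 m (swapT m F hc) (cross_swapT hc) = j0 m F hc := by
  have hS : S2 m (swapT m F hc) (i0 m (swapT m F hc) (cross_swapT hc)) = S2 m F (i0 m F hc) := by
    unfold S2
    rw [i0_swapT hc]
    apply Finset.filter_congr
    intro j _
    rw [t0_swapT hc, vals_swapT_le hc _ _ le_rfl, vals_swapT_le hc _ _ le_rfl]
  unfold j0
  congr 1

lemma swapT_apply_i0 {F : Sys p m} (hc : cross m F) :
    swapT m F hc (i0 m F hc) = mix m (F (i0 m F hc)) (F (j0 m F hc)) (t0 m F) := by
  unfold swapT
  rw [if_pos rfl]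

lemma swapT_apply_j0 {F : Sys p m} (hc : cross m F) :
    swapT m F hc (j0 m F hc) = mix m (F (j0 m F hc)) (F (i0 m F hc)) (t0 m F) := by
  unfold swapT
  rw [if_neg (j0_spec hc).1, if_pos rfl]

lemma swapT_apply_other {F : Sys p m} (hc : cross m F) {k : Fin p}
    (h1 : k ≠ i0 m F hc) (h2 : k ≠ j0 m F hc) : swapT m F hc k = F k := by
  unfold swapT
  rw [if_neg h1, if_neg h2]

lemma swapT_swapT {F : Sys p m} (hc : cross m F) :
    swapT m (swapT m F hc) (cross_swapT hc) = F := by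
  set G := swapT m F hc with hG
  have hi : i0 m G (cross_swapT hc) = i0 m F hc := i0_swapT hc
  have hj : j0 m G (cross_swapT hc) = j0 m F hc := j0_swapT hc
  have ht : t0 m G = t0 m F := t0_swapT hc
  funext k
  by_cases h1 : k = i0 m F hc
  · subst h1
    have e1 : swapT m G (cross_swapT hc) (i0 m F hc)
        = mix m (G (i0 m F hc)) (G (j0 m F hc)) (t0 m F) := by
      conv_lhs => rw [← hi]
      rw [swapT_apply_i0 (cross_swapT hc), hi, hj, ht]
    rw [e1, hG, swapT_apply_i0 hc, swapT_apply_j0 hc]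
    exact mix_mix _ _
  · by_cases h2 : k = j0 m F hc
    · subst h2
      have e1 : swapT m G (cross_swapT hc) (j0 m F hc)
          = mix m (G (j0 m F hc)) (G (i0 m F hc)) (t0 m F) := by
        conv_lhs => rw [← hj]
        rw [swapT_apply_j0 (cross_swapT hc), hi, hj, ht]
      rw [e1, hG, swapT_apply_i0 hc, swapT_apply_j0 hc]
      exact mix_mix _ _
    · rw [swapT_apply_other (cross_swapT hc) (by rw [hi]; exact h1) (by rw [hj]; exact h2)]
      exact swapT_apply_other hc h1 h2

lemma okF_swapT {σ : Equiv.Perm (Fin p)} {F : Sys p m} (hok : okF p m h σ F) (hc : cross m F) :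
    okF p m h (σ * Equiv.swap (i0 m F hc) (j0 m F hc)) (swapT m F hc) := by
  intro k
  have hij : i0 m F hc ≠ j0 m F hc := fun he => (j0_spec hc).1 he.symm
  by_cases h1 : k = i0 m F hc
  · subst h1
    constructor
    · have := vals_swapT_ge_i0 hc m (t0_le hc)
      unfold vals at this
      rw [this, (hok (j0 m F hc)).1]
      simp [Equiv.swap_apply_left]
    · intro t htm
      rcases Nat.le_total t (t0 m F) with ht | ht
      · have := vals_swapT_le hc (i0 m F hc) t ht
        unfold vals at this
        rw [this]
        exact (hok (i0 m F hc)).2 t htm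
      · have := vals_swapT_ge_i0 hc t ht
        unfold vals at this
        rw [this]
        exact (hok (j0 m F hc)).2 t htm
  · by_cases h2 : k = j0 m F hc
    · subst h2
      constructor
      · have := vals_swapT_ge_j0 hc m (t0_le hc)
        unfold vals at this
        rw [this, (hok (i0 m F hc)).1]
        simp [Equiv.swap_apply_right]
      · intro t htm
        rcases Nat.le_total t (t0 m F) with ht | ht
        · have := vals_swapT_le hc (j0 m F hc) t ht
          unfold vals at this
          rw [this]
          exact (hok (j0 m F hc)).2 t htm
        · have := vals_swapT_ge_j0 hc t ht
          unfold vals at this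
          rw [this]
          exact (hok (i0 m F hc)).2 t htm
    · have hFk : swapT m F hc k = F k := by
        unfold swapT
        rw [if_neg h1, if_neg h2]
      constructor
      · rw [hFk]
        rw [Equiv.Perm.mul_apply, Equiv.swap_apply_of_ne_of_ne h1 h2]
        exact (hok k).1
      · rw [hFk]
        exact (hok k).2


/-! ### sign sum and noncrossing -/

lemma sign_int_swap_mul (σ : Equiv.Perm (Fin p)) {i j : Fin p} (hij : i ≠ j) :
    ((Equiv.Perm.sign (σ * Equiv.swap i j) : ℤˣ) : ℤ) = - ((Equiv.Perm.sign σ : ℤˣ) : ℤ) := by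
  rw [Equiv.Perm.sign_mul, Equiv.Perm.sign_swap hij]
  simp

lemma cross_sum_zero :
    ∑ x ∈ (Finset.univ.filter
        (fun x : Equiv.Perm (Fin p) × Sys p m => okF p m h x.1 x.2 ∧ cross m x.2)),
      ((Equiv.Perm.sign x.1 : ℤˣ) : ℤ) = 0 := by
  refine Finset.sum_involution
    (fun x hx => (x.1 * Equiv.swap (i0 m x.2 (by simp at hx; exact hx.2))
        (j0 m x.2 (by simp at hx; exact hx.2)),
      swapT m x.2 (by simp at hx; exact hx.2))) ?_ ?_ ?_ ?_
  · intro x hx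
    simp only
    rw [sign_int_swap_mul x.1 (fun he => (j0_spec _).1 he.symm)]
    ring
  · intro x hx _
    intro heq
    have hc : cross m x.2 := by simp at hx; exact hx.2
    have h1 : x.1 * Equiv.swap (i0 m x.2 hc) (j0 m x.2 hc) = x.1 := congrArg Prod.fst heq
    have := congrArg (fun τ : Equiv.Perm (Fin p) => τ (i0 m x.2 hc)) h1
    simp only [Equiv.Perm.mul_apply, Equiv.swap_apply_left] at this
    exact (j0_spec hc).1 (x.1.injective this)
  · intro x hx
    simp only [Finset.mem_filter, Finset.mem_univ, true_and] at hx ⊢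
    exact ⟨okF_swapT hx.1 hx.2, cross_swapT hx.2⟩
  · intro x hx
    have hc : cross m x.2 := by simp at hx; exact hx.2
    apply Prod.ext
    · simp only
      rw [i0_swapT hc, j0_swapT hc, mul_assoc, Equiv.swap_mul_self, mul_one]
    · simp only
      exact swapT_swapT hc

lemma pval_parity {a : ℤ} {s : Fin m → Bool} : ∀ t, t ≤ m → 2 ∣ (pval m a s t - a + t) := by
  intro t htm
  induction t with
  | zero => simp
  | succ t ih =>
      have h1 : t < m := by omega
      rw [pval_succ _ _ h1]
      have ih2 := ih (by omega)
      rcases stepv_cases (s ⟨t, h1⟩) with hs | hs <;> rw [hs] <;> push_cast at ih2 ⊢ <;> omega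

lemma order_preserved {F : Sys p m} (hnc : ¬ cross m F) {i j : Fin p} (hij : i < j) :
    ∀ t, t ≤ m → vals m F i t < vals m F j t := by
  intro t htm
  induction t with
  | zero =>
      unfold vals
      simp only [pval_zero]
      have : (i:ℤ) < (j:ℤ) := by exact_mod_cast hij
      omega
  | succ t ih =>
      have h1 : t < m := by omega
      have hlt := ih (by omega)
      have hpar_i := pval_parity (a := 2*((i:ℕ):ℤ)) (s := F i) t (by omega)
      have hpar_j := pval_parity (a := 2*((j:ℕ):ℤ)) (s := F j) t (by omega)
      have hd2 : vals m F i t + 2 ≤ vals m F j t := by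
        unfold vals at hlt ⊢
        omega
      have hstep_i : pval m (2*((i:ℕ):ℤ)) (F i) (t+1) ≤ pval m (2*((i:ℕ):ℤ)) (F i) t + 1 := by
        rw [pval_succ _ _ h1]
        rcases stepv_cases (F i ⟨t, h1⟩) with hs | hs <;> omega
      have hstep_j : pval m (2*((j:ℕ):ℤ)) (F j) t - 1 ≤ pval m (2*((j:ℕ):ℤ)) (F j) (t+1) := by
        rw [pval_succ _ _ h1]
        rcases stepv_cases (F j ⟨t, h1⟩) with hs | hs <;> omega
      have hne : vals m F i (t+1) ≠ vals m F j (t+1) := by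
        intro he
        exact hnc ⟨t+1, htm, i, j, Fin.ne_of_lt hij, he⟩
      unfold vals at hd2 hne ⊢
      omega

lemma strictMono_of_le {σ : Equiv.Perm (Fin p)} (hmono : StrictMono (σ : Fin p → Fin p)) :
    σ = 1 := by
  have hle : ∀ τ : Equiv.Perm (Fin p), StrictMono (τ : Fin p → Fin p) → ∀ i : Fin p, i ≤ τ i := by
    intro τ hτ i
    obtain ⟨v, hv⟩ := i
    induction v with
    | zero => simp [Fin.le_def]
    | succ v ihv =>
        have h1 : (⟨v, by omega⟩ : Fin p) < ⟨v+1, hv⟩ := by simp [Fin.lt_def]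
        have h2 := hτ h1
        have h3 := ihv (by omega)
        rw [Fin.le_def] at h3 ⊢
        rw [Fin.lt_def] at h2
        simp at h3 ⊢
        omega
  have hinv : StrictMono ((σ⁻¹ : Equiv.Perm (Fin p)) : Fin p → Fin p) := by
    intro a b hab
    rcases lt_trichotomy (σ⁻¹ a) (σ⁻¹ b) with hl | hl | hl
    · exact hl
    · exfalso
      have := congrArg σ hl
      simp at this
      omega
    · exfalso
      have := hmono hl
      simp at this
      omega
  apply Equiv.ext
  intro i
  have h1 := hle σ hmono i
  have h2 := hle σ⁻¹ hinv (σ i)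
  simp at h2
  have : σ i = i := le_antisymm (by exact_mod_cast h2) h1
  simpa using this

lemma noncross_perm_id {σ : Equiv.Perm (Fin p)} {F : Sys p m}
    (hok : okF p m h σ F) (hnc : ¬ cross m F) : σ = 1 := by
  apply strictMono_of_le
  intro i j hij
  have := order_preserved hnc hij m le_rfl
  unfold vals at this
  rw [(hok i).1, (hok j).1] at this
  have : ((σ i : ℕ) : ℤ) < ((σ j : ℕ) : ℤ) := by omega
  exact_mod_cast this


/-! ### assembling the determinant -/

def NIcount (p m h : ℕ) : ℕ := Fintype.card {F : Sys p m // okF p m h 1 F ∧ ¬ cross m F}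

lemma card_okF (σ : Equiv.Perm (Fin p)) :
    Fintype.card {F : Sys p m // okF p m h σ F}
      = ∏ i : Fin p, belowCount m h (2*(i:ℤ)) (2*((σ i):ℤ)) := by
  have e : {F : Sys p m // okF p m h σ F}
      ≃ ∀ i : Fin p, {s : Fin m → Bool //
          pval m (2*(i:ℤ)) s m = 2*((σ i):ℤ) ∧ below m h (2*(i:ℤ)) s} :=
    Equiv.subtypePiEquivPi (p := fun (i : Fin p) (s : Fin m → Bool) =>
      pval m (2*(i:ℤ)) s m = 2*((σ i):ℤ) ∧ below m h (2*(i:ℤ)) s)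
  rw [Fintype.card_congr e, Fintype.card_pi]
  rfl

lemma lgv_sum :
    ∑ σ : Equiv.Perm (Fin p), ((Equiv.Perm.sign σ : ℤˣ) : ℤ)
        * (Fintype.card {F : Sys p m // okF p m h σ F} : ℤ)
      = (NIcount p m h : ℤ) := by
  have step1 : ∀ σ : Equiv.Perm (Fin p),
      (Fintype.card {F : Sys p m // okF p m h σ F} : ℤ)
        = ∑ F : Sys p m, (if okF p m h σ F then (1:ℤ) else 0) := by
    intro σ
    rw [Fintype.card_subtype, Finset.sum_boole]
  calc ∑ σ : Equiv.Perm (Fin p), ((Equiv.Perm.sign σ : ℤˣ) : ℤ)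
        * (Fintype.card {F : Sys p m // okF p m h σ F} : ℤ)
      = ∑ σ : Equiv.Perm (Fin p), ∑ F : Sys p m,
          (if okF p m h σ F then ((Equiv.Perm.sign σ : ℤˣ) : ℤ) else 0) := by
        apply Finset.sum_congr rfl
        intro σ _
        rw [step1, Finset.mul_sum]
        apply Finset.sum_congr rfl
        intro F _
        rw [mul_ite, mul_one, mul_zero]
    _ = ∑ x : Equiv.Perm (Fin p) × Sys p m,
          (if okF p m h x.1 x.2 then ((Equiv.Perm.sign x.1 : ℤˣ) : ℤ) else 0) := by
        rw [Fintype.sum_prod_type]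
    _ = ∑ x ∈ (Finset.univ.filter (fun x : Equiv.Perm (Fin p) × Sys p m => okF p m h x.1 x.2)),
          ((Equiv.Perm.sign x.1 : ℤˣ) : ℤ) := by
        rw [Finset.sum_filter]
    _ = (NIcount p m h : ℤ) := by
        rw [← Finset.sum_filter_add_sum_filter_not
          (Finset.univ.filter (fun x : Equiv.Perm (Fin p) × Sys p m => okF p m h x.1 x.2))
          (fun x => cross m x.2)]
        have hz : (Finset.univ.filter
            (fun x : Equiv.Perm (Fin p) × Sys p m => okF p m h x.1 x.2)).filter
              (fun x => cross m x.2)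
            = Finset.univ.filter
              (fun x : Equiv.Perm (Fin p) × Sys p m => okF p m h x.1 x.2 ∧ cross m x.2) := by
          rw [Finset.filter_filter]
        rw [hz, cross_sum_zero, zero_add]
        have hone : ∀ x ∈ (Finset.univ.filter
            (fun x : Equiv.Perm (Fin p) × Sys p m => okF p m h x.1 x.2)).filter
              (fun x => ¬ cross m x.2),
            ((Equiv.Perm.sign x.1 : ℤˣ) : ℤ) = 1 := by
          intro x hx
          simp only [Finset.filter_filter, Finset.mem_filter, Finset.mem_univ, true_and] at hx
          rw [noncross_perm_id hx.1 hx.2]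
          simp
        rw [Finset.sum_congr rfl hone]
        rw [Finset.sum_const, nsmul_eq_mul, mul_one]
        congr 1
        rw [NIcount, Fintype.card_subtype]
        apply Finset.card_bij (fun (x : Equiv.Perm (Fin p) × Sys p m) _ => x.2)
        · intro x hx
          simp only [Finset.filter_filter, Finset.mem_filter, Finset.mem_univ, true_and] at hx ⊢
          have h1 : x.1 = 1 := noncross_perm_id hx.1 hx.2
          rw [← h1]
          exact hx
        · intro x hx y hy hxy
          simp only [Finset.filter_filter, Finset.mem_filter, Finset.mem_univ, true_and] at hx hy
          have h1 : x.1 = 1 := noncross_perm_id hx.1 hx.2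
          have h2 : y.1 = 1 := noncross_perm_id hy.1 hy.2
          exact Prod.ext (h1.trans h2.symm) hxy
        · intro F hF
          simp only [Finset.mem_filter, Finset.mem_univ, true_and] at hF
          exact ⟨(1, F), by simp only [Finset.filter_filter, Finset.mem_filter,
            Finset.mem_univ, true_and]; exact hF, rfl⟩

lemma lgv_det :
    (NIcount p m h : ℤ)
      = Matrix.det (Matrix.of fun i j : Fin p => (belowCount m h (2*(i:ℤ)) (2*(j:ℤ)) : ℤ)) := by
  rw [← Matrix.det_transpose, Matrix.det_apply']
  rw [← lgv_sum]
  apply Finset.sum_congr rfl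
  intro σ _
  rw [card_okF]
  push_cast
  rfl


/-! ### ichoose symmetry -/

lemma ichoose_symm_aux (n k : ℕ) : ichoose (2*n) ((n:ℤ)+k) = ichoose (2*n) ((n:ℤ)-k) := by
  by_cases hk : k ≤ n
  · unfold ichoose
    rw [if_pos (by omega), if_pos (by omega)]
    have h1 : ((n:ℤ)+k).toNat = n + k := by omega
    have h2 : ((n:ℤ)-k).toNat = n - k := by omega
    rw [h1, h2]
    have := Nat.choose_symm (show n + k ≤ 2*n by omega) 
    rw [show 2*n - (n+k) = n - k by omega] at this
    exact this.symm
  · unfold ichoose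
    rw [if_pos (by omega), if_neg (by omega)]
    have h1 : ((n:ℤ)+k).toNat = n + k := by omega
    rw [h1]
    exact Nat.choose_eq_zero_of_lt (by omega)

lemma ichoose_symm (n : ℕ) (k : ℤ) : ichoose (2*n) ((n:ℤ)+k) = ichoose (2*n) ((n:ℤ)-k) := by
  rcases le_or_gt 0 k with hk | hk
  · have : k = ((k.toNat : ℕ) : ℤ) := by omega
    rw [this]
    exact ichoose_symm_aux n k.toNat
  · have : k = -(((-k).toNat : ℕ) : ℤ) := by omega
    rw [this]
    have := (ichoose_symm_aux n (-k).toNat).symm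
    rw [show (n:ℤ) - ((-k).toNat : ℤ) = n + -(((-k).toNat:ℕ):ℤ) by ring,
      show (n:ℤ) + ((-k).toNat : ℤ) = n - -(((-k).toNat:ℕ):ℤ) by ring] at this
    exact this

/-! ### the bridge between melons and systems -/

def sysOfMelon (p n : ℕ) (y : Fin p → Fin (2*n+1) → ℤ) : Sys p (2*n) :=
  fun i k => decide (y i k.succ - y i k.castSucc = 1)

lemma pval_sysOfMelon {p n : ℕ} {y : Fin p → Fin (2*n+1) → ℤ}
    (h0 : ∀ i, y i 0 = 2 * (i : ℤ))
    (hstep : ∀ i (t : Fin (2*n)), y i t.succ - y i t.castSucc = 1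
      ∨ y i t.succ - y i t.castSucc = -1) (i : Fin p) :
    ∀ u : Fin (2*n+1), pval (2*n) (2*(i:ℤ)) (sysOfMelon p n y i) u.val = y i u := by
  intro u
  induction u using Fin.induction with
  | zero => simpa using (h0 i).symm
  | succ k ih =>
      have h1 : (k:ℕ) < 2*n := k.isLt
      have hv : (k.succ : Fin (2*n+1)).val = (k:ℕ) + 1 := rfl
      have hv2 : (k.castSucc : Fin (2*n+1)).val = (k:ℕ) := rfl
      rw [hv, pval_succ _ _ h1]
      have he : (⟨(k:ℕ), h1⟩ : Fin (2*n)) = k := Fin.eta k h1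
      rw [he]
      rw [hv2] at ih
      rw [ih]
      rcases hstep i k with hs | hs
      · have hb : sysOfMelon p n y i k = true := by simp [sysOfMelon, hs]
        rw [hb]
        show y i k.castSucc + (1:ℤ) = y i k.succ
        omega
      · have hb : sysOfMelon p n y i k = false := by simp [sysOfMelon]; omega
        rw [hb]
        show y i k.castSucc + (-1:ℤ) = y i k.succ
        omega

def melonOfSys (p n : ℕ) (F : Sys p (2*n)) : Fin p → Fin (2*n+1) → ℤ :=
  fun i u => pval (2*n) (2*(i:ℤ)) (F i) u.val

lemma melonOfSys_isMelon {p n h : ℕ} {F : Sys p (2*n)}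
    (hok : okF p (2*n) h 1 F) (hnc : ¬ cross (2*n) F) :
    IsMelon p n (melonOfSys p n F) := by
  refine ⟨fun i => by simp [melonOfSys], fun i => ?_, fun i t => ?_, fun i j hij t => ?_⟩
  · show pval (2*n) (2*(i:ℤ)) (F i) (Fin.last (2*n)).val = 2*(i:ℤ)
    have := (hok i).1
    simpa using this
  · have hv : (t.succ : Fin (2*n+1)).val = (t:ℕ) + 1 := rfl
    have hv2 : (t.castSucc : Fin (2*n+1)).val = (t:ℕ) := rfl
    unfold melonOfSys
    rw [hv, hv2, pval_succ _ _ t.isLt, Fin.eta]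
    rcases stepv_cases (F i t) with hs | hs <;> rw [hs] <;> [left; right] <;> ring
  · intro he
    apply hnc
    exact ⟨(t:ℕ), by omega, i, j, hij, he⟩

lemma height_lt_iff {p n : ℕ} (h : ℕ) (hp : 0 < p) (y : Fin p → Fin (2*n+1) → ℤ) :
    (melonHeight y < (h:ℤ)) ↔ ∀ (i : Fin p) (t : Fin (2*n+1)), y i t < (h:ℤ) := by
  have hrange : {v | ∃ i t, y i t = v}
      = Set.range (fun q : Fin p × Fin (2*n+1) => y q.1 q.2) := by
    ext v
    constructor
    · rintro ⟨i, t, rfl⟩; exact ⟨(i, t), rfl⟩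
    · rintro ⟨⟨i, t⟩, rfl⟩; exact ⟨i, t, rfl⟩
  have hbdd : BddAbove {v | ∃ i t, y i t = v} := by
    rw [hrange]; exact (Set.finite_range _).bddAbove
  have hne : {v | ∃ i t, y i t = v}.Nonempty := ⟨y ⟨0, hp⟩ 0, ⟨0, hp⟩, 0, rfl⟩
  constructor
  · intro hlt i t
    exact lt_of_le_of_lt (le_csSup hbdd ⟨i, t, rfl⟩) hlt
  · intro hall
    have : melonHeight y ≤ (h:ℤ) - 1 := by
      rw [melonHeight]
      rw [csSup_le_iff hbdd hne]
      rintro v ⟨i, t, rfl⟩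
      have := hall i t
      omega
    omega

lemma melon_equiv (p n h : ℕ) (hp : 0 < p) :
    Nat.card {y : Fin p → Fin (2*n+1) → ℤ //
        IsMelon p n y ∧ melonHeight y < (h : ℤ)}
      = NIcount p (2*n) h := by
  have hheight := fun y => height_lt_iff (n := n) h hp y
  rw [NIcount, ← Nat.card_eq_fintype_card]
  apply Nat.card_congr
  refine ⟨fun x => ⟨sysOfMelon p n x.1, ?_, ?_⟩, fun x => ⟨melonOfSys p n x.1, ?_, ?_⟩, ?_, ?_⟩
  · -- okF
    obtain ⟨⟨h0, hlast, hstep, hsep⟩, hht⟩ := x.2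
    intro i
    constructor
    · have := pval_sysOfMelon h0 hstep i (Fin.last (2*n))
      simpa using this.trans (hlast i)
    · intro t htm
      have := pval_sysOfMelon h0 hstep i ⟨t, by omega⟩
      simp only at this
      rw [this]
      exact (hheight x.1).1 hht i ⟨t, by omega⟩
  · -- ¬ cross
    obtain ⟨⟨h0, hlast, hstep, hsep⟩, hht⟩ := x.2
    rintro ⟨t, htm, i, j, hij, hv⟩
    unfold vals at hv
    rw [show t = (⟨t, by omega⟩ : Fin (2*n+1)).val from rfl] at hv
    rw [pval_sysOfMelon h0 hstep i, pval_sysOfMelon h0 hstep j] at hv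
    exact hsep i j hij _ hv
  · exact melonOfSys_isMelon x.2.1 x.2.2
  · rw [hheight]
    intro i t
    exact (x.2.1 i).2 t.val (by omega)
  · -- left inverse
    rintro ⟨y, hy, hht⟩
    apply Subtype.ext
    funext i u
    show pval (2*n) (2*(i:ℤ)) (sysOfMelon p n y i) u.val = y i u
    exact pval_sysOfMelon hy.1 hy.2.2.1 i u
  · -- right inverse
    rintro ⟨F, hok, hnc⟩
    apply Subtype.ext
    funext i k
    show sysOfMelon p n (melonOfSys p n F) i k = F i k
    unfold sysOfMelon melonOfSys
    have hv : ((k.succ : Fin (2*n+1)).val) = (k:ℕ) + 1 := rfl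
    have hv2 : ((k.castSucc : Fin (2*n+1)).val) = (k:ℕ) := rfl
    rw [hv, hv2, pval_succ _ _ k.isLt, Fin.eta]
    rcases stepv_cases (F i k) with hs | hs
    · have hb : F i k = true := by
        cases hb2 : F i k
        · rw [hb2] at hs; simp [stepv] at hs
        · rfl
      rw [hb]
      simp [stepv]
    · have hb : F i k = false := by
        cases hb2 : F i k
        · rfl
        · rw [hb2] at hs; simp [stepv] at hs
      rw [hb]
      simp [stepv]


lemma det_eq_zero_of_neg_row {p : ℕ} (G : Matrix (Fin p) (Fin p) ℤ) (r1 r2 : Fin p)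
    (hne : r1 ≠ r2) (hrow : (-1 : ℤ) • (G r2) = G r1) : Matrix.det G = 0 := by
  have h0 : Matrix.updateRow G r1 ((-1:ℤ) • G r2) = G := by
    rw [hrow, Matrix.updateRow_eq_self]
  have h1 : Matrix.det (Matrix.updateRow G r1 ((-1:ℤ) • G r2))
      = (-1) * Matrix.det (Matrix.updateRow G r1 (G r2)) := by
    rw [Matrix.det_updateRow_smul]
  have h2 : Matrix.det (Matrix.updateRow G r1 (G r2)) = 0 := by
    apply Matrix.det_zero_of_row_eq hne
    rw [Matrix.updateRow_self, Matrix.updateRow_ne (Ne.symm hne)]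
  rw [← h0, h1, h2]
  ring

/-! ### entries in the non-degenerate case -/

lemma entry_eq (p n h : ℕ) (hph : 2*p - 1 ≤ h) (i j : Fin p) :
    (belowCount (2*n) h (2*(i:ℤ)) (2*(j:ℤ)) : ℤ)
      = (ichoose (2*n) ((n:ℤ) + j - i) : ℤ) - (ichoose (2*n) ((n:ℤ) + h - i - j) : ℤ) := by
  have hip := i.isLt
  have hjp := j.isLt
  have hi : 2*(i:ℤ) < (h:ℤ) := by
    have : ((i:ℕ):ℤ) < p := by exact_mod_cast hip
    omega
  have hj : 2*(j:ℤ) < (h:ℤ) := by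
    have : ((j:ℕ):ℤ) < p := by exact_mod_cast hjp
    omega
  rw [belowCount_eq_sub _ _ hi hj]
  rw [endCount_eq' (2*(i:ℤ)) (2*(j:ℤ)) ((n:ℤ) + j - i) (by push_cast; ring)]
  rw [endCount_eq' (2*(h:ℤ) - 2*(i:ℤ)) (2*(j:ℤ)) ((n:ℤ) + i + j - h) (by push_cast; ring)]
  have hsym := ichoose_symm n ((i:ℤ) + j - h)
  rw [show (n:ℤ) + ((i:ℤ) + j - h) = (n:ℤ) + i + j - h by ring,
    show (n:ℤ) - ((i:ℤ) + j - h) = (n:ℤ) + h - i - j by ring] at hsym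
  rw [hsym]

end
end Melon

open Finset

set_option maxHeartbeats 1000000 in
/-- The number of `p`-watermelons of length `2n` with height `< h` (no restriction on
the depth) equals `det_{0 ≤ i,j < p} ( C(2n, n+i-j) - C(2n, n+h-i-j) )`. -/
theorem stmt2 (p n h : ℕ) (hp : 0 < p) (hn : 0 < n) (hh : 0 < h) :
    (Nat.card {y : Fin p → Fin (2*n+1) → ℤ //
        IsMelon p n y ∧ melonHeight y < (h : ℤ)} : ℤ) =
      Matrix.det (Matrix.of fun i j : Fin p =>
        (ichoose (2*n) ((n : ℤ) + (i : ℤ) - (j : ℤ)) : ℤ)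
          - (ichoose (2*n) ((n : ℤ) + (h : ℤ) - (i : ℤ) - (j : ℤ)) : ℤ)) := by
  classical
  rcases le_or_gt (2*p - 1) h with hcase | hcase
  · -- non-degenerate case
    rw [Melon.melon_equiv p n h hp, Melon.lgv_det]
    have hmat : (Matrix.of fun i j : Fin p =>
          (Melon.belowCount (2*n) h (2*(i:ℤ)) (2*(j:ℤ)) : ℤ))
        = Matrix.transpose (Matrix.of fun i j : Fin p =>
            (ichoose (2*n) ((n : ℤ) + (i : ℤ) - (j : ℤ)) : ℤ)
              - (ichoose (2*n) ((n : ℤ) + (h : ℤ) - (i : ℤ) - (j : ℤ)) : ℤ)) := by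
      ext i j
      simp only [Matrix.of_apply, Matrix.transpose_apply]
      rw [Melon.entry_eq p n h hcase i j]
      rw [show (n:ℤ) + (h:ℤ) - (j:ℤ) - (i:ℤ) = (n:ℤ) + (h:ℤ) - (i:ℤ) - (j:ℤ) by ring]
    rw [hmat, Matrix.det_transpose]
  · -- degenerate case : both sides vanish
    have hLHS : Nat.card {y : Fin p → Fin (2*n+1) → ℤ //
        IsMelon p n y ∧ melonHeight y < (h : ℤ)} = 0 := by
      have : IsEmpty {y : Fin p → Fin (2*n+1) → ℤ //
          IsMelon p n y ∧ melonHeight y < (h : ℤ)} := by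
        constructor
        rintro ⟨y, hy, hht⟩
        have h1 := (Melon.height_lt_iff (n := n) h hp y).1 hht ⟨p-1, by omega⟩ 0
        have h2 := hy.1 ⟨p-1, by omega⟩
        rw [h2] at h1
        have : ((p:ℤ) - 1) * 2 < h := by
          have : ((⟨p-1, by omega⟩ : Fin p) : ℤ) = (p:ℤ) - 1 := by
            simp
            omega
          rw [this] at h1
          omega
        omega
      simp [Nat.card_of_isEmpty]
    rw [hLHS]
    push_cast
    rcases Nat.even_or_odd h with ⟨k, hk⟩ | ⟨k, hk⟩
    · -- h = 2k, zero row k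
      have hkp : k < p := by omega
      symm
      apply Matrix.det_eq_zero_of_row_eq_zero (⟨k, hkp⟩ : Fin p)
      intro j
      simp only [Matrix.of_apply]
      have hv : ((⟨k, hkp⟩ : Fin p) : ℤ) = (k:ℤ) := by simp
      rw [hv]
      rw [show (n:ℤ) + (h:ℤ) - (k:ℤ) - (j:ℤ) = (n:ℤ) + (k:ℤ) - (j:ℤ) by
        have : (h:ℤ) = 2*k := by omega
        rw [this]; ring]
      ring
    · -- h = 2k+1, rows k and k+1 are opposite
      have hkp : k + 1 < p := by omega
      set G : Matrix (Fin p) (Fin p) ℤ := Matrix.of fun i j : Fin p =>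
        (ichoose (2*n) ((n : ℤ) + (i : ℤ) - (j : ℤ)) : ℤ)
          - (ichoose (2*n) ((n : ℤ) + (h : ℤ) - (i : ℤ) - (j : ℤ)) : ℤ) with hGdef
      have hv1 : ((⟨k, by omega⟩ : Fin p) : ℤ) = (k:ℤ) := by simp
      have hv2 : ((⟨k+1, hkp⟩ : Fin p) : ℤ) = (k:ℤ) + 1 := by simp
      have hne : (⟨k, by omega⟩ : Fin p) ≠ (⟨k+1, hkp⟩ : Fin p) := by
        simp [Fin.ext_iff]
      have hrow : (-1 : ℤ) • (G (⟨k+1, hkp⟩ : Fin p)) = G (⟨k, by omega⟩ : Fin p) := by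
        funext j
        simp only [Pi.smul_apply, smul_eq_mul, hGdef, Matrix.of_apply]
        rw [hv1, hv2]
        rw [show (n:ℤ) + ((k:ℤ)+1) - (j:ℤ) = (n:ℤ) + (h:ℤ) - (k:ℤ) - (j:ℤ) by
          have : (h:ℤ) = 2*k+1 := by omega
          rw [this]; ring]
        rw [show (n:ℤ) + (h:ℤ) - ((k:ℤ)+1) - (j:ℤ) = (n:ℤ) + (k:ℤ) - (j:ℤ) by
          have : (h:ℤ) = 2*k+1 := by omega
          rw [this]; ring]
        ring
      exact (Melon.det_eq_zero_of_neg_row G _ _ hne hrow).symm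
end

section
/- For all positive integers p and n, the p×p determinant det_{0≤i,j<p}( C(2n, n+i−j) ) equals C(2n,n)^p · Π_{i=0}^{p−1} [ i! · (2n+i)!/(2n)! · ( n!/(n+i)! )² ], where C(a,b) denotes the binomial coefficient. -/
open scoped BigOperators
open Filter

namespace Stmt3Aux
open Matrix Equiv





def e2 (m : ℕ) : Fin 2 ⊕ Fin m ≃ Fin (m+2) where
  toFun := Sum.elim (fun a => if a.val = 0 then ⟨0, by omega⟩ else ⟨m+1, by omega⟩)
    (fun k => ⟨k.val + 1, by omega⟩)
  invFun x := if h : x.val = 0 then Sum.inl 0 else if h2 : x.val = m+1 then Sum.inl 1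
    else Sum.inr ⟨x.val - 1, by omega⟩
  left_inv := by
    rintro (⟨av, ha⟩ | ⟨kv, hk⟩)
    · interval_cases av <;> simp
    · have : kv ≠ m := by omega
      simp [this]
      
  right_inv := by
    rintro ⟨xv, hx⟩
    dsimp only
    by_cases h : xv = 0
    · subst h; simp
    · by_cases h2 : xv = m+1
      · subst h2; rw [dif_neg (by omega), dif_pos rfl]; simp
      · rw [dif_neg (by omega), dif_neg (by omega)]
        simp only [Sum.elim_inr]
        exact Fin.ext (by simp; omega)

def eZ (m : ℕ) : Fin 1 ⊕ Fin m ≃ Fin (m+1) where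
  toFun := Sum.elim (fun _ => ⟨0, by omega⟩) (fun k => ⟨k.val+1, by omega⟩)
  invFun x := if h : x.val = 0 then Sum.inl 0 else Sum.inr ⟨x.val - 1, by omega⟩
  left_inv := by
    rintro (⟨av, ha⟩ | ⟨kv, hk⟩)
    · interval_cases av; simp
    · simp


  right_inv := by
    rintro ⟨xv, hx⟩
    dsimp only
    by_cases h : xv = 0
    · subst h; simp
    · rw [dif_neg (by omega)]
      exact Fin.ext (by simp; omega)

def eL (m : ℕ) : Fin 1 ⊕ Fin m ≃ Fin (m+1) where
  toFun := Sum.elim (fun _ => ⟨m, by omega⟩) (fun k => ⟨k.val, by omega⟩)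
  invFun x := if h : x.val = m then Sum.inl 0 else Sum.inr ⟨x.val, by omega⟩
  left_inv := by
    rintro (⟨av, ha⟩ | ⟨kv, hk⟩)
    · interval_cases av; simp
    · simp [show kv ≠ m by omega]

  right_inv := by
    rintro ⟨xv, hx⟩
    dsimp only
    by_cases h : xv = m
    · subst h; simp
    · rw [dif_neg (by omega)]
      rfl

private lemma corner {m : ℕ} (S : Matrix (Fin m) (Fin m) ℚ) [Invertible S]
    (P : Matrix (Fin 2) (Fin 2) ℚ) (Q : Matrix (Fin 2) (Fin m) ℚ) (R : Matrix (Fin m) (Fin 2) ℚ)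
    (a b : Fin 2) :
    (Matrix.fromBlocks (Matrix.of fun _ _ : Fin 1 => P a b) (Matrix.of fun _ l => Q a l)
      (Matrix.of fun (k : Fin m) (_ : Fin 1) => R k b) S).det = S.det * (P - Q * ⅟S * R) a b := by
  rw [Matrix.det_fromBlocks₂₂]
  congr 1
  rw [Matrix.det_fin_one]
  simp [Matrix.sub_apply, Matrix.mul_apply]

private lemma subdet {m : ℕ} (B : Matrix (Fin (m+1)) (Fin (m+1)) ℚ)
    (e f : Fin 1 ⊕ Fin m ≃ Fin (m+1)) :
    (B.submatrix e f).det = Perm.sign (e.trans f.symm) * B.det := by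
  have h : B.submatrix e f = (B.submatrix f f).submatrix (e.trans f.symm) id := by
    ext i j; simp [Matrix.submatrix_apply]
  rw [h, Matrix.det_permute, Matrix.det_submatrix_equiv_self]

lemma dj {m : ℕ} (A : Matrix (Fin (m+2)) (Fin (m+2)) ℚ)
    (hS : (Matrix.of fun i j : Fin m => A ⟨i.val+1, by omega⟩ ⟨j.val+1, by omega⟩).det ≠ 0) :
    A.det * (Matrix.of fun i j : Fin m => A ⟨i.val+1, by omega⟩ ⟨j.val+1, by omega⟩).det =
      (Matrix.of fun i j : Fin (m+1) => A ⟨i.val, by omega⟩ ⟨j.val, by omega⟩).det *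
      (Matrix.of fun i j : Fin (m+1) => A ⟨i.val+1, by omega⟩ ⟨j.val+1, by omega⟩).det -
      (Matrix.of fun i j : Fin (m+1) => A ⟨i.val, by omega⟩ ⟨j.val+1, by omega⟩).det *
      (Matrix.of fun i j : Fin (m+1) => A ⟨i.val+1, by omega⟩ ⟨j.val, by omega⟩).det := by
  classical
  set S : Matrix (Fin m) (Fin m) ℚ :=
    Matrix.of fun i j : Fin m => A ⟨i.val+1, by omega⟩ ⟨j.val+1, by omega⟩ with hSdef
  haveI : Invertible S := Matrix.invertibleOfIsUnitDet S (isUnit_iff_ne_zero.mpr hS)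
  set P : Matrix (Fin 2) (Fin 2) ℚ :=
    Matrix.of fun a b => A (e2 m (Sum.inl a)) (e2 m (Sum.inl b)) with hP
  set Q : Matrix (Fin 2) (Fin m) ℚ :=
    Matrix.of fun a k => A (e2 m (Sum.inl a)) (e2 m (Sum.inr k)) with hQ
  set R : Matrix (Fin m) (Fin 2) ℚ :=
    Matrix.of fun k b => A (e2 m (Sum.inr k)) (e2 m (Sum.inl b)) with hR
  set X : Matrix (Fin 2) (Fin 2) ℚ := P - Q * ⅟S * R with hX
  have hA : A.det = S.det * X.det := by
    have h1 : A.submatrix (e2 m) (e2 m) = Matrix.fromBlocks P Q R S := by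
      ext i j
      rcases i with (a | k) <;> rcases j with (b | l) <;> rfl
    rw [← Matrix.det_submatrix_equiv_self (e2 m) A, h1, Matrix.det_fromBlocks₂₂]
  -- the four minors
  have key : ∀ (B : Matrix (Fin (m+1)) (Fin (m+1)) ℚ) (e f : Fin 1 ⊕ Fin m ≃ Fin (m+1))
      (a b : Fin 2),
      (∀ x y, B (e (Sum.inl x)) (f (Sum.inl y)) = P a b) →
      (∀ x l, B (e (Sum.inl x)) (f (Sum.inr l)) = Q a l) →
      (∀ k y, B (e (Sum.inr k)) (f (Sum.inl y)) = R k b) →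
      (∀ k l, B (e (Sum.inr k)) (f (Sum.inr l)) = S k l) →
      (Perm.sign (e.trans f.symm) : ℚ) * B.det = S.det * X a b := by
    intro B e f a b h1 h2 h3 h4
    have hfb : B.submatrix e f = Matrix.fromBlocks (Matrix.of fun _ _ : Fin 1 => P a b)
        (Matrix.of fun _ l => Q a l) (Matrix.of fun (k : Fin m) (_ : Fin 1) => R k b) S := by
      ext i j
      rcases i with (x | k) <;> rcases j with (y | l) <;>
        simp [Matrix.fromBlocks, Matrix.submatrix_apply, h1, h2, h3, h4]
    rw [← subdet B e f, hfb, corner]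
  have k1 := key (Matrix.of fun i j : Fin (m+1) => A ⟨i.val, by omega⟩ ⟨j.val, by omega⟩)
      (eZ m) (eZ m) 0 0 (fun x y => by rw [hP]; rfl) (fun x l => by rw [hQ]; rfl)
      (fun k y => by rw [hR]; rfl) (fun k l => by rw [hSdef]; rfl)
  have k2 := key (Matrix.of fun i j : Fin (m+1) => A ⟨i.val+1, by omega⟩ ⟨j.val+1, by omega⟩)
      (eL m) (eL m) 1 1 (fun x y => by rw [hP]; rfl) (fun x l => by rw [hQ]; rfl)
      (fun k y => by rw [hR]; rfl) (fun k l => by rw [hSdef]; rfl)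
  have k3 := key (Matrix.of fun i j : Fin (m+1) => A ⟨i.val, by omega⟩ ⟨j.val+1, by omega⟩)
      (eZ m) (eL m) 0 1 (fun x y => by rw [hP]; rfl) (fun x l => by rw [hQ]; rfl)
      (fun k y => by rw [hR]; rfl) (fun k l => by rw [hSdef]; rfl)
  have k4 := key (Matrix.of fun i j : Fin (m+1) => A ⟨i.val+1, by omega⟩ ⟨j.val, by omega⟩)
      (eL m) (eZ m) 1 0 (fun x y => by rw [hP]; rfl) (fun x l => by rw [hQ]; rfl)
      (fun k y => by rw [hR]; rfl) (fun k l => by rw [hSdef]; rfl)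
  have sign1 : ∀ e : Fin 1 ⊕ Fin m ≃ Fin (m+1), (Perm.sign (e.trans e.symm) : ℚ) = 1 := by
    intro e
    rw [Equiv.self_trans_symm]
    simp
  rw [sign1, one_mul] at k1 k2
  have hsym : (eL m).trans (eZ m).symm = ((eZ m).trans (eL m).symm).symm := by
    ext x
    simp
  have hs2 : (Perm.sign ((eZ m).trans (eL m).symm) : ℚ) *
      (Perm.sign ((eL m).trans (eZ m).symm) : ℚ) = 1 := by
    rw [hsym, Equiv.Perm.sign_symm]
    rcases Int.units_eq_one_or (Perm.sign ((eZ m).trans (eL m).symm)) with h | h <;>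
      rw [h] <;> norm_num
  have k34 : (Matrix.of fun i j : Fin (m+1) => A ⟨i.val, by omega⟩ ⟨j.val+1, by omega⟩).det *
      (Matrix.of fun i j : Fin (m+1) => A ⟨i.val+1, by omega⟩ ⟨j.val, by omega⟩).det =
      (S.det * X 0 1) * (S.det * X 1 0) := by
    calc (Matrix.of fun i j : Fin (m+1) => A ⟨i.val, by omega⟩ ⟨j.val+1, by omega⟩).det *
        (Matrix.of fun i j : Fin (m+1) => A ⟨i.val+1, by omega⟩ ⟨j.val, by omega⟩).det
        = ((Perm.sign ((eZ m).trans (eL m).symm) : ℚ) *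
            (Perm.sign ((eL m).trans (eZ m).symm) : ℚ)) *
          ((Matrix.of fun i j : Fin (m+1) => A ⟨i.val, by omega⟩ ⟨j.val+1, by omega⟩).det *
           (Matrix.of fun i j : Fin (m+1) => A ⟨i.val+1, by omega⟩ ⟨j.val, by omega⟩).det) := by
          rw [hs2]; ring
      _ = ((Perm.sign ((eZ m).trans (eL m).symm) : ℚ) *
            (Matrix.of fun i j : Fin (m+1) => A ⟨i.val, by omega⟩ ⟨j.val+1, by omega⟩).det) *
          ((Perm.sign ((eL m).trans (eZ m).symm) : ℚ) *
            (Matrix.of fun i j : Fin (m+1) => A ⟨i.val+1, by omega⟩ ⟨j.val, by omega⟩).det) := by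
          ring
      _ = (S.det * X 0 1) * (S.det * X 1 0) := by rw [k3, k4]
  rw [hA, Matrix.det_fin_two X, k1, k2, k34]
  ring







def sf : ℕ → ℕ
  | 0 => 1
  | m+1 => sf m * Nat.factorial m

lemma sf_succ (m : ℕ) : sf (m+1) = sf m * Nat.factorial m := rfl

lemma sf_pos (m : ℕ) : 0 < sf m := by
  induction m with
  | zero => simp [sf]
  | succ k ih => exact Nat.mul_pos ih k.factorial_pos

lemma sfQ_ne (m : ℕ) : (sf m : ℚ) ≠ 0 := by exact_mod_cast (sf_pos m).ne'

lemma sfQ_pos (m : ℕ) : (0:ℚ) < (sf m : ℚ) := by exact_mod_cast sf_pos m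

lemma sf_ne (m : ℕ) : sf m ≠ 0 := (sf_pos m).ne'

lemma fQ_ne (m : ℕ) : (m.factorial : ℚ) ≠ 0 := by exact_mod_cast m.factorial_pos.ne'

def G (u v p : ℕ) : ℚ :=
  ((sf (u+v+p) : ℚ) * sf v * sf p * sf u) / ((sf (v+p) : ℚ) * sf (u+v) * sf (u+p))

lemma G_pos (u v p : ℕ) : 0 < G u v p := by
  unfold G
  apply div_pos
  · have := sfQ_pos (u+v+p); have := sfQ_pos v; have := sfQ_pos p; have := sfQ_pos u
    positivity
  · have := sfQ_pos (v+p); have := sfQ_pos (u+v); have := sfQ_pos (u+p)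
    positivity

lemma G_ne (u v p : ℕ) : G u v p ≠ 0 := (G_pos u v p).ne'

lemma G_symm (u v p : ℕ) : G u v p = G v u p := by
  unfold G
  rw [show v+u+p = u+v+p from by ring, show v+u = u+v from by ring]
  ring

lemma G_v0 (u p : ℕ) : G u 0 p = 1 := by
  unfold G
  rw [show u+0+p = u+p from by ring, show 0+p = p from by ring, show u+0 = u from by ring]
  rw [div_eq_one_iff_eq (by simp [sf_ne])]
  simp [sf]
  ring

lemma G_succ_p (u v p : ℕ) :
    G u v (p+1) = (((u+v+p).factorial : ℚ) * p.factorial) /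
      (((v+p).factorial : ℚ) * (u+p).factorial) * G u v p := by
  unfold G
  simp only [show u+v+(p+1) = (u+v+p)+1 from by ring, show v+(p+1) = (v+p)+1 from by ring,
    show u+(p+1) = (u+p)+1 from by ring, sf_succ]
  push_cast
  rw [div_mul_div_comm, div_eq_div_iff (by simp [mul_eq_zero, sf_ne, Nat.factorial_ne_zero])
    (by simp [mul_eq_zero, sf_ne, Nat.factorial_ne_zero])]
  ring

lemma G_succ_u (u w p : ℕ) :
    G (u+1) w p = ((u.factorial : ℚ) * (w+p).factorial) /
      ((w.factorial : ℚ) * (u+p).factorial) * G u (w+1) p := by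
  unfold G
  simp only [show u+1+w+p = (u+w+p)+1 from by ring, show u+(w+1)+p = (u+w+p)+1 from by ring,
    show u+w+1+p = (u+w+p)+1 from by ring,
    show u+1+w = (u+w)+1 from by ring, show u+(w+1) = (u+w)+1 from by ring,
    show u+1+p = (u+p)+1 from by ring, show w+1+p = (w+p)+1 from by ring, sf_succ]
  push_cast
  rw [div_mul_div_comm, div_eq_div_iff (by simp [mul_eq_zero, sf_ne, Nat.factorial_ne_zero])
    (by simp [mul_eq_zero, sf_ne, Nat.factorial_ne_zero])]
  ring





lemma keyG (t w q : ℕ) :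
    G (t+1) (w+1) (q+2) * G (t+1) (w+1) q =
      G (t+1) (w+1) (q+1) ^ 2 - G (t+2) w (q+1) * G t (w+2) (q+1) := by
  have h1 : G (t+1) (w+1) (q+2) = (((t+w+q+3).factorial : ℚ) * (q+1).factorial) /
      (((w+q+2).factorial : ℚ) * (t+q+2).factorial) * G (t+1) (w+1) (q+1) := by
    have h := G_succ_p (t+1) (w+1) (q+1)
    rw [show (q+1)+1 = q+2 from rfl, show t+1+(w+1)+(q+1) = t+w+q+3 from by ring,
      show w+1+(q+1) = w+q+2 from by ring, show t+1+(q+1) = t+q+2 from by ring] at h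
    exact h
  have h2 : G (t+1) (w+1) q = (((w+q+1).factorial : ℚ) * (t+q+1).factorial) /
      (((t+w+q+2).factorial : ℚ) * q.factorial) * G (t+1) (w+1) (q+1) := by
    have h := G_succ_p (t+1) (w+1) q
    rw [show t+1+(w+1)+q = t+w+q+2 from by ring,
      show w+1+q = w+q+1 from by ring, show t+1+q = t+q+1 from by ring] at h
    rw [h]
    field_simp
    try ring
  have h3 : G (t+2) w (q+1) = (((t+1).factorial : ℚ) * (w+q+1).factorial) /
      ((w.factorial : ℚ) * (t+q+2).factorial) * G (t+1) (w+1) (q+1) := by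
    have h := G_succ_u (t+1) w (q+1)
    rw [show (t+1)+1 = t+2 from rfl, show w+(q+1) = w+q+1 from by ring,
      show t+1+(q+1) = t+q+2 from by ring] at h
    exact h
  have h4 : G t (w+2) (q+1) = (((w+1).factorial : ℚ) * (t+q+1).factorial) /
      ((t.factorial : ℚ) * (w+q+2).factorial) * G (t+1) (w+1) (q+1) := by
    have h := G_succ_u t (w+1) (q+1)
    rw [show (w+1)+1 = w+2 from rfl, show w+1+(q+1) = w+q+2 from by ring,
      show t+(q+1) = t+q+1 from by ring] at h
    rw [h]
    field_simp
    try ring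
  rw [h1, h2, h3, h4]
  have e1 : ((t+w+q+3).factorial : ℚ) = (t+w+q+3) * (t+w+q+2).factorial := by
    rw [show t+w+q+3 = (t+w+q+2)+1 from by ring, Nat.factorial_succ]; push_cast; ring
  have e2 : ((w+q+2).factorial : ℚ) = (w+q+2) * (w+q+1).factorial := by
    rw [show w+q+2 = (w+q+1)+1 from by ring, Nat.factorial_succ]; push_cast; ring
  have e3 : ((t+q+2).factorial : ℚ) = (t+q+2) * (t+q+1).factorial := by
    rw [show t+q+2 = (t+q+1)+1 from by ring, Nat.factorial_succ]; push_cast; ring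
  have e4 : ((q+1).factorial : ℚ) = (q+1) * q.factorial := by
    rw [Nat.factorial_succ]; push_cast; ring
  have e5 : ((t+1).factorial : ℚ) = (t+1) * t.factorial := by
    rw [Nat.factorial_succ]; push_cast; ring
  have e6 : ((w+1).factorial : ℚ) = (w+1) * w.factorial := by
    rw [Nat.factorial_succ]; push_cast; ring
  rw [e1, e2, e3, e4, e5, e6]
  have n1 := fQ_ne (t+w+q+2)
  have n2 := fQ_ne (w+q+1)
  have n3 := fQ_ne (t+q+1)
  have n4 := fQ_ne q
  have n5 := fQ_ne t
  have n6 := fQ_ne w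
  have c1 : ((t:ℚ)+w+q+3) ≠ 0 := by positivity
  have c2 : ((w:ℚ)+q+2) ≠ 0 := by positivity
  have c3 : ((t:ℚ)+q+2) ≠ 0 := by positivity
  have c4 : ((q:ℚ)+1) ≠ 0 := by positivity
  have c5 : ((t:ℚ)+1) ≠ 0 := by positivity
  have c6 : ((w:ℚ)+1) ≠ 0 := by positivity
  field_simp
  ring



lemma G_zero (u v : ℕ) : G u v 0 = 1 := by
  unfold G
  rw [show u+v+0 = u+v from rfl, show v+0 = v from rfl, show u+0 = u from rfl]
  rw [div_eq_one_iff_eq (by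
    exact mul_ne_zero (mul_ne_zero (Nat.cast_ne_zero.2 (sf_ne _)) (Nat.cast_ne_zero.2 (sf_ne _)))
      (Nat.cast_ne_zero.2 (sf_ne _)))]
  simp only [show sf 0 = 1 from rfl, Nat.cast_one, mul_one]
  ring

lemma G_one (u v : ℕ) : G u v 1 = ((u+v).choose u : ℚ) := by
  unfold G
  rw [Nat.cast_choose ℚ (Nat.le_add_right u v), show u+v-u = v from by omega]
  simp only [sf_succ, show sf 0 = 1 from rfl, Nat.factorial_zero, Nat.cast_one, mul_one, one_mul]
  push_cast
  rw [div_eq_div_iff (by simp [mul_eq_zero, sf_ne, Nat.factorial_ne_zero])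
    (by simp [mul_eq_zero, sf_ne, Nat.factorial_ne_zero])]
  ring


lemma ichoose_of_nonneg {a : ℕ} {b : ℤ} (h : 0 ≤ b) : ichoose a b = a.choose b.toNat :=
  if_pos h

lemma ichoose_zero_of_neg {a : ℕ} {b : ℤ} (h : b < 0) : ichoose a b = 0 := if_neg (by omega)

lemma ichoose_zero_of_lt {a : ℕ} {b : ℤ} (h : (a:ℤ) < b) : ichoose a b = 0 := by
  rw [ichoose_of_nonneg (by omega)]
  exact Nat.choose_eq_zero_of_lt (by omega)

def Dm (n : ℕ) (s : ℤ) (p : ℕ) : Matrix (Fin p) (Fin p) ℚ :=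
  Matrix.of fun i j => (ichoose (2*n) ((n : ℤ) + s + (i : ℤ) - (j : ℤ)) : ℚ)

def DD (n : ℕ) (s : ℤ) (p : ℕ) : ℚ := (Dm n s p).det

noncomputable def Fz (n : ℕ) (s : ℤ) (p : ℕ) : ℚ :=
  if s.natAbs ≤ n then G (n + s.natAbs) (n - s.natAbs) p else if p = 0 then 1 else 0

lemma Fz_of_le {n : ℕ} {s : ℤ} (p : ℕ) (ha : s.natAbs ≤ n) :
    Fz n s p = G (n + s.natAbs) (n - s.natAbs) p := if_pos ha

lemma Fz_of_gt {n : ℕ} {s : ℤ} {p : ℕ} (ha : n < s.natAbs) (hp : p ≠ 0) :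
    Fz n s p = 0 := by
  unfold Fz
  rw [if_neg (by omega), if_neg hp]

lemma Fz_ne {n : ℕ} {s : ℤ} (p : ℕ) (ha : s.natAbs ≤ n) : Fz n s p ≠ 0 := by
  rw [Fz_of_le p ha]; exact G_ne _ _ _

-- determinant vanishes when the shift is too large
lemma DD_zero_of_gt {n : ℕ} {s : ℤ} {p : ℕ} (hp : 0 < p) (ha : n < s.natAbs) :
    DD n s p = 0 := by
  rcases lt_or_ge s 0 with hs | hs
  · -- s ≤ -(n+1) : entries vanish on and above the diagonal
    have h : (Dm n s p).BlockTriangular OrderDual.toDual := by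
      intro i j hij
      have : (i : ℤ) < (j : ℤ) := by exact_mod_cast hij
      simp only [Dm, Matrix.of_apply]
      rw [ichoose_zero_of_neg (by omega)]
      simp
    rw [DD, Matrix.det_of_lowerTriangular _ h]
    apply Finset.prod_eq_zero (Finset.mem_univ (⟨0, hp⟩ : Fin p))
    simp only [Dm, Matrix.of_apply]
    rw [ichoose_zero_of_neg (by omega)]
    simp
  · -- s ≥ n+1 : entries vanish on and below the diagonal
    have h : (Dm n s p).BlockTriangular id := by
      intro i j hij
      have : (j : ℤ) < (i : ℤ) := by exact_mod_cast hij
      simp only [Dm, Matrix.of_apply]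
      rw [ichoose_zero_of_lt (by omega)]
      simp
    rw [DD, Matrix.det_of_upperTriangular h]
    apply Finset.prod_eq_zero (Finset.mem_univ (⟨0, hp⟩ : Fin p))
    simp only [Dm, Matrix.of_apply]
    rw [ichoose_zero_of_lt (by omega)]
    simp

lemma DD_zero (n : ℕ) (s : ℤ) : DD n s 0 = 1 := Matrix.det_fin_zero

lemma DD_one (n : ℕ) (s : ℤ) : DD n s 1 = Fz n s 1 := by
  rw [DD, Matrix.det_fin_one]
  simp only [Dm, Matrix.of_apply]
  by_cases ha : s.natAbs ≤ n
  · rw [Fz_of_le 1 ha, G_one]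
    rw [show (((0 : Fin 1) : ℤ)) = 0 from rfl]
    rw [show (n : ℤ) + s + 0 - 0 = n + s from by ring]
    rw [ichoose_of_nonneg (by omega)]
    rw [show n + s.natAbs + (n - s.natAbs) = 2*n from by omega]
    rcases le_or_gt 0 s with hs | hs
    · congr 2
      omega
    · rw [show (n:ℤ) + s = ((n - s.natAbs : ℕ) : ℤ) from by omega]
      rw [Int.toNat_natCast]
      rw [show n - s.natAbs = 2*n - (n + s.natAbs) from by omega]
      rw [Nat.choose_symm (by omega)]
  · rw [Fz_of_gt (by omega) one_ne_zero]
    rw [show (((0 : Fin 1) : ℤ)) = 0 from rfl]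
    rw [show (n : ℤ) + s + 0 - 0 = n + s from by ring]
    rcases le_or_gt 0 s with hs | hs
    · rw [ichoose_zero_of_lt (by omega)]; simp
    · rw [ichoose_zero_of_neg (by omega)]; simp





lemma Frec {n : ℕ} (hn : 0 < n) (s : ℤ) (m : ℕ) (ha : s.natAbs ≤ n) :
    Fz n s (m+2) * Fz n s m =
      Fz n s (m+1) ^ 2 - Fz n (s-1) (m+1) * Fz n (s+1) (m+1) := by
  rcases eq_or_lt_of_le ha with hae | halt
  · -- |s| = n
    rcases le_or_gt 0 s with hs | hs
    · -- s = n
      have hsn : s = (n : ℤ) := by omega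
      subst hsn
      rw [Fz_of_le (m+2) (by omega), Fz_of_le m (by omega), Fz_of_le (m+1) (by omega),
        Fz_of_le (s := (n:ℤ)-1) (m+1) (by omega), Fz_of_gt (s := (n:ℤ)+1) (by omega) (by omega)]
      rw [show n - ((n:ℤ)).natAbs = 0 from by omega]
      rw [G_v0, G_v0, G_v0]
      ring
    · -- s = -n
      have hsn : s = -(n : ℤ) := by omega
      subst hsn
      rw [Fz_of_le (m+2) (by omega), Fz_of_le m (by omega), Fz_of_le (m+1) (by omega),
        Fz_of_le (s := -(n:ℤ)+1) (m+1) (by omega), Fz_of_gt (s := -(n:ℤ)-1) (by omega) (by omega)]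
      rw [show n - (-(n:ℤ)).natAbs = 0 from by omega]
      rw [G_v0, G_v0, G_v0]
      ring
  · -- |s| < n
    rcases lt_trichotomy s 0 with hs | hs | hs
    · -- s < 0
      rw [Fz_of_le (m+2) (by omega), Fz_of_le m (by omega), Fz_of_le (m+1) (by omega),
        Fz_of_le (s := s-1) (m+1) (by omega), Fz_of_le (s := s+1) (m+1) (by omega)]
      rw [show (s-1).natAbs = s.natAbs+1 from by omega,
        show (s+1).natAbs = s.natAbs-1 from by omega]
      rw [show n + s.natAbs = (n + s.natAbs - 1)+1 from by omega,
        show n - s.natAbs = (n - s.natAbs - 1)+1 from by omega,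
        show n + (s.natAbs+1) = (n + s.natAbs - 1)+2 from by omega,
        show n - (s.natAbs+1) = n - s.natAbs - 1 from by omega,
        show n + (s.natAbs-1) = n + s.natAbs - 1 from by omega,
        show n - (s.natAbs-1) = (n - s.natAbs - 1)+2 from by omega]
      linear_combination keyG (n + s.natAbs - 1) (n - s.natAbs - 1) m
    · -- s = 0
      subst hs
      rw [Fz_of_le (m+2) (by omega), Fz_of_le m (by omega), Fz_of_le (m+1) (by omega),
        Fz_of_le (s := (0:ℤ)-1) (m+1) (by omega), Fz_of_le (s := (0:ℤ)+1) (m+1) (by omega)]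
      rw [show ((0:ℤ)-1).natAbs = 1 from by omega, show ((0:ℤ)+1).natAbs = 1 from by omega,
        show ((0:ℤ)).natAbs = 0 from by omega]
      rw [show n + 0 = (n-1)+1 from by omega, show n - 0 = (n-1)+1 from by omega,
        show n + 1 = (n-1)+2 from by omega, show n - 1 = n-1 from rfl]
      linear_combination keyG (n-1) (n-1) m -
        G ((n-1)+2) (n-1) (m+1) * (G_symm (n-1) ((n-1)+2) (m+1))
    · -- s > 0
      rw [Fz_of_le (m+2) (by omega), Fz_of_le m (by omega), Fz_of_le (m+1) (by omega),
        Fz_of_le (s := s-1) (m+1) (by omega), Fz_of_le (s := s+1) (m+1) (by omega)]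
      rw [show (s-1).natAbs = s.natAbs-1 from by omega,
        show (s+1).natAbs = s.natAbs+1 from by omega]
      rw [show n + s.natAbs = (n + s.natAbs - 1)+1 from by omega,
        show n - s.natAbs = (n - s.natAbs - 1)+1 from by omega,
        show n + (s.natAbs+1) = (n + s.natAbs - 1)+2 from by omega,
        show n - (s.natAbs+1) = n - s.natAbs - 1 from by omega,
        show n + (s.natAbs-1) = n + s.natAbs - 1 from by omega,
        show n - (s.natAbs-1) = (n - s.natAbs - 1)+2 from by omega]
      linear_combination keyG (n + s.natAbs - 1) (n - s.natAbs - 1) m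





lemma DD_eq_Fz (n : ℕ) (hn : 0 < n) : ∀ p (s : ℤ), DD n s p = Fz n s p := by
  intro p
  induction p using Nat.strong_induction_on with
  | _ p IH =>
    match p, IH with
    | 0, _ =>
      intro s
      rw [DD_zero]
      unfold Fz
      split
      · exact (G_zero _ _).symm
      · simp
    | 1, _ => exact fun s => DD_one n s
    | (m+2), IH =>
      intro s
      by_cases ha : s.natAbs ≤ n
      · have hSm : DD n s m ≠ 0 := by rw [IH m (by omega) s]; exact Fz_ne m ha
        have h0 : (Matrix.of fun i j : Fin m =>
            Dm n s (m+2) ⟨i.val+1, by omega⟩ ⟨j.val+1, by omega⟩) = Dm n s m := by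
          ext i j
          simp only [Dm, Matrix.of_apply]
          congr 2
          all_goals (push_cast; ring)
        have h1 : (Matrix.of fun i j : Fin (m+1) =>
            Dm n s (m+2) ⟨i.val, by omega⟩ ⟨j.val, by omega⟩) = Dm n s (m+1) := rfl
        have h2 : (Matrix.of fun i j : Fin (m+1) =>
            Dm n s (m+2) ⟨i.val+1, by omega⟩ ⟨j.val+1, by omega⟩) = Dm n s (m+1) := by
          ext i j
          simp only [Dm, Matrix.of_apply]
          congr 2
          all_goals (push_cast; ring)
        have h3 : (Matrix.of fun i j : Fin (m+1) =>
            Dm n s (m+2) ⟨i.val, by omega⟩ ⟨j.val+1, by omega⟩) = Dm n (s-1) (m+1) := by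
          ext i j
          simp only [Dm, Matrix.of_apply]
          congr 2
          all_goals (push_cast; ring)
        have h4 : (Matrix.of fun i j : Fin (m+1) =>
            Dm n s (m+2) ⟨i.val+1, by omega⟩ ⟨j.val, by omega⟩) = Dm n (s+1) (m+1) := by
          ext i j
          simp only [Dm, Matrix.of_apply]
          congr 2
          all_goals (push_cast; ring)
        have hdj := dj (Dm n s (m+2)) (by rw [h0]; exact hSm)
        rw [h0, h1, h2, h3, h4] at hdj
        have hdj' : DD n s (m+2) * DD n s m =
            DD n s (m+1) * DD n s (m+1) - DD n (s-1) (m+1) * DD n (s+1) (m+1) := hdj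
        rw [IH m (by omega) s, IH (m+1) (by omega) s, IH (m+1) (by omega) (s-1),
          IH (m+1) (by omega) (s+1)] at hdj'
        have hrec := Frec hn s m ha
        apply mul_right_cancel₀ (Fz_ne (s := s) m ha)
        rw [hdj', hrec]
        ring
      · rw [DD_zero_of_gt (by omega) (by omega), Fz_of_gt (by omega) (by omega)]

lemma G_nn (n p : ℕ) : G n n p = ((2*n).choose n : ℚ)^p *
    ∏ i ∈ Finset.range p,
      ((i.factorial : ℚ) * (((2*n+i).factorial : ℚ) / ((2*n).factorial : ℚ))
        * ((n.factorial : ℚ) / ((n+i).factorial : ℚ))^2) := by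
  induction p with
  | zero => simp [G_zero]
  | succ q ih =>
    have h := G_succ_p n n q
    rw [show n+n+q = 2*n+q from by ring] at h
    have hc : ((2*n).choose n : ℚ) = (2*n).factorial / (n.factorial * n.factorial) := by
      rw [Nat.cast_choose ℚ (by omega), show 2*n-n = n from by omega]
    rw [Finset.prod_range_succ, h, ih, pow_succ, hc]
    have n1 := fQ_ne (2*n+q)
    have n2 := fQ_ne q
    have n3 := fQ_ne (n+q)
    have n4 := fQ_ne n
    have n5 := fQ_ne (2*n)
    field_simp
    try ring



open scoped BigOperators

end Stmt3Aux

/-- `det_{0 ≤ i,j < p} ( C(2n, n+i-j) ) =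
C(2n,n)^p · Π_{i=0}^{p-1} [ i! · (2n+i)!/(2n)! · (n!/(n+i)!)² ]`. -/
theorem stmt3 (p n : ℕ) (hp : 0 < p) (hn : 0 < n) :
    Matrix.det (Matrix.of fun i j : Fin p =>
        (ichoose (2*n) ((n : ℤ) + (i : ℤ) - (j : ℤ)) : ℚ)) =
      ((2*n).choose n : ℚ)^p *
        ∏ i ∈ Finset.range p,
          ((i.factorial : ℚ) * (((2*n+i).factorial : ℚ) / ((2*n).factorial : ℚ))
            * ((n.factorial : ℚ) / ((n+i).factorial : ℚ))^2) := by
  have hm : (Matrix.of fun i j : Fin p =>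
      (ichoose (2*n) ((n : ℤ) + (i : ℤ) - (j : ℤ)) : ℚ)) = Stmt3Aux.Dm n 0 p := by
    ext i j
    simp only [Stmt3Aux.Dm, Matrix.of_apply]
    congr 2
    all_goals ring
  rw [hm]
  have h := Stmt3Aux.DD_eq_Fz n hn p 0
  rw [show (Stmt3Aux.Dm n 0 p).det = Stmt3Aux.DD n 0 p from rfl, h,
    Stmt3Aux.Fz_of_le p (by simp)]
  rw [show n + (0:ℤ).natAbs = n from by simp, show n - (0:ℤ).natAbs = n from by simp]
  exact Stmt3Aux.G_nn n p
end

section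
/- Let ν ≥ 0 be an integer and μ > 0 a real number. Then, as n → ∞, Σ_{h≥1} h^ν e^{−μh²/n} = (1/2) Γ((ν+1)/2) (n/μ)^{(ν+1)/2} + (−1)^ν B_{ν+1}/(ν+1) + O(n^{−1}), where Γ denotes the gamma function and B_m denotes the m-th Bernoulli number defined via Σ_{j≥0} B_j t^j/j! = t/(e^t − 1). -/
open scoped BigOperators
open Filter Asymptotics MeasureTheory Set

namespace Stmt7Aux

noncomputable section

/-- Bernoulli number as a real. -/
def bern (k : ℕ) : ℝ := ((_root_.bernoulli k : ℚ) : ℝ)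

/-- Bernoulli polynomial over ℝ. -/
def bpoly (k : ℕ) : Polynomial ℝ := (Polynomial.bernoulli k).map (algebraMap ℚ ℝ)

lemma bpoly_zero : bpoly 0 = 1 := by
  simp [bpoly, Polynomial.bernoulli_zero]

lemma bpoly_deriv (k : ℕ) :
    (bpoly (k+1)).derivative = Polynomial.C ((k:ℝ)+1) * bpoly k := by
  unfold bpoly
  rw [Polynomial.derivative_map, Polynomial.derivative_bernoulli_add_one]
  rw [Polynomial.map_mul]
  congr 1
  push_cast
  simp [Polynomial.map_natCast]

lemma bpoly_eval_zero (k : ℕ) : (bpoly k).eval 0 = bern k := by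
  unfold bpoly bern
  rw [Polynomial.eval_map]
  rw [Polynomial.eval₂_at_zero]
  simp [Polynomial.coeff_zero_eq_eval_zero]

lemma bpoly_eval_one (k : ℕ) (hk : k ≠ 1) : (bpoly k).eval 1 = bern k := by
  unfold bpoly bern
  rw [Polynomial.eval_map]
  have : Polynomial.eval₂ (algebraMap ℚ ℝ) ((algebraMap ℚ ℝ) 1) (Polynomial.bernoulli k)
      = (algebraMap ℚ ℝ) ((Polynomial.bernoulli k).eval 1) := by
    rw [Polynomial.eval₂_at_apply]
  rw [map_one] at this
  rw [this, Polynomial.bernoulli_eval_one, bernoulli_eq_bernoulli'_of_ne_one hk]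
  simp

/-- The periodized Bernoulli function divided by `k!`. -/
def Qb (k : ℕ) (x : ℝ) : ℝ := (bpoly k).eval (Int.fract x) / (k.factorial : ℝ)

/-- A bound for `Qb k` on all of `ℝ`. -/
def QbBound (k : ℕ) : ℝ :=
  (∑ i ∈ Finset.range ((bpoly k).natDegree + 1), |(bpoly k).coeff i|) / (k.factorial : ℝ)

lemma abs_Qb_le (k : ℕ) (x : ℝ) : |Qb k x| ≤ QbBound k := by
  have h0 : (0:ℝ) ≤ Int.fract x := Int.fract_nonneg x
  have h1 : Int.fract x ≤ 1 := (Int.fract_lt_one x).le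
  have heval : (bpoly k).eval (Int.fract x)
      = ∑ i ∈ Finset.range ((bpoly k).natDegree + 1), (bpoly k).coeff i * (Int.fract x) ^ i :=
    Polynomial.eval_eq_sum_range _
  have habs : |(bpoly k).eval (Int.fract x)|
      ≤ ∑ i ∈ Finset.range ((bpoly k).natDegree + 1), |(bpoly k).coeff i| := by
    rw [heval]
    refine (Finset.abs_sum_le_sum_abs _ _).trans ?_
    refine Finset.sum_le_sum fun i _ => ?_
    rw [abs_mul]
    have : |Int.fract x ^ i| ≤ 1 := by
      rw [abs_pow]
      exact pow_le_one₀ (abs_nonneg _) (by rwa [abs_of_nonneg h0])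
    calc |(bpoly k).coeff i| * |Int.fract x ^ i|
        ≤ |(bpoly k).coeff i| * 1 := by gcongr
      _ = _ := mul_one _
  have hfac : (0:ℝ) < (k.factorial : ℝ) := by positivity
  unfold Qb QbBound
  rw [abs_div, abs_of_pos hfac]
  gcongr

lemma measurable_Qb (k : ℕ) : Measurable (Qb k) := by
  have : Measurable (Int.fract : ℝ → ℝ) := measurable_fract
  exact ((Polynomial.continuous (bpoly k)).measurable.comp this).div_const _


-- helpers still needed by interval_step / em_base with real defs
lemma bpoly_deriv' (k : ℕ) :
    (bpoly (k+1)).derivative = Polynomial.C ((k:ℝ)+1) * bpoly k := bpoly_deriv k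

lemma bpoly_one_eval_one : (bpoly 1).eval 1 = 1/2 := by
  unfold bpoly
  rw [Polynomial.eval_map]
  have : Polynomial.eval₂ (algebraMap ℚ ℝ) ((algebraMap ℚ ℝ) 1) (Polynomial.bernoulli 1)
      = (algebraMap ℚ ℝ) ((Polynomial.bernoulli 1).eval 1) := by
    rw [Polynomial.eval₂_at_apply]
  rw [map_one] at this
  rw [this, Polynomial.bernoulli_eval_one, bernoulli'_one]
  norm_num

lemma bern_one : bern 1 = -(1/2) := by
  unfold bern
  rw [bernoulli_one]
  norm_num

lemma iUnion_Ioc_nat : (⋃ j : ℕ, Ioc (j:ℝ) (j+1)) = Ioi 0 := by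
  ext x
  simp only [mem_iUnion, mem_Ioc, mem_Ioi]
  constructor
  · rintro ⟨j, hj1, _⟩
    have : (0:ℝ) ≤ (j:ℕ) := Nat.cast_nonneg j
    linarith
  · intro hx
    refine ⟨⌈x⌉₊ - 1, ?_, ?_⟩
    · have h1 : 1 ≤ ⌈x⌉₊ := Nat.one_le_ceil_iff.mpr hx
      have := Nat.ceil_lt_add_one hx.le
      rw [Nat.cast_sub h1]
      push_cast
      linarith
    · have h1 : 1 ≤ ⌈x⌉₊ := Nat.one_le_ceil_iff.mpr hx
      have := Nat.le_ceil x
      rw [Nat.cast_sub h1]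
      push_cast
      linarith

lemma pairwise_disjoint_Ioc_nat :
    Pairwise (Function.onFun Disjoint (fun j : ℕ => Ioc (j:ℝ) (j+1))) := by
  intro i j hij
  rcases Ne.lt_or_gt hij with h | h
  · refine Set.disjoint_left.mpr fun x hx hx' => ?_
    have h1 : x ≤ (i:ℝ) + 1 := hx.2
    have h2 : (j:ℝ) < x := hx'.1
    have : (i:ℝ) + 1 ≤ (j:ℝ) := by exact_mod_cast h
    linarith
  · refine Set.disjoint_left.mpr fun x hx hx' => ?_
    have h1 : x ≤ (j:ℝ) + 1 := hx'.2
    have h2 : (i:ℝ) < x := hx.1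
    have : (j:ℝ) + 1 ≤ (i:ℝ) := by exact_mod_cast h
    linarith

lemma hasSum_setIntegral {F : ℝ → ℝ} (hF : IntegrableOn F (Ioi 0)) :
    HasSum (fun j : ℕ => ∫ x in Ioc (j:ℝ) (j+1), F x) (∫ x in Ioi 0, F x) := by
  have h := MeasureTheory.hasSum_integral_iUnion (μ := volume)
    (s := fun j : ℕ => Ioc (j:ℝ) (j+1)) (f := F)
    (fun j => measurableSet_Ioc) pairwise_disjoint_Ioc_nat
    (by rw [iUnion_Ioc_nat]; exact hF)
  rwa [iUnion_Ioc_nat] at h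


/-- integration by parts on one unit interval -/
lemma interval_step (k : ℕ) (j : ℕ) (v w : ℝ → ℝ)
    (hv : ∀ x, HasDerivAt v (w x) x) (hw : Continuous w) :
    (∫ x in Ioc (j:ℝ) (j+1), (bpoly k).eval (x - j) / (k.factorial : ℝ) * v x)
      + (∫ x in Ioc (j:ℝ) (j+1), (bpoly (k+1)).eval (x - j) / ((k+1).factorial : ℝ) * w x)
    = (bpoly (k+1)).eval 1 / ((k+1).factorial : ℝ) * v (j+1)
      - (bpoly (k+1)).eval 0 / ((k+1).factorial : ℝ) * v j := by
  have hvc : Continuous v := by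
    have : Differentiable ℝ v := fun x => (hv x).differentiableAt
    exact this.continuous
  set G1 : ℝ → ℝ := fun x => (bpoly k).eval (x - j) / (k.factorial : ℝ) * v x with hG1
  set G2 : ℝ → ℝ := fun x => (bpoly (k+1)).eval (x - j) / ((k+1).factorial : ℝ) * w x with hG2
  have hF : ∀ x : ℝ, HasDerivAt (fun x : ℝ => (bpoly (k+1)).eval (x - (j:ℝ)) / ((k+1).factorial : ℝ) * v x)
      (G1 x + G2 x) x := by
    intro x
    have hshift : HasDerivAt (fun x : ℝ => x - (j:ℝ)) 1 x := (hasDerivAt_id x).sub_const _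
    have hp : HasDerivAt (fun x : ℝ => (bpoly (k+1)).eval (x - j))
        ((bpoly (k+1)).derivative.eval (x - j) * 1) x :=
      HasDerivAt.comp (h₂ := fun y => (bpoly (k+1)).eval y) x ((bpoly (k+1)).hasDerivAt (x - (j:ℝ))) hshift
    have hp' : HasDerivAt (fun x : ℝ => (bpoly (k+1)).eval (x - j) / ((k+1).factorial : ℝ))
        ((bpoly (k+1)).derivative.eval (x - j) * 1 / ((k+1).factorial : ℝ)) x := hp.div_const _
    have := hp'.mul (hv x)
    convert this using 1 <;> try rfl
    have hder : (bpoly (k+1)).derivative.eval (x - j) = ((k:ℝ)+1) * (bpoly k).eval (x - j) := by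
      rw [bpoly_deriv]; simp
    have hfac : ((k+1).factorial : ℝ) = ((k:ℝ)+1) * (k.factorial : ℝ) := by
      rw [Nat.factorial_succ]; push_cast; ring
    simp only [hG1, hG2, hder, hfac, mul_one]
    have hkpos : (k.factorial : ℝ) ≠ 0 := by positivity
    have hk1pos : ((k:ℝ)+1) ≠ 0 := by positivity
    field_simp
  have hcont : Continuous (fun x => G1 x + G2 x) := by
    apply Continuous.add
    · exact (((bpoly k).continuous.comp (continuous_id.sub continuous_const)).div_const _).mul hvc
    · exact (((bpoly (k+1)).continuous.comp (continuous_id.sub continuous_const)).div_const _).mul hw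
  have hle : (j:ℝ) ≤ (j:ℝ) + 1 := by linarith
  have hFTC := intervalIntegral.integral_eq_sub_of_hasDerivAt
    (f := fun x : ℝ => (bpoly (k+1)).eval (x - (j:ℝ)) / ((k+1).factorial : ℝ) * v x)
    (f' := fun x => G1 x + G2 x)
    (a := (j:ℝ)) (b := (j:ℝ)+1)
    (fun x _ => hF x) (hcont.intervalIntegrable _ _)
  rw [intervalIntegral.integral_of_le hle] at hFTC
  have hsplit : ∫ x in Ioc (j:ℝ) (j+1), (G1 x + G2 x)
      = (∫ x in Ioc (j:ℝ) (j+1), G1 x) + ∫ x in Ioc (j:ℝ) (j+1), G2 x := by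
    apply MeasureTheory.integral_add
    · exact (Continuous.integrableOn_Ioc (by
        exact (((bpoly k).continuous.comp (continuous_id.sub continuous_const)).div_const _).mul hvc))
    · exact (Continuous.integrableOn_Ioc (by
        exact (((bpoly (k+1)).continuous.comp (continuous_id.sub continuous_const)).div_const _).mul hw))
  rw [hsplit] at hFTC
  rw [hFTC]
  simp only [add_sub_cancel_left]
  norm_num


/-- replace `Int.fract` by `x - j` inside the integral over `Ioc j (j+1)` -/
lemma integral_Qb_congr (k : ℕ) (j : ℕ) (v : ℝ → ℝ) :
    (∫ x in Ioc (j:ℝ) (j+1), Qb k x * v x)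
      = ∫ x in Ioc (j:ℝ) (j+1), (bpoly k).eval (x - j) / (k.factorial : ℝ) * v x := by
  apply MeasureTheory.setIntegral_congr_ae measurableSet_Ioc
  have hae : ∀ᵐ x : ℝ, x ≠ (j:ℝ) + 1 := by
    rw [MeasureTheory.ae_iff]
    have : {x : ℝ | ¬ x ≠ (j:ℝ)+1} = {(j:ℝ)+1} := by ext y; simp
    rw [this]
    exact measure_singleton _
  filter_upwards [hae] with x hx hmem
  have hfract : Int.fract x = x - j := by
    have h1 : (j:ℝ) ≤ x := hmem.1.le
    have h2 : x < (j:ℝ) + 1 := lt_of_le_of_ne hmem.2 hx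
    rw [Int.fract_eq_iff]
    refine ⟨by linarith, by linarith, ⟨(j:ℤ), by push_cast; ring⟩⟩
  rw [Qb, hfract]


lemma integrableOn_Qb_mul {v : ℝ → ℝ} (k : ℕ) (hv : IntegrableOn v (Ioi 0)) :
    IntegrableOn (fun x => Qb k x * v x) (Ioi 0) := by
  apply MeasureTheory.Integrable.bdd_mul (c := QbBound k) hv ((measurable_Qb k).aestronglyMeasurable)
  exact Filter.Eventually.of_forall fun x => by
    simpa [Real.norm_eq_abs] using abs_Qb_le k x

lemma tendsto_nat_of_tendsto {v : ℝ → ℝ} (h : Tendsto v atTop (nhds 0)) :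
    Tendsto (fun n : ℕ => v n) atTop (nhds 0) :=
  h.comp tendsto_natCast_atTop_atTop

/-- Key integration-by-parts step for the Euler–Maclaurin remainder. -/
lemma step_global (k : ℕ) (v w : ℝ → ℝ)
    (hv : ∀ x, HasDerivAt v (w x) x) (hw : Continuous w)
    (hiv : IntegrableOn v (Ioi 0)) (hiw : IntegrableOn w (Ioi 0))
    (h0 : Tendsto v atTop (nhds 0)) :
    (∫ x in Ioi 0, Qb (k+1) x * v x) + (∫ x in Ioi 0, Qb (k+2) x * w x)
      = - (bern (k+2) / ((k+2).factorial : ℝ)) * v 0 := by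
  have hvd : Differentiable ℝ v := fun x => (hv x).differentiableAt
  have hvc : Continuous v := hvd.continuous
  have hA := hasSum_setIntegral (integrableOn_Qb_mul (k+1) hiv)
  have hB := hasSum_setIntegral (integrableOn_Qb_mul (k+2) hiw)
  have hper : ∀ j : ℕ,
      (∫ x in Ioc (j:ℝ) (j+1), Qb (k+1) x * v x) + (∫ x in Ioc (j:ℝ) (j+1), Qb (k+2) x * w x)
        = bern (k+2) / ((k+2).factorial : ℝ) * (v (j+1) - v j) := by
    intro j
    rw [integral_Qb_congr, integral_Qb_congr]
    have := interval_step (k+1) j v w hv hw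
    rw [bpoly_eval_one (k+2) (by omega), bpoly_eval_zero (k+2)] at this
    rw [this]; push_cast; ring
  have hAB := hA.add hB
  have hps := hAB.tendsto_sum_nat
  have hps2 : Tendsto
      (fun N : ℕ => ∑ j ∈ Finset.range N,
        ((∫ x in Ioc (j:ℝ) (j+1), Qb (k+1) x * v x) + ∫ x in Ioc (j:ℝ) (j+1), Qb (k+2) x * w x))
      atTop (nhds (- (bern (k+2) / ((k+2).factorial : ℝ)) * v 0)) := by
    have heq : ∀ N : ℕ, ∑ j ∈ Finset.range N,
        ((∫ x in Ioc (j:ℝ) (j+1), Qb (k+1) x * v x) + ∫ x in Ioc (j:ℝ) (j+1), Qb (k+2) x * w x)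
        = bern (k+2) / ((k+2).factorial : ℝ) * ((fun n : ℕ => v n) N - v 0) := by
      intro N
      rw [Finset.sum_congr rfl fun j _ => hper j, ← Finset.mul_sum]
      congr 1
      have := Finset.sum_range_sub (fun n : ℕ => v n) N
      push_cast at this ⊢
      rw [this]
    simp only [heq]
    have : Tendsto (fun N : ℕ => (fun n : ℕ => v n) N - v 0) atTop (nhds (0 - v 0)) :=
      (tendsto_nat_of_tendsto h0).sub_const _
    have h2 := this.const_mul (bern (k+2) / ((k+2).factorial : ℝ))
    convert h2 using 2
    ring
  exact tendsto_nhds_unique hps hps2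


lemma em_base (D0 D1 : ℝ → ℝ) (hv : ∀ x, HasDerivAt D0 (D1 x) x) (h1c : Continuous D1)
    (hi0 : IntegrableOn D0 (Ioi 0)) (hi1 : IntegrableOn D1 (Ioi 0))
    (h0 : Tendsto D0 atTop (nhds 0)) (hsum : Summable fun j : ℕ => D0 ((j:ℝ)+1)) :
    ∑' j : ℕ, D0 ((j:ℝ)+1) = (∫ x in Ioi 0, D0 x)
      + (bern 1 / ((1).factorial : ℝ)) * D0 0 + ∫ x in Ioi 0, Qb 1 x * D1 x := by
  have hA := hasSum_setIntegral hi0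
  have hB := hasSum_setIntegral (integrableOn_Qb_mul 1 hi1)
  have hT := hsum.hasSum
  have hper : ∀ j : ℕ,
      (∫ x in Ioc (j:ℝ) (j+1), D0 x) + (∫ x in Ioc (j:ℝ) (j+1), Qb 1 x * D1 x)
        = (1/2) * D0 ((j:ℝ)+1) + (1/2) * D0 j := by
    intro j
    have h1 : (∫ x in Ioc (j:ℝ) (j+1), D0 x)
        = ∫ x in Ioc (j:ℝ) (j+1), (bpoly 0).eval (x - j) / ((0).factorial : ℝ) * D0 x := by
      apply MeasureTheory.setIntegral_congr_fun measurableSet_Ioc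
      intro x _
      simp [bpoly_zero]
    rw [h1, integral_Qb_congr]
    have := interval_step 0 j D0 D1 hv h1c
    rw [bpoly_one_eval_one, bpoly_eval_zero 1, bern_one] at this
    rw [this]
    norm_num
  have hC := hT.sub (hA.add hB)
  have hps := hC.tendsto_sum_nat
  have hps2 : Tendsto (fun N : ℕ => ∑ j ∈ Finset.range N,
      (D0 ((j:ℝ)+1) - ((∫ x in Ioc (j:ℝ) (j+1), D0 x) + ∫ x in Ioc (j:ℝ) (j+1), Qb 1 x * D1 x)))
      atTop (nhds ((0 - D0 0)/2)) := by
    have heq : ∀ N : ℕ, ∑ j ∈ Finset.range N,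
        (D0 ((j:ℝ)+1) - ((∫ x in Ioc (j:ℝ) (j+1), D0 x) + ∫ x in Ioc (j:ℝ) (j+1), Qb 1 x * D1 x))
        = (D0 (N:ℝ) - D0 0)/2 := by
      intro N
      induction N with
      | zero => simp
      | succ N ihN =>
          rw [Finset.sum_range_succ, ihN, hper N]
          push_cast
          ring
    simp only [heq]
    exact ((tendsto_nat_of_tendsto h0).sub_const _).div_const _
  have := tendsto_nhds_unique hps hps2
  have hfin : ∑' j : ℕ, D0 ((j:ℝ)+1)
      = (∫ x in Ioi 0, D0 x) + (∫ x in Ioi 0, Qb 1 x * D1 x) + (0 - D0 0)/2 := by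
    have hTsum := hT.tsum_eq
    rw [← hTsum] at *
    linarith [this]
  rw [hfin, bern_one]
  norm_num
  ring

lemma em_main (m : ℕ) (D : ℕ → ℝ → ℝ)
    (hd : ∀ k, k ≤ m → ∀ x, HasDerivAt (D k) (D (k+1) x) x)
    (hc : Continuous (D (m+1)))
    (hint : ∀ k, k ≤ m + 1 → IntegrableOn (D k) (Ioi 0))
    (htend : ∀ k, k ≤ m → Tendsto (D k) atTop (nhds 0))
    (hsum : Summable (fun j : ℕ => D 0 ((j:ℝ)+1))) :
    ∑' j : ℕ, D 0 ((j:ℝ)+1) = (∫ x in Ioi 0, D 0 x)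
       + (∑ k ∈ Finset.range (m+1), (-1:ℝ)^k * (bern (k+1) / ((k+1).factorial : ℝ)) * D k 0)
       + (-1:ℝ)^m * ∫ x in Ioi 0, Qb (m+1) x * D (m+1) x := by
  induction m with
  | zero =>
      have := em_base (D 0) (D 1) (hd 0 le_rfl) hc (hint 0 (by omega)) (hint 1 (by omega))
        (htend 0 le_rfl) hsum
      rw [this]
      simp
  | succ m ih =>
      have hcm : Continuous (D (m+1)) := by
        have : Differentiable ℝ (D (m+1)) := fun x => (hd (m+1) (by omega) x).differentiableAt
        exact this.continuous
      have ihm := ih (fun k hk => hd k (by omega)) hcm (fun k hk => hint k (by omega))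
        (fun k hk => htend k (by omega))
      have hstep := step_global m (D (m+1)) (D (m+2)) (hd (m+1) le_rfl) hc
        (hint (m+1) (by omega)) (hint (m+2) (by omega)) (htend (m+1) le_rfl)
      have hE : (∫ x in Ioi 0, Qb (m+1) x * D (m+1) x)
          = - (bern (m+2) / ((m+2).factorial : ℝ)) * D (m+1) 0
            - ∫ x in Ioi 0, Qb (m+2) x * D (m+2) x := by linarith [hstep]
      rw [ihm, hE]
      conv_rhs => rw [Finset.sum_range_succ]
      simp only [show m+1+1 = m+2 from rfl]
      push_cast
      ring

lemma integrableOn_monomial_gauss {b : ℝ} (hb : 0 < b) (i : ℕ) :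
    IntegrableOn (fun x : ℝ => x ^ i * Real.exp (-b * x^2)) (Ioi 0) := by
  have := integrableOn_rpow_mul_exp_neg_mul_sq hb (s := (i:ℝ)) (by linarith [Nat.cast_nonneg (α:=ℝ) i])
  simpa [Real.rpow_natCast] using this

lemma integrableOn_poly_gauss (p : Polynomial ℝ) {b : ℝ} (hb : 0 < b) :
    IntegrableOn (fun x : ℝ => p.eval x * Real.exp (-b * x^2)) (Ioi 0) := by
  have heq : (fun x : ℝ => p.eval x * Real.exp (-b * x^2))
      = fun x : ℝ => ∑ i ∈ Finset.range (p.natDegree + 1),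
          p.coeff i * (x ^ i * Real.exp (-b * x^2)) := by
    funext x
    rw [Polynomial.eval_eq_sum_range _, Finset.sum_mul]
    congr 1
    funext i
    ring
  rw [heq]
  apply MeasureTheory.integrable_finset_sum
  intro i _
  exact (integrableOn_monomial_gauss hb i).const_mul _

lemma tendsto_monomial_gauss {b : ℝ} (hb : 0 < b) (i : ℕ) :
    Tendsto (fun x : ℝ => x ^ i * Real.exp (-b * x^2)) atTop (nhds 0) := by
  have hlo := rpow_mul_exp_neg_mul_sq_isLittleO_exp_neg hb (i:ℝ)
  have h2 : Tendsto (fun x : ℝ => Real.exp (-(1/2 : ℝ) * x)) atTop (nhds 0) := by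
    have : Tendsto (fun x : ℝ => -(1/2 : ℝ) * x) atTop atBot := by
      apply Tendsto.const_mul_atTop_of_neg (by norm_num : -(1/2 : ℝ) < 0) tendsto_id
    exact Real.tendsto_exp_atBot.comp this
  have := hlo.isBigO.trans_tendsto h2
  simpa [Real.rpow_natCast] using this

lemma tendsto_poly_gauss (p : Polynomial ℝ) {b : ℝ} (hb : 0 < b) :
    Tendsto (fun x : ℝ => p.eval x * Real.exp (-b * x^2)) atTop (nhds 0) := by
  have heq : (fun x : ℝ => p.eval x * Real.exp (-b * x^2))
      = fun x : ℝ => ∑ i ∈ Finset.range (p.natDegree + 1),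
          p.coeff i * (x ^ i * Real.exp (-b * x^2)) := by
    funext x
    rw [Polynomial.eval_eq_sum_range _, Finset.sum_mul]
    congr 1
    funext i
    ring
  rw [heq]
  have : Tendsto (fun x : ℝ => ∑ i ∈ Finset.range (p.natDegree + 1),
      p.coeff i * (x ^ i * Real.exp (-b * x^2))) atTop
      (nhds (∑ i ∈ Finset.range (p.natDegree + 1), p.coeff i * 0)) := by
    apply tendsto_finset_sum
    intro i _
    exact (tendsto_monomial_gauss hb i).const_mul _
  simpa using this


variable (ν : ℕ) (μ : ℝ)

/-- The polynomial family: `d^k/dy^k (y^ν e^{-μ y²}) = (P k).eval y * e^{-μ y²}`. -/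
def P : ℕ → Polynomial ℝ
  | 0 => Polynomial.X ^ ν
  | (k+1) => (P k).derivative - Polynomial.C (2*μ) * (Polynomial.X * P k)

def qf (k : ℕ) (y : ℝ) : ℝ := (P ν μ k).eval y * Real.exp (-μ * y^2)

lemma hasDerivAt_qf (k : ℕ) (y : ℝ) : HasDerivAt (qf ν μ k) (qf ν μ (k+1) y) y := by
  have h1 : HasDerivAt (fun y : ℝ => (P ν μ k).eval y) ((P ν μ k).derivative.eval y) y :=
    (P ν μ k).hasDerivAt y
  have hin : HasDerivAt (fun y : ℝ => -μ * y^2) (-μ * (2 * y^1)) y := by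
    have := (hasDerivAt_pow 2 y).const_mul (-μ)
    simpa using this
  have h2 : HasDerivAt (fun y : ℝ => Real.exp (-μ * y^2))
      (Real.exp (-μ * y^2) * (-μ * (2 * y^1))) y := (Real.hasDerivAt_exp _).comp y hin
  have := h1.mul h2
  convert this using 1 <;> try rfl
  show (P ν μ (k+1)).eval y * Real.exp (-μ * y^2) = _
  simp only [P, Polynomial.eval_sub, Polynomial.eval_mul, Polynomial.eval_C, Polynomial.eval_X]
  ring

lemma continuous_qf (k : ℕ) : Continuous (qf ν μ k) := by
  exact (P ν μ k).continuous.mul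
    (Real.continuous_exp.comp (continuous_const.mul (continuous_pow 2)))

/-- coefficient recursion -/
lemma P_coeff_zero_succ (k : ℕ) : (P ν μ (k+1)).coeff 0 = (P ν μ k).coeff 1 := by
  simp only [P, Polynomial.coeff_sub, Polynomial.coeff_derivative]
  have : (Polynomial.C (2*μ) * (Polynomial.X * P ν μ k)).coeff 0 = 0 := by
    rw [Polynomial.coeff_C_mul, Polynomial.mul_coeff_zero, Polynomial.coeff_X_zero]
    ring
  rw [this]
  norm_num

lemma P_coeff_succ_succ (k i : ℕ) :
    (P ν μ (k+1)).coeff (i+1)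
      = (P ν μ k).coeff (i+2) * ((i:ℝ)+2) - 2*μ * (P ν μ k).coeff i := by
  simp only [P, Polynomial.coeff_sub, Polynomial.coeff_derivative]
  rw [Polynomial.coeff_C_mul, Polynomial.coeff_X_mul]
  push_cast
  ring

/-- coefficients below ν-k vanish -/
lemma P_coeff_low (k i : ℕ) (h : i + k < ν) : (P ν μ k).coeff i = 0 := by
  induction k generalizing i with
  | zero =>
      simp only [P, Polynomial.coeff_X_pow]
      have : i ≠ ν := by omega
      simp [this]
  | succ k ih =>
      cases i with
      | zero =>
          rw [P_coeff_zero_succ]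
          exact ih 1 (by omega)
      | succ i =>
          rw [P_coeff_succ_succ]
          rw [ih (i+2) (by omega), ih i (by omega)]
          ring

/-- parity: coefficients with i+k ≢ ν (mod 2) vanish -/
lemma P_coeff_parity (k i : ℕ) (h : (i + k) % 2 ≠ ν % 2) : (P ν μ k).coeff i = 0 := by
  induction k generalizing i with
  | zero =>
      simp only [P, Polynomial.coeff_X_pow]
      have : i ≠ ν := by omega
      simp [this]
  | succ k ih =>
      cases i with
      | zero =>
          rw [P_coeff_zero_succ]
          exact ih 1 (by omega)
      | succ i =>
          rw [P_coeff_succ_succ]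
          rw [ih (i+2) (by omega), ih i (by omega)]
          ring

/-- the diagonal coefficient -/
lemma P_coeff_diag (k : ℕ) (h : k ≤ ν) :
    (P ν μ k).coeff (ν - k) = (ν.descFactorial k : ℝ) := by
  induction k with
  | zero => simp [P, Polynomial.coeff_X_pow]
  | succ k ih =>
      have hk : k ≤ ν := by omega
      rcases Nat.lt_or_ge (k+1) ν with hlt | hge
      · -- ν - (k+1) = (ν - k - 1), use succ-succ recursion with i+1 = ν-k-1
        obtain ⟨i, hi⟩ : ∃ i, ν - (k+1) = i + 1 := by
          refine ⟨ν - (k+2), by omega⟩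
        rw [hi, P_coeff_succ_succ]
        have hi2 : i + 2 = ν - k := by omega
        have hilow : i + k < ν := by omega
        rw [hi2, ih hk, P_coeff_low ν μ k i hilow]
        have : ν.descFactorial (k+1) = (ν - k) * ν.descFactorial k := Nat.descFactorial_succ ν k
        rw [this]
        push_cast
        have : ((i:ℝ) + 2) = ((ν - k : ℕ) : ℝ) := by
          rw [← hi2]; push_cast; ring
        rw [← this]
        ring
      · -- k+1 = ν, so ν - (k+1) = 0
        have hkν : k + 1 = ν := by omega
        have h0 : ν - (k+1) = 0 := by omega
        rw [h0, P_coeff_zero_succ]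
        have hνk : ν - k = 1 := by omega
        have hih := ih hk
        rw [hνk] at hih
        rw [hih, Nat.descFactorial_succ]
        push_cast [hνk]
        ring

lemma P_coeff_nu : (P ν μ ν).coeff 0 = (ν.factorial : ℝ) := by
  have := P_coeff_diag ν μ ν le_rfl
  simpa [Nat.descFactorial_self] using this

lemma P_coeff_nu_add_one : (P ν μ (ν+1)).coeff 0 = 0 :=
  P_coeff_parity ν μ (ν+1) 0 (by omega)

lemma qf_zero_eval (k : ℕ) : qf ν μ k 0 = (P ν μ k).coeff 0 := by
  simp [qf, Polynomial.coeff_zero_eq_eval_zero]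

lemma qf_zero_fun (y : ℝ) : qf ν μ 0 y = y ^ ν * Real.exp (-μ * y^2) := by
  simp [qf, P]


/-! ### The scaled family -/

variable {ν μ} (s : ℝ)

def Df (k : ℕ) (x : ℝ) : ℝ := s ^ ((ν:ℤ) - k) * qf ν μ k (x / s)

lemma hasDerivAt_Df (hs : 0 < s) (k : ℕ) (x : ℝ) :
    HasDerivAt (Df (ν := ν) (μ := μ) s k) (Df (ν := ν) (μ := μ) s (k+1) x) x := by
  have hdiv : HasDerivAt (fun x : ℝ => x / s) (1 / s) x := by
    simpa using (hasDerivAt_id x).div_const s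
  have hq := (hasDerivAt_qf ν μ k (x / s)).comp x hdiv
  have := hq.const_mul (s ^ ((ν:ℤ) - k))
  convert this using 1 <;> try rfl
  show s ^ ((ν:ℤ) - (k+1)) * qf ν μ (k+1) (x/s) = _
  have hzp : s ^ ((ν:ℤ) - (k+1)) = s ^ ((ν:ℤ) - k) * s⁻¹ := by
    rw [show (ν:ℤ) - (k+1) = ((ν:ℤ) - k) - 1 by push_cast; ring]
    exact zpow_sub_one₀ hs.ne' _
  rw [hzp]
  field_simp

/-- Df as polynomial times Gaussian. -/
lemma Df_eq_polyGauss (hs : 0 < s) (k : ℕ) :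
    Df (ν := ν) (μ := μ) s k = fun x : ℝ =>
      (Polynomial.C (s ^ ((ν:ℤ) - k)) *
        ((P ν μ k).comp (Polynomial.C s⁻¹ * Polynomial.X))).eval x
      * Real.exp (-(μ / s^2) * x^2) := by
  funext x
  simp only [Df, qf, Polynomial.eval_mul, Polynomial.eval_C, Polynomial.eval_comp,
    Polynomial.eval_X]
  have h1 : x / s = s⁻¹ * x := by field_simp
  have h2 : -μ * (x / s)^2 = -(μ / s^2) * x^2 := by
    field_simp
  rw [h2, h1]
  ring

lemma integrableOn_Df (hs : 0 < s) (hμ : 0 < μ) (k : ℕ) :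
    IntegrableOn (Df (ν := ν) (μ := μ) s k) (Ioi 0) := by
  rw [Df_eq_polyGauss s hs k]
  exact integrableOn_poly_gauss _ (by positivity)

lemma tendsto_Df (hs : 0 < s) (hμ : 0 < μ) (k : ℕ) :
    Tendsto (Df (ν := ν) (μ := μ) s k) atTop (nhds 0) := by
  rw [Df_eq_polyGauss s hs k]
  exact tendsto_poly_gauss _ (by positivity)

lemma Df_zero_val (k : ℕ) : Df (ν := ν) (μ := μ) s k 0 = s ^ ((ν:ℤ) - k) * (P ν μ k).coeff 0 := by
  simp [Df, qf_zero_eval]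

lemma Df_zero_fun (hs : 0 < s) (x : ℝ) :
    Df (ν := ν) (μ := μ) s 0 x = x ^ ν * Real.exp (-(μ / s^2) * x^2) := by
  simp only [Df, qf_zero_fun]
  have h1 : (x / s) ^ ν = x ^ ν / s ^ ν := div_pow x s ν
  have h2 : -μ * (x / s)^2 = -(μ / s^2) * x^2 := by field_simp
  rw [h1, h2]
  simp only [Nat.cast_zero, sub_zero, zpow_natCast]
  have hsν : (s:ℝ) ^ (ν : ℕ) ≠ 0 := pow_ne_zero _ hs.ne'
  field_simp

lemma summable_Df (hs : 0 < s) (hμ : 0 < μ) :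
    Summable (fun j : ℕ => Df (ν := ν) (μ := μ) s 0 ((j:ℝ)+1)) := by
  set c : ℝ := μ / s^2 with hc
  have hcpos : 0 < c := by positivity
  set r : ℝ := Real.exp (-c) with hr
  have hr1 : ‖r‖ < 1 := by
    rw [Real.norm_eq_abs, abs_of_pos (Real.exp_pos _)]
    exact Real.exp_lt_one_iff.mpr (by linarith)
  have hgeom : Summable (fun j : ℕ => ((j:ℝ)+1) ^ ν * r ^ (j+1)) := by
    have h := summable_pow_mul_geometric_of_norm_lt_one (k := ν) (r := r) hr1
    have h2 := (summable_nat_add_iff 1).2 h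
    refine h2.congr fun j => ?_
    push_cast
    ring
  refine Summable.of_nonneg_of_le (fun j => ?_) (fun j => ?_) hgeom
  · rw [Df_zero_fun s hs]
    positivity
  · rw [Df_zero_fun s hs]
    have hx1 : (1:ℝ) ≤ (j:ℝ)+1 := by
      have : (0:ℝ) ≤ (j:ℝ) := Nat.cast_nonneg j
      linarith
    have hexp : Real.exp (-c * ((j:ℝ)+1)^2) ≤ r ^ (j+1) := by
      have : r ^ (j+1) = Real.exp (((j:ℕ)+1 : ℕ) * (-c)) := by
        rw [hr, ← Real.exp_nat_mul]
      rw [this]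
      apply Real.exp_le_exp.mpr
      push_cast
      have hsq : ((j:ℝ)+1) ≤ ((j:ℝ)+1)^2 := by nlinarith
      nlinarith [mul_le_mul_of_nonneg_left hsq hcpos.le]
    calc ((j:ℝ)+1) ^ ν * Real.exp (-c * ((j:ℝ)+1)^2)
        ≤ ((j:ℝ)+1) ^ ν * r ^ (j+1) := by
          apply mul_le_mul_of_nonneg_left hexp (by positivity)

/-- main term integral -/
lemma integral_Df_zero (hs : 0 < s) (hμ : 0 < μ) :
    ∫ x in Ioi (0:ℝ), Df (ν := ν) (μ := μ) s 0 x
      = (μ / s^2) ^ (-(((ν:ℝ)+1)/2)) * (1/2) * Real.Gamma (((ν:ℝ)+1)/2) := by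
  have hb : (0:ℝ) < μ / s^2 := by positivity
  have h := integral_rpow_mul_exp_neg_mul_rpow (p := 2) (q := (ν:ℝ)) (b := μ / s^2)
    (by norm_num) (by linarith [Nat.cast_nonneg (α:=ℝ) ν]) hb
  have hcongr : ∫ x in Ioi (0:ℝ), Df (ν := ν) (μ := μ) s 0 x
      = ∫ x in Ioi (0:ℝ), x ^ ((ν:ℝ)) * Real.exp (-(μ/s^2) * x ^ (2:ℝ)) := by
    apply MeasureTheory.setIntegral_congr_fun measurableSet_Ioi
    intro x hx
    rw [Df_zero_fun s hs]
    simp only [show (2:ℝ) = ((2:ℕ):ℝ) by norm_num, Real.rpow_natCast]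
  rw [hcongr, h]
  rw [show -((ν:ℝ)+1)/2 = -(((ν:ℝ)+1)/2) by ring]

/-- remainder bound -/
lemma remainder_bound (hs : 0 < s) (hμ : 0 < μ) :
    |∫ x in Ioi (0:ℝ), Qb (ν+3) x * Df (ν := ν) (μ := μ) s (ν+3) x|
      ≤ QbBound (ν+3) * (s ^ ((ν:ℤ) - (ν+3)) * (s * ∫ y in Ioi (0:ℝ), |qf ν μ (ν+3) y|)) := by
  have hint := integrableOn_Df (ν := ν) (μ := μ) s hs hμ (ν+3)
  have hintQ := integrableOn_Qb_mul (ν+3) hint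
  have h1 : |∫ x in Ioi (0:ℝ), Qb (ν+3) x * Df (ν := ν) (μ := μ) s (ν+3) x|
      ≤ ∫ x in Ioi (0:ℝ), |Qb (ν+3) x * Df (ν := ν) (μ := μ) s (ν+3) x| := by
    have := MeasureTheory.norm_integral_le_integral_norm (μ := volume.restrict (Ioi 0))
        (fun x => Qb (ν+3) x * Df (ν := ν) (μ := μ) s (ν+3) x)
    simpa only [Real.norm_eq_abs] using this
  have h2 : ∫ x in Ioi (0:ℝ), |Qb (ν+3) x * Df (ν := ν) (μ := μ) s (ν+3) x|
      ≤ ∫ x in Ioi (0:ℝ), QbBound (ν+3) * |Df (ν := ν) (μ := μ) s (ν+3) x| := by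
    apply MeasureTheory.integral_mono_of_nonneg
    · filter_upwards with x using abs_nonneg _
    · exact (hint.abs.const_mul _)
    · filter_upwards with x
      rw [abs_mul]
      have h0 : (0:ℝ) ≤ QbBound (ν+3) := le_trans (abs_nonneg _) (abs_Qb_le (ν+3) 0)
      exact mul_le_mul_of_nonneg_right (abs_Qb_le _ _) (abs_nonneg _)
  have h3 : ∫ x in Ioi (0:ℝ), |Df (ν := ν) (μ := μ) s (ν+3) x|
      = s ^ ((ν:ℤ) - (ν+3)) * (s * ∫ y in Ioi (0:ℝ), |qf ν μ (ν+3) y|) := by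
    have hzp : (0:ℝ) < s ^ ((ν:ℤ) - (ν+3)) := zpow_pos hs _
    have habs : ∀ x : ℝ, |Df (ν := ν) (μ := μ) s (ν+3) x|
        = s ^ ((ν:ℤ) - (ν+3)) * |qf ν μ (ν+3) (x / s)| := by
      intro x
      have hcast : ((ν:ℤ) - ((ν+3:ℕ):ℤ)) = (ν:ℤ) - ((ν:ℤ)+3) := by push_cast; ring
      rw [Df, hcast, abs_mul, abs_of_pos (by exact_mod_cast hzp)]
    simp only [habs]
    rw [MeasureTheory.integral_const_mul]
    congr 1
    have hchg := MeasureTheory.integral_comp_mul_left_Ioi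
      (fun y => |qf ν μ (ν+3) y|) 0 (inv_pos.mpr hs)
    simp only [mul_zero, smul_eq_mul, inv_inv] at hchg
    have : ∀ x : ℝ, x / s = s⁻¹ * x := fun x => by field_simp
    simp only [this]
    rw [hchg]
  calc |∫ x in Ioi (0:ℝ), Qb (ν+3) x * Df (ν := ν) (μ := μ) s (ν+3) x|
      ≤ ∫ x in Ioi (0:ℝ), QbBound (ν+3) * |Df (ν := ν) (μ := μ) s (ν+3) x| := h1.trans h2
    _ = QbBound (ν+3) * ∫ x in Ioi (0:ℝ), |Df (ν := ν) (μ := μ) s (ν+3) x| := by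
        rw [MeasureTheory.integral_const_mul]
    _ = _ := by rw [h3]

/-! ### Final assembly -/

lemma key_estimate (ν : ℕ) (μ : ℝ) (hμ : 0 < μ) (n : ℕ) (hn : 1 ≤ n) :
    |(∑' h : ℕ+, ((h : ℕ) : ℝ)^ν * Real.exp (-μ * ((h : ℕ) : ℝ)^2 / (n : ℝ)))
        - ((1/2) * Real.Gamma (((ν : ℝ)+1)/2) * ((n : ℝ)/μ)^((((ν : ℝ))+1)/2)
            + (-1:ℝ)^ν * ((bernoulli (ν+1) : ℚ) : ℝ) / ((ν : ℝ)+1))|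
      ≤ (|bern (ν+3) / (((ν+3).factorial : ℕ) : ℝ) * (P ν μ (ν+2)).coeff 0|
          + QbBound (ν+3) * ∫ y in Ioi (0:ℝ), |qf ν μ (ν+3) y|) * (n:ℝ)⁻¹ := by
  have hnR : (0:ℝ) < (n:ℝ) := by exact_mod_cast hn
  set s : ℝ := Real.sqrt n with hsdef
  have hs : 0 < s := Real.sqrt_pos.mpr hnR
  have hs2 : s ^ 2 = (n:ℝ) := Real.sq_sqrt hnR.le
  -- rewrite the tsum over ℕ+ as a tsum over ℕ of Df
  have htsum : (∑' h : ℕ+, ((h : ℕ) : ℝ)^ν * Real.exp (-μ * ((h : ℕ) : ℝ)^2 / (n : ℝ)))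
      = ∑' j : ℕ, Df (ν := ν) (μ := μ) s 0 ((j:ℝ)+1) := by
    rw [← Equiv.tsum_eq (Equiv.pnatEquivNat.symm)
      (fun h : ℕ+ => ((h : ℕ) : ℝ)^ν * Real.exp (-μ * ((h : ℕ) : ℝ)^2 / (n : ℝ)))]
    congr 1
    funext j
    have hj : ((Equiv.pnatEquivNat.symm j : ℕ+) : ℕ) = j + 1 := by
      simp [Equiv.pnatEquivNat]
    simp only [hj]
    rw [Df_zero_fun s hs]
    have harg : -μ * (((j:ℕ)+1 : ℕ) : ℝ)^2 / (n:ℝ) = -(μ / s^2) * (((j:ℝ))+1)^2 := by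
      rw [hs2]
      push_cast
      ring
    rw [harg]
    push_cast
    ring
  -- Euler–Maclaurin
  have hem := em_main (ν+2) (Df (ν := ν) (μ := μ) s)
    (fun k _ x => hasDerivAt_Df s hs k x)
    (by
      have : Differentiable ℝ (Df (ν := ν) (μ := μ) s (ν+3)) :=
        fun x => (hasDerivAt_Df s hs (ν+3) x).differentiableAt
      exact this.continuous)
    (fun k _ => integrableOn_Df (ν := ν) (μ := μ) s hs hμ k)
    (fun k _ => tendsto_Df (ν := ν) (μ := μ) s hs hμ k)
    (summable_Df s hs hμ)
  -- main term
  have hA : ∫ x in Ioi (0:ℝ), Df (ν := ν) (μ := μ) s 0 x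
      = (1/2) * Real.Gamma (((ν:ℝ)+1)/2) * ((n:ℝ)/μ)^((((ν:ℝ))+1)/2) := by
    rw [integral_Df_zero s hs hμ, hs2]
    have h1 : (μ/(n:ℝ)) ^ (-(((ν:ℝ)+1)/2)) = ((n:ℝ)/μ) ^ ((((ν:ℝ))+1)/2) := by
      rw [Real.rpow_neg (by positivity), ← Real.inv_rpow (by positivity), inv_div]
    rw [h1]
    ring
  -- the Bernoulli sum
  have hzero : ∀ k ∈ Finset.range ν,
      (-1:ℝ)^k * (bern (k+1) / (((k+1).factorial : ℕ) : ℝ)) * Df (ν := ν) (μ := μ) s k 0 = 0 := by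
    intro k hk
    rw [Df_zero_val, P_coeff_low ν μ k 0 (by simpa using Finset.mem_range.mp hk)]
    ring
  have hiν : Df (ν := ν) (μ := μ) s ν 0 = (ν.factorial : ℝ) := by
    rw [Df_zero_val, P_coeff_nu]
    have : (ν:ℤ) - (ν:ℤ) = 0 := by ring
    rw [this, zpow_zero, one_mul]
  have hiν1 : Df (ν := ν) (μ := μ) s (ν+1) 0 = 0 := by
    rw [Df_zero_val, P_coeff_nu_add_one]
    ring
  have hiν2 : Df (ν := ν) (μ := μ) s (ν+2) 0 = (n:ℝ)⁻¹ * (P ν μ (ν+2)).coeff 0 := by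
    rw [Df_zero_val]
    congr 1
    have h1 : (ν:ℤ) - ((ν+2:ℕ):ℤ) = -((2:ℕ):ℤ) := by push_cast; ring
    rw [h1, zpow_neg, zpow_natCast, hs2]
  have hS : (∑ k ∈ Finset.range (ν+3),
        (-1:ℝ)^k * (bern (k+1) / (((k+1).factorial : ℕ) : ℝ)) * Df (ν := ν) (μ := μ) s k 0)
      = (-1:ℝ)^ν * ((bernoulli (ν+1) : ℚ) : ℝ) / ((ν : ℝ)+1)
        + ((-1:ℝ)^ν * (bern (ν+3) / (((ν+3).factorial : ℕ) : ℝ)) * (P ν μ (ν+2)).coeff 0)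
            * (n:ℝ)⁻¹ := by
    rw [show ν+3 = (ν+2)+1 from rfl, Finset.sum_range_succ,
        show ν+2 = (ν+1)+1 from rfl, Finset.sum_range_succ, Finset.sum_range_succ,
        Finset.sum_eq_zero hzero, hiν, hiν1, hiν2]
    have hfac : (((ν+1).factorial : ℕ) : ℝ) = ((ν:ℝ)+1) * ((ν.factorial : ℕ) : ℝ) := by
      rw [Nat.factorial_succ]
      push_cast
      ring
    have hν1 : ((ν:ℝ)+1) ≠ 0 := by positivity
    have hνf : ((ν.factorial : ℕ) : ℝ) ≠ 0 := by positivity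
    have hterm : (-1:ℝ)^ν * (bern (ν+1) / (((ν+1).factorial : ℕ) : ℝ)) * (ν.factorial : ℝ)
        = (-1:ℝ)^ν * ((bernoulli (ν+1) : ℚ) : ℝ) / ((ν : ℝ)+1) := by
      rw [hfac]
      rw [show bern (ν+1) = ((bernoulli (ν+1) : ℚ) : ℝ) from rfl]
      field_simp
    rw [show (ν+1)+1+1 = ν+3 from rfl, show (ν+1)+1 = ν+2 from rfl]
    rw [hterm]
    ring
  -- remainder
  set E : ℝ := ∫ x in Ioi (0:ℝ), Qb (ν+3) x * Df (ν := ν) (μ := μ) s (ν+3) x with hEdef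
  have hJ0 : 0 ≤ ∫ y in Ioi (0:ℝ), |qf ν μ (ν+3) y| :=
    MeasureTheory.integral_nonneg fun y => abs_nonneg _
  have hQb0 : 0 ≤ QbBound (ν+3) := le_trans (abs_nonneg _) (abs_Qb_le (ν+3) 0)
  have hEbound : |E| ≤ (QbBound (ν+3) * ∫ y in Ioi (0:ℝ), |qf ν μ (ν+3) y|) * (n:ℝ)⁻¹ := by
    have h := remainder_bound (ν := ν) (μ := μ) s hs hμ
    have hzp : s ^ ((ν:ℤ) - ((ν:ℤ)+3)) * s = (n:ℝ)⁻¹ := by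
      rw [show (ν:ℤ) - ((ν:ℤ)+3) = -((3:ℕ):ℤ) by push_cast; ring, zpow_neg, zpow_natCast,
        ← hs2]
      field_simp
    have hexp : ((ν:ℤ) - ((ν+3:ℕ):ℤ)) = (ν:ℤ) - ((ν:ℤ)+3) := by push_cast; ring
    calc |E| ≤ QbBound (ν+3) * (s ^ ((ν:ℤ) - ((ν+3:ℕ):ℤ))
          * (s * ∫ y in Ioi (0:ℝ), |qf ν μ (ν+3) y|)) := by exact_mod_cast h
      _ = (QbBound (ν+3) * ∫ y in Ioi (0:ℝ), |qf ν μ (ν+3) y|)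
            * (s ^ ((ν:ℤ) - ((ν:ℤ)+3)) * s) := by rw [hexp]; ring
      _ = (QbBound (ν+3) * ∫ y in Ioi (0:ℝ), |qf ν μ (ν+3) y|) * (n:ℝ)⁻¹ := by rw [hzp]
  -- put everything together
  rw [htsum, hem, hS, hA, show (ν+2)+1 = ν+3 from rfl]
  have hfinal : (1/2) * Real.Gamma (((ν:ℝ)+1)/2) * ((n:ℝ)/μ)^((((ν:ℝ))+1)/2)
      + ((-1:ℝ)^ν * ((bernoulli (ν+1) : ℚ) : ℝ) / ((ν : ℝ)+1)
        + ((-1:ℝ)^ν * (bern (ν+3) / (((ν+3).factorial : ℕ) : ℝ)) * (P ν μ (ν+2)).coeff 0)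
            * (n:ℝ)⁻¹)
      + (-1:ℝ)^(ν+2) * E
      - ((1/2) * Real.Gamma (((ν:ℝ)+1)/2) * ((n:ℝ)/μ)^((((ν:ℝ))+1)/2)
          + (-1:ℝ)^ν * ((bernoulli (ν+1) : ℚ) : ℝ) / ((ν : ℝ)+1))
      = ((-1:ℝ)^ν * (bern (ν+3) / (((ν+3).factorial : ℕ) : ℝ)) * (P ν μ (ν+2)).coeff 0)
            * (n:ℝ)⁻¹ + (-1:ℝ)^(ν+2) * E := by ring
  rw [hfinal]
  have habs1 : |((-1:ℝ)^ν * (bern (ν+3) / (((ν+3).factorial : ℕ) : ℝ)) * (P ν μ (ν+2)).coeff 0)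
      * (n:ℝ)⁻¹| = |bern (ν+3) / (((ν+3).factorial : ℕ) : ℝ) * (P ν μ (ν+2)).coeff 0|
        * (n:ℝ)⁻¹ := by
    rw [abs_mul, abs_mul, abs_mul]
    rw [abs_of_nonneg (by positivity : (0:ℝ) ≤ (n:ℝ)⁻¹)]
    simp [abs_mul]
  have habs2 : |(-1:ℝ)^(ν+2) * E| = |E| := by
    rw [abs_mul]
    simp
  calc |((-1:ℝ)^ν * (bern (ν+3) / (((ν+3).factorial : ℕ) : ℝ)) * (P ν μ (ν+2)).coeff 0)
      * (n:ℝ)⁻¹ + (-1:ℝ)^(ν+2) * E|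
      ≤ |((-1:ℝ)^ν * (bern (ν+3) / (((ν+3).factorial : ℕ) : ℝ)) * (P ν μ (ν+2)).coeff 0)
        * (n:ℝ)⁻¹| + |(-1:ℝ)^(ν+2) * E| := abs_add_le _ _
    _ = |bern (ν+3) / (((ν+3).factorial : ℕ) : ℝ) * (P ν μ (ν+2)).coeff 0| * (n:ℝ)⁻¹
        + |E| := by rw [habs1, habs2]
    _ ≤ |bern (ν+3) / (((ν+3).factorial : ℕ) : ℝ) * (P ν μ (ν+2)).coeff 0| * (n:ℝ)⁻¹
        + (QbBound (ν+3) * ∫ y in Ioi (0:ℝ), |qf ν μ (ν+3) y|) * (n:ℝ)⁻¹ := by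
          linarith [hEbound]
    _ = _ := by ring

end

end Stmt7Aux

open Stmt7Aux in
/-- `Σ_{h≥1} h^ν e^{-μh²/n} = (1/2)Γ((ν+1)/2)(n/μ)^{(ν+1)/2} + (-1)^ν B_{ν+1}/(ν+1) + O(1/n)`
as `n → ∞`, where `B` are the Bernoulli numbers (with `B₁ = -1/2`). -/
theorem stmt7 (ν : ℕ) (μ : ℝ) (hμ : 0 < μ) :
    (fun n : ℕ =>
        (∑' h : ℕ+, ((h : ℕ) : ℝ)^ν * Real.exp (-μ * ((h : ℕ) : ℝ)^2 / (n : ℝ)))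
          - ((1/2) * Real.Gamma (((ν : ℝ)+1)/2) * ((n : ℝ)/μ)^((((ν : ℝ))+1)/2)
              + (-1:ℝ)^ν * ((bernoulli (ν+1) : ℚ) : ℝ) / ((ν : ℝ)+1)))
      =O[atTop] (fun n : ℕ => (n : ℝ)⁻¹) := by
  rw [Asymptotics.isBigO_iff]
  refine ⟨|bern (ν+3) / (((ν+3).factorial : ℕ) : ℝ) * (P ν μ (ν+2)).coeff 0|
      + QbBound (ν+3) * ∫ y in Set.Ioi (0:ℝ), |qf ν μ (ν+3) y|, ?_⟩
  filter_upwards [Filter.eventually_ge_atTop 1] with n hn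
  have h := key_estimate ν μ hμ n hn
  have hnn : (0:ℝ) ≤ (n:ℝ)⁻¹ := by positivity
  rw [Real.norm_eq_abs, Real.norm_eq_abs, abs_of_nonneg hnn]
  exact h
end
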